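/- arXiv:2009.10349 — 6 statements merged into one kernel-verified Lean document; each statement's English description precedes it below -/
import Mathlib

section
/- Let G be a finite connected simple graph with positive edge weights whose vertex set is partitioned into two sets V1 and V2, and suppose the weighted adjacency matrix A12 of the connections between V1 and V2 (the |V1| × |V2| matrix whose (u,v) entry is the weight of the edge between u ∈ V1 and v ∈ V2, and 0 if there is no such edge) has rank 1. Let k = {r,s} be an edge with both endpoints in V1 such that G − k is connected, and let P be a balanced injection vector (entries summing to 0). If F denotes the edge flows in G with injection P and F' denotes the edge flows in G − k with the same injection P, then F'_{mn} = F_{mn} for every edge {m,n} with both endpoints in V2. -/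
open scoped Classical

/-- The weighted Laplacian `L = B W Bᵀ` of `G`, written out entrywise. -/
noncomputable def wLap {V : Type*} [Fintype V] [DecidableEq V]
    (G : SimpleGraph V) (w : Sym2 V → ℝ) : Matrix V V ℝ :=
  Matrix.of fun u v =>
    if u = v then ∑ x ∈ Finset.univ.filter (fun x => G.Adj u x), w s(u, x)
    else if G.Adj u v then -w s(u, v) else 0


lemma rank_one_factor {V : Type*} [Fintype V] [DecidableEq V] (G : SimpleGraph V)
    (w : Sym2 V → ℝ) (hw : ∀ e ∈ G.edgeSet, 0 < w e) (S : Set V)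
    (hrank : Matrix.rank (Matrix.of fun (u : {x : V // x ∈ S}) (v : {x : V // x ∉ S}) =>
        if G.Adj u.val v.val then w s(u.val, v.val) else 0) = 1) :
    ∃ a b : V → ℝ, (∀ v, 0 ≤ a v) ∧ (∀ v, 0 ≤ b v) ∧ (∃ u0, 0 < a u0) ∧
      (∀ u v, u ∈ S → v ∉ S → (if G.Adj u v then w s(u, v) else 0) = a u * b v) ∧
      (∀ u, u ∉ S → a u = 0) := by
  set A : Matrix {x : V // x ∈ S} {x : V // x ∉ S} ℝ :=
    Matrix.of fun u v => if G.Adj u.val v.val then w s(u.val, v.val) else 0 with hA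
  have hAnn : ∀ u v, 0 ≤ A u v := by
    intro u v
    simp only [hA, Matrix.of_apply]
    split
    · exact le_of_lt (hw _ (G.mem_edgeSet.mpr ‹_›))
    · exact le_refl 0
  have hrank' := hrank
  rw [Matrix.rank] at hrank
  obtain ⟨g, hg0, hgen⟩ := finrank_eq_one_iff'.mp hrank
  -- every column of A is a multiple of g
  have hcol : ∀ v : {x : V // x ∉ S}, ∃ c : ℝ, ∀ u, A u v = c * g.val u := by
    intro v
    have hmem : (fun u => A u v) ∈ LinearMap.range A.mulVecLin := by
      refine ⟨Pi.single v 1, ?_⟩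
      ext u
      simp [Matrix.mulVecLin_apply]
    obtain ⟨c, hc⟩ := hgen ⟨_, hmem⟩
    refine ⟨c, fun u => ?_⟩
    have := congrArg Subtype.val hc
    have := congrFun this u
    simpa [mul_comm] using this.symm
  choose c hc using hcol
  -- some entry is nonzero
  have hne : ∃ u0 v0, A u0 v0 ≠ 0 := by
    by_contra h
    push_neg at h
    have : A = 0 := by ext u v; exact h u v
    rw [this, Matrix.rank_zero] at hrank'
    exact one_ne_zero hrank'.symm
  obtain ⟨u0, v0, hne⟩ := hne
  have hpos : 0 < A u0 v0 := lt_of_le_of_ne (hAnn u0 v0) (Ne.symm hne)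
  set ε : ℝ := if 0 < g.val u0 then 1 else -1 with hε
  have hgu0 : g.val u0 ≠ 0 := by
    intro h
    rw [hc v0 u0, h, mul_zero] at hne
    exact hne rfl
  have hεa : 0 < ε * g.val u0 := by
    rcases lt_trichotomy (g.val u0) 0 with h | h | h
    · have : ε = -1 := by rw [hε, if_neg (not_lt.2 h.le)]
      rw [this]; nlinarith
    · exact absurd h hgu0
    · have : ε = 1 := by rw [hε, if_pos h]
      rw [this]; nlinarith
  have hε1 : ε = 1 ∨ ε = -1 := by rw [hε]; split <;> simp
  have hfac : ∀ u v, A u v = (ε * g.val u) * (ε * c v) := by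
    intro u v
    rcases hε1 with h | h <;> rw [hc v u, h] <;> ring
  have hbnn : ∀ v, 0 ≤ ε * c v := by
    intro v
    have h := hAnn u0 v
    rw [hfac u0 v] at h
    nlinarith
  have hbv0 : 0 < ε * c v0 := by
    have := hpos
    rw [hfac u0 v0] at this
    nlinarith
  have hann : ∀ u, 0 ≤ ε * g.val u := by
    intro u
    have h := hAnn u v0
    rw [hfac u v0] at h
    nlinarith
  refine ⟨fun u => if h : u ∈ S then ε * g.val ⟨u, h⟩ else 0,
          fun v => if h : v ∉ S then ε * c ⟨v, h⟩ else 0, ?_, ?_, ?_, ?_, ?_⟩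
  · intro u; by_cases h : u ∈ S <;> simp [h, hann]
  · intro v; by_cases h : v ∉ S <;> simp [h, hbnn]
  · exact ⟨u0.val, by simpa [u0.2] using hεa⟩
  · intro u v hu hv
    have := hfac ⟨u, hu⟩ ⟨v, hv⟩
    simpa [hu, hv, hA] using this
  · intro u hu; simp [hu]

/-- A weighted Laplacian row applied to a vector, in "flow" form. -/
lemma wLap_row_flow {V : Type*} [Fintype V] [DecidableEq V]
    (H : SimpleGraph V) (w : Sym2 V → ℝ) (D : V → ℝ) (v : V) :
    ∑ u, wLap H w v u * D u
      = ∑ u, (if H.Adj v u then w s(v, u) else 0) * (D v - D u) := by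
  have hpt : ∀ u, wLap H w v u
      = (if u = v then ∑ x ∈ Finset.univ.filter (fun x => H.Adj v x), w s(v, x) else 0)
        + (if H.Adj v u then -w s(v, u) else 0) := by
    intro u
    by_cases h : u = v
    · subst h
      simp [wLap, H.irrefl]
    · simp [wLap, Ne.symm h, h]
  calc ∑ u, wLap H w v u * D u
      = ∑ u, ((if u = v then ∑ x ∈ Finset.univ.filter (fun x => H.Adj v x), w s(v, x) else 0) * D u
          + (if H.Adj v u then -w s(v, u) else 0) * D u) := by
        refine Finset.sum_congr rfl fun u _ => ?_
        rw [hpt u, add_mul]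
    _ = (∑ x ∈ Finset.univ.filter (fun x => H.Adj v x), w s(v, x)) * D v
          + ∑ u, (if H.Adj v u then -w s(v, u) else 0) * D u := by
        rw [Finset.sum_add_distrib]
        congr 1
        calc ∑ u, (if u = v then ∑ x ∈ Finset.univ.filter (fun x => H.Adj v x), w s(v, x) else 0) * D u
            = ∑ u, (if u = v then (∑ x ∈ Finset.univ.filter (fun x => H.Adj v x), w s(v, x)) * D u else 0) :=
              Finset.sum_congr rfl fun u _ => by split <;> simp
          _ = (∑ x ∈ Finset.univ.filter (fun x => H.Adj v x), w s(v, x)) * D v := by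
              simp [Finset.sum_ite_eq']
    _ = (∑ u, (if H.Adj v u then w s(v, u) else 0)) * D v
          - ∑ u, (if H.Adj v u then w s(v, u) else 0) * D u := by
        rw [Finset.sum_filter]
        congr 1
        · rw [← Finset.sum_neg_distrib]
          refine Finset.sum_congr rfl fun u _ => ?_
          split <;> ring
    _ = ∑ u, (if H.Adj v u then w s(v, u) else 0) * (D v - D u) := by
        rw [Finset.sum_mul, ← Finset.sum_sub_distrib]
        refine Finset.sum_congr rfl fun u _ => ?_
        ring
/-- **Network isolators suppress failure spreading.**  Let `G` be a finite
connected simple graph with positive edge weights whose vertex set is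
partitioned into `V1 = S` and `V2 = Sᶜ`, and suppose the weighted adjacency
matrix `A12` of the connections between `V1` and `V2` has rank `1` (a
*network isolator*).  Let `k = {r,s}` be an edge with both endpoints in `V1`
such that `G - k` is connected, and let `P` be a balanced injection vector.
If `F` are the flows in `G` with injection `P` (potential `Vp`) and `F'` the
flows in `G - k` with the same injection (potential `Vp'`), then
`F'_{mn} = F_{mn}` for every edge `{m,n}` with both endpoints in `V2`. -/
theorem network_isolator_no_flow_change
    {V : Type*} [Fintype V] [DecidableEq V] (G : SimpleGraph V)
    (w : Sym2 V → ℝ) (hw : ∀ e ∈ G.edgeSet, 0 < w e)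
    (hG : G.Connected) (S : Set V)
    (hrank : Matrix.rank (Matrix.of fun (u : {x : V // x ∈ S}) (v : {x : V // x ∉ S}) =>
        if G.Adj u.val v.val then w s(u.val, v.val) else 0) = 1)
    (r s : V) (hr : r ∈ S) (hs : s ∈ S) (hrs : G.Adj r s)
    (hGk : (G.deleteEdges {s(r, s)}).Connected)
    (P : V → ℝ) (hP : ∑ u, P u = 0)
    (Vp : V → ℝ) (hVp : Matrix.mulVec (wLap G w) Vp = P)
    (Vp' : V → ℝ) (hVp' : Matrix.mulVec (wLap (G.deleteEdges {s(r, s)}) w) Vp' = P) :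
    ∀ m n : V, m ∉ S → n ∉ S → G.Adj m n →
      w s(m, n) * (Vp' m - Vp' n) = w s(m, n) * (Vp m - Vp n) := by
  intro m n hm hn hmn
  obtain ⟨a, b, ha0, hb0, ⟨u0, hu0⟩, hfac, hasupp⟩ := rank_one_factor G w hw S hrank
  set H : SimpleGraph V := G.deleteEdges {s(r, s)} with hH
  set D : V → ℝ := fun v => Vp' v - Vp v with hD
  -- adjacency in H and G agree on rows outside S
  have hHG : ∀ v : V, v ∉ S → ∀ u, H.Adj v u ↔ G.Adj v u := by
    intro v hv u
    rw [hH, SimpleGraph.deleteEdges_adj]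
    constructor
    · exact fun h => h.1
    · intro h
      refine ⟨h, ?_⟩
      intro hmem
      rw [Set.mem_singleton_iff, Sym2.eq_iff] at hmem
      rcases hmem with ⟨h1, _⟩ | ⟨h1, _⟩ <;> subst h1 <;> [exact hv hr; exact hv hs]
  have hwH : ∀ v u, H.Adj v u → 0 < w s(v, u) := by
    intro v u h
    rw [hH, SimpleGraph.deleteEdges_adj] at h
    exact hw _ (G.mem_edgeSet.mpr h.1)
  -- rows of the two Laplacians outside S agree
  have hrowL : ∀ v : V, v ∉ S → ∀ u, wLap H w v u = wLap G w v u := by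
    intro v hv u
    have hfun : (fun x => H.Adj v x) = fun x => G.Adj v x :=
      funext fun x => propext (hHG v hv x)
    simp only [wLap, Matrix.of_apply, hfun, hHG v hv u]
  -- the Laplacian of H applied to D vanishes outside S
  have hmulH : ∀ v : V, v ∉ S → ∑ u, wLap H w v u * D u = 0 := by
    intro v hv
    have h1 : ∑ u, wLap H w v u * Vp' u = P v := by
      have := congrFun hVp' v
      simpa [Matrix.mulVec, dotProduct] using this
    have h2 : ∑ u, wLap H w v u * Vp u = P v := by
      have := congrFun hVp v
      simp only [Matrix.mulVec, dotProduct] at this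
      rw [← this]
      exact Finset.sum_congr rfl fun u _ => by rw [hrowL v hv u]
    calc ∑ u, wLap H w v u * D u
        = ∑ u, (wLap H w v u * Vp' u - wLap H w v u * Vp u) := by
          refine Finset.sum_congr rfl fun u _ => ?_
          simp only [hD]; ring
      _ = 0 := by rw [Finset.sum_sub_distrib, h1, h2, sub_self]
  -- set up the quadratic-form argument
  set α : ℝ := ∑ u, a u with hα
  have hαpos : 0 < α := Finset.sum_pos' (fun i _ => ha0 i) ⟨u0, Finset.mem_univ u0, hu0⟩
  set β : ℝ := ∑ u, a u * D u with hβ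
  set x : V → ℝ := fun v => if v ∈ S then 0 else D v - β / α with hx
  set W2 : V → V → ℝ := fun v u => if v ∉ S ∧ u ∉ S ∧ H.Adj v u then w s(v, u) else 0 with hW2
  have hW2nn : ∀ v u, 0 ≤ W2 v u := by
    intro v u
    rw [hW2]
    dsimp only
    split
    · exact le_of_lt (hwH v u (by tauto))
    · exact le_refl 0
  have hW2symm : ∀ v u, W2 v u = W2 u v := by
    intro v u
    rw [hW2]
    dsimp only
    by_cases h : v ∉ S ∧ u ∉ S ∧ H.Adj v u
    · rw [if_pos h, if_pos ⟨h.2.1, h.1, h.2.2.symm⟩, Sym2.eq_swap]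
    · rw [if_neg h, if_neg (fun h' => h ⟨h'.2.1, h'.1, h'.2.2.symm⟩)]
  -- cross weights factor
  have hcross : ∀ v, v ∉ S → ∀ u, u ∈ S →
      (if H.Adj v u then w s(v, u) else 0) = a u * b v := by
    intro v hv u hu
    rw [show s(v, u) = s(u, v) from Sym2.eq_swap]
    rw [← hfac u v hu hv]
    exact if_congr ((hHG v hv u).trans (G.adj_comm v u)) rfl rfl
  -- the row identity outside S
  have hrow2 : ∀ v, v ∉ S → ∑ u, W2 v u * (x v - x u) + α * b v * x v = 0 := by
    intro v hv
    have h0 : ∑ u, (if H.Adj v u then w s(v, u) else 0) * (D v - D u) = 0 := by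
      convert (wLap_row_flow H w D v).symm.trans (hmulH v hv)
    have hsplit : ∀ u, (if H.Adj v u then w s(v, u) else 0) * (D v - D u)
        = W2 v u * (x v - x u) + (if u ∈ S then a u * b v * (D v - D u) else 0) := by
      intro u
      by_cases hu : u ∈ S
      · rw [if_pos hu, hcross v hv u hu, hW2]
        dsimp only
        rw [if_neg (fun h => h.2.1 hu)]
        ring
      · rw [if_neg hu, hW2, hx]
        dsimp only
        by_cases hadj : H.Adj v u
        · rw [if_pos hadj, if_pos ⟨hv, hu, hadj⟩, if_neg hv, if_neg hu]
          ring
        · rw [if_neg hadj, if_neg (fun h => hadj h.2.2)]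
          ring
    rw [Finset.sum_congr rfl (fun u _ => hsplit u), Finset.sum_add_distrib] at h0
    have hS : ∑ u, (if u ∈ S then a u * b v * (D v - D u) else 0) = α * b v * x v := by
      have : ∀ u, (if u ∈ S then a u * b v * (D v - D u) else 0)
          = a u * b v * (D v - D u) := by
        intro u
        by_cases hu : u ∈ S
        · rw [if_pos hu]
        · rw [if_neg hu, hasupp u hu]; ring
      rw [Finset.sum_congr rfl (fun u _ => this u)]
      have hexp : ∑ u, a u * b v * (D v - D u) = b v * (α * D v - β) := by
        have h2 : b v * (α * D v - β) = ∑ u, (b v * (a u * D v) - b v * (a u * D u)) := by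
          rw [Finset.sum_sub_distrib, ← Finset.mul_sum, ← Finset.mul_sum, ← Finset.sum_mul,
            hα, hβ]
          ring
        rw [h2]
        exact Finset.sum_congr rfl fun u _ => by ring
      rw [hexp, hx]
      dsimp only
      rw [if_neg hv]
      field_simp
    rw [hS] at h0
    exact h0
  -- sum the rows against x
  have hsum : ∑ v, (x v * ∑ u, W2 v u * (x v - x u) + α * b v * x v ^ 2) = 0 := by
    refine Finset.sum_eq_zero fun v _ => ?_
    by_cases hv : v ∈ S
    · have : x v = 0 := by rw [hx]; dsimp only; rw [if_pos hv]
      rw [this]; ring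
    · have h := hrow2 v hv
      have : x v * ∑ u, W2 v u * (x v - x u) + α * b v * x v ^ 2
          = x v * (∑ u, W2 v u * (x v - x u) + α * b v * x v) := by ring
      rw [this, h, mul_zero]
  -- rearrange into T + α U = 0
  have hT : ∑ v, ∑ u, W2 v u * x v * (x v - x u) + α * ∑ v, b v * x v ^ 2 = 0 := by
    have h1 : ∀ v, x v * ∑ u, W2 v u * (x v - x u) = ∑ u, W2 v u * x v * (x v - x u) := by
      intro v
      rw [Finset.mul_sum]
      exact Finset.sum_congr rfl fun u _ => by ring
    have h2 : α * ∑ v, b v * x v ^ 2 = ∑ v, α * b v * x v ^ 2 := by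
      rw [Finset.mul_sum]
      exact Finset.sum_congr rfl fun v _ => by ring
    rw [h2, ← Finset.sum_add_distrib, ← hsum]
    exact Finset.sum_congr rfl fun v _ => by rw [h1 v]
  -- the symmetric square sum
  have hsq : ∑ v, ∑ u, W2 v u * (x v - x u) ^ 2
      = 2 * ∑ v, ∑ u, W2 v u * x v * (x v - x u) := by
    have hpt : ∀ v u, W2 v u * (x v - x u) ^ 2
        = W2 v u * x v * (x v - x u) + W2 u v * x u * (x u - x v) := by
      intro v u
      rw [hW2symm v u]
      ring
    calc ∑ v, ∑ u, W2 v u * (x v - x u) ^ 2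
        = ∑ v, ∑ u, (W2 v u * x v * (x v - x u) + W2 u v * x u * (x u - x v)) := by
          exact Finset.sum_congr rfl fun v _ => Finset.sum_congr rfl fun u _ => hpt v u
      _ = ∑ v, ∑ u, W2 v u * x v * (x v - x u) + ∑ v, ∑ u, W2 u v * x u * (x u - x v) := by
          rw [← Finset.sum_add_distrib]
          exact Finset.sum_congr rfl fun v _ => Finset.sum_add_distrib
      _ = 2 * ∑ v, ∑ u, W2 v u * x v * (x v - x u) := by
          rw [Finset.sum_comm (f := fun v u => W2 u v * x u * (x u - x v))]
          ring
  have hU : 0 ≤ ∑ v, b v * x v ^ 2 :=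
    Finset.sum_nonneg fun v _ => mul_nonneg (hb0 v) (sq_nonneg _)
  have hsq0 : ∑ v, ∑ u, W2 v u * (x v - x u) ^ 2 = 0 := by
    have hle : ∑ v, ∑ u, W2 v u * (x v - x u) ^ 2 ≤ 0 := by
      rw [hsq]
      nlinarith [hT, hU, hαpos]
    have hge : 0 ≤ ∑ v, ∑ u, W2 v u * (x v - x u) ^ 2 :=
      Finset.sum_nonneg fun v _ => Finset.sum_nonneg fun u _ =>
        mul_nonneg (hW2nn v u) (sq_nonneg _)
    linarith
  -- extract the (m, n) term
  have hterm : W2 m n * (x m - x n) ^ 2 = 0 := by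
    have h1 := (Finset.sum_eq_zero_iff_of_nonneg
      (fun v _ => Finset.sum_nonneg fun u _ => mul_nonneg (hW2nn v u) (sq_nonneg _))).mp
      hsq0 m (Finset.mem_univ m)
    exact (Finset.sum_eq_zero_iff_of_nonneg
      (fun u _ => mul_nonneg (hW2nn m u) (sq_nonneg _))).mp h1 n (Finset.mem_univ n)
  have hHmn : H.Adj m n := (hHG m hm n).mpr hmn
  have hW2mn : W2 m n = w s(m, n) := by
    rw [hW2]; dsimp only; rw [if_pos ⟨hm, hn, hHmn⟩]
  have hwmn : 0 < w s(m, n) := hw _ (G.mem_edgeSet.mpr hmn)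
  rw [hW2mn] at hterm
  have hxeq : x m = x n := by
    have := mul_eq_zero.mp hterm
    rcases this with h | h
    · exact absurd h (ne_of_gt hwmn)
    · have := sq_eq_zero_iff.mp h
      linarith
  have hDeq : D m = D n := by
    rw [hx] at hxeq
    simp only [if_neg hm, if_neg hn] at hxeq
    exact sub_left_inj.mp hxeq
  rw [hD] at hDeq
  dsimp only at hDeq
  linear_combination w s(m, n) * hDeq
end

section
/- Let G be a finite connected simple graph with positive edge weights, let k = {r,s} ∈ E(G) be an edge such that G − k is connected, and let P be a balanced injection vector. Let F denote the edge flows in G with injection P, and F' the edge flows in G − k with the same injection P. Then for every edge m ≠ k of G, the flow change satisfies F'_m − F_m = F_k · PTDF_{r,s,m} / (1 − PTDF_{r,s,k}), where F_k is the flow on k in G before its removal and PTDF_{r,s,m} is the flow on edge m in G under unit injection at r and withdrawal at s; the denominator 1 − PTDF_{r,s,k} is nonzero because G − k is connected. -/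
open scoped Classical

lemma wLap_mulVec {V : Type*} [Fintype V] [DecidableEq V]
    (G : SimpleGraph V) (w : Sym2 V → ℝ) (x : V → ℝ) (u : V) :
    (wLap G w).mulVec x u =
      ∑ v ∈ Finset.univ.filter (fun v => G.Adj u v), w s(u, v) * (x u - x v) := by
  classical
  have hrw : ∀ v, wLap G w u v =
      (if u = v then ∑ y ∈ Finset.univ.filter (fun y => G.Adj u y), w s(u, y) else 0)
      + (if G.Adj u v then -w s(u, v) else 0) := by
    intro v
    by_cases h : u = v
    · subst h; simp [wLap, G.irrefl]
    · simp [wLap, h]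
  have : (wLap G w).mulVec x u = ∑ v, wLap G w u v * x v := rfl
  rw [this]
  simp only [hrw, add_mul, Finset.sum_add_distrib, ite_mul, zero_mul]
  rw [Finset.sum_ite_eq Finset.univ u (fun v => (∑ y ∈ Finset.univ.filter (fun y => G.Adj u y), w s(u, y)) * x v)]
  simp only [Finset.mem_univ, if_true, Finset.sum_mul]
  rw [← Finset.sum_filter (fun v => G.Adj u v) (fun v => -w s(u, v) * x v)]
  rw [← Finset.sum_add_distrib]
  apply Finset.sum_congr rfl
  intro v _
  ring

lemma wLap_delete {V : Type*} [Fintype V] [DecidableEq V]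
    (G : SimpleGraph V) (w : Sym2 V → ℝ) (r s : V) (hrs : G.Adj r s)
    (x : V → ℝ) (u : V) :
    (wLap G w).mulVec x u =
      (wLap (G.deleteEdges {s(r, s)}) w).mulVec x u +
        w s(r, s) * (x r - x s) *
          ((if u = r then (1:ℝ) else 0) - (if u = s then (1:ℝ) else 0)) := by
  classical
  rw [wLap_mulVec, wLap_mulVec]
  have hne : r ≠ s := hrs.ne
  have hfil : Finset.univ.filter (fun v => (G.deleteEdges {s(r,s)}).Adj u v) =
      Finset.univ.filter (fun v => G.Adj u v ∧ ¬ s(u,v) = s(r,s)) := by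
    apply Finset.filter_congr
    intro v _
    simp [SimpleGraph.deleteEdges_adj]
  rw [show @Finset.filter V (fun v => (G.deleteEdges {s(r,s)}).Adj u v) (fun v => Classical.propDecidable _) Finset.univ = Finset.univ.filter (fun v => G.Adj u v ∧ ¬ s(u,v) = s(r,s)) from (by convert hfil)]
  rw [show (Finset.univ.filter (fun v => G.Adj u v ∧ ¬ s(u,v) = s(r,s))) =
      (Finset.univ.filter (fun v => G.Adj u v)).filter (fun v => ¬ s(u,v) = s(r,s)) by
    rw [Finset.filter_filter]]
  rw [← Finset.sum_filter_add_sum_filter_not (Finset.univ.filter (fun v => G.Adj u v))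
      (fun v => ¬ s(u,v) = s(r,s)) (fun v => w s(u,v) * (x u - x v))]
  congr 1
  have hset : (Finset.univ.filter (fun v => G.Adj u v)).filter (fun v => ¬¬ s(u,v) = s(r,s)) =
      if u = r then {s} else if u = s then {r} else ∅ := by
    ext v
    simp only [Finset.mem_filter, Finset.mem_univ, true_and, not_not, Sym2.eq_iff]
    by_cases h1 : u = r
    · subst h1
      rw [if_pos rfl, Finset.mem_singleton]
      constructor
      · rintro ⟨_, (⟨_, rfl⟩ | ⟨h, _⟩)⟩
        · rfl
        · exact absurd h hne
      · rintro rfl; exact ⟨hrs, Or.inl ⟨rfl, rfl⟩⟩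
    · by_cases h2 : u = s
      · subst h2
        rw [if_neg h1, if_pos rfl, Finset.mem_singleton]
        constructor
        · rintro ⟨_, (⟨h, _⟩ | ⟨_, rfl⟩)⟩
          · exact absurd h h1
          · rfl
        · rintro rfl; exact ⟨hrs.symm, Or.inr ⟨rfl, rfl⟩⟩
      · rw [if_neg h1, if_neg h2]
        simp only [Finset.notMem_empty, iff_false]
        rintro ⟨-, (⟨h, -⟩ | ⟨h, -⟩)⟩
        · exact h1 h
        · exact h2 h
  rw [hset]
  by_cases h1 : u = r
  · subst h1; simp [hne]
  · by_cases h2 : u = s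
    · subst h2
      simp [h1, Ne.symm h1]
      rw [Sym2.eq_swap]
      ring
    · simp [h1, h2]

lemma wLap_kernel_const {V : Type*} [Fintype V] [DecidableEq V]
    (H : SimpleGraph V) (w : Sym2 V → ℝ) (hw : ∀ e ∈ H.edgeSet, 0 < w e)
    (hH : H.Connected) (x : V → ℝ)
    (hx : (wLap H w).mulVec x = 0) : ∀ a b : V, x a = x b := by
  classical
  -- quadratic form
  have hq : ∑ u, ∑ v, (if H.Adj u v then w s(u,v) * (x u - x v)^2 else 0) = 0 := by
    have e1 : ∑ u, ∑ v, (if H.Adj u v then w s(u,v) * (x u * (x u - x v)) else 0) = 0 := by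
      have : ∀ u, ∑ v, (if H.Adj u v then w s(u,v) * (x u * (x u - x v)) else 0)
          = x u * (wLap H w).mulVec x u := by
        intro u
        rw [wLap_mulVec, Finset.mul_sum, Finset.sum_filter]
        apply Finset.sum_congr rfl
        intro v _
        by_cases h : H.Adj u v <;> simp [h] <;> ring
      simp only [this, hx]
      simp
    have e2 : ∑ u, ∑ v, (if H.Adj u v then w s(u,v) * (x v * (x v - x u)) else 0) = 0 := by
      rw [Finset.sum_comm]
      rw [show (∑ v, ∑ u, if H.Adj u v then w s(u,v) * (x v * (x v - x u)) else 0)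
          = ∑ v, ∑ u, (if H.Adj v u then w s(v,u) * (x v * (x v - x u)) else 0) by
        apply Finset.sum_congr rfl; intro v _
        apply Finset.sum_congr rfl; intro u _
        rw [H.adj_comm, Sym2.eq_swap]]
      exact e1
    calc ∑ u, ∑ v, (if H.Adj u v then w s(u,v) * (x u - x v)^2 else 0)
        = (∑ u, ∑ v, (if H.Adj u v then w s(u,v) * (x u * (x u - x v)) else 0))
          + ∑ u, ∑ v, (if H.Adj u v then w s(u,v) * (x v * (x v - x u)) else 0) := by
          rw [← Finset.sum_add_distrib]
          apply Finset.sum_congr rfl; intro u _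
          rw [← Finset.sum_add_distrib]
          apply Finset.sum_congr rfl; intro v _
          by_cases h : H.Adj u v <;> simp [h] <;> ring
      _ = 0 := by rw [e1, e2, add_zero]
  -- each term is zero
  have hadj : ∀ u v : V, H.Adj u v → x u = x v := by
    intro u v huv
    have hnn : ∀ u ∈ (Finset.univ : Finset V), (0:ℝ) ≤
        ∑ v, (if H.Adj u v then w s(u,v) * (x u - x v)^2 else 0) := by
      intro u _
      apply Finset.sum_nonneg
      intro v _
      by_cases h : H.Adj u v
      · simp only [h, if_true]
        exact mul_nonneg (hw _ (H.mem_edgeSet.2 h)).le (sq_nonneg _)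
      · simp [h]
    have h0 := (Finset.sum_eq_zero_iff_of_nonneg hnn).1 hq u (Finset.mem_univ u)
    have hnn2 : ∀ v ∈ (Finset.univ : Finset V), (0:ℝ) ≤
        (if H.Adj u v then w s(u,v) * (x u - x v)^2 else 0) := by
      intro v _
      by_cases h : H.Adj u v
      · simp only [h, if_true]
        exact mul_nonneg (hw _ (H.mem_edgeSet.2 h)).le (sq_nonneg _)
      · simp [h]
    have h00 := (Finset.sum_eq_zero_iff_of_nonneg hnn2).1 h0 v (Finset.mem_univ v)
    rw [if_pos huv] at h00
    have hwpos := hw _ (H.mem_edgeSet.2 huv)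
    have : (x u - x v)^2 = 0 := by
      rcases mul_eq_zero.1 h00 with h | h
      · exact absurd h hwpos.ne'
      · exact h
    have := pow_eq_zero_iff (n := 2) (by norm_num) |>.1 this
    linarith [this]
  -- connectivity
  intro a b
  obtain ⟨p⟩ := hH.preconnected a b
  induction p with
  | nil => rfl
  | cons h p ih => exact (hadj _ _ h).trans ih

/-- **Line outage distribution factors via PTDFs.**  Let `G` be a finite
connected simple graph with positive edge weights, let `k = {r,s}` be an edge
of `G` with `G - k` connected, and let `P` be a balanced injection vector.
Let `F` be the flows in `G` with injection `P` (potential `Vp`), `F'` the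
flows in `G - k` with the same injection (potential `Vp'`), and let `Vptdf` be
a potential for the unit injection `e_r - e_s` in `G`.  Then
`1 - PTDF_{r,s,k} ≠ 0`, and for every oriented edge `m = (a,b) ≠ k` of `G`,
`F'_m - F_m = F_k · PTDF_{r,s,m} / (1 - PTDF_{r,s,k})`. -/
theorem lodf_eq_ptdf_ratio
    {V : Type*} [Fintype V] [DecidableEq V] (G : SimpleGraph V)
    (w : Sym2 V → ℝ) (hw : ∀ e ∈ G.edgeSet, 0 < w e)
    (hG : G.Connected) (r s : V) (hrs : G.Adj r s)
    (hGk : (G.deleteEdges {s(r, s)}).Connected)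
    (P : V → ℝ) (hP : ∑ u, P u = 0)
    (Vp : V → ℝ) (hVp : Matrix.mulVec (wLap G w) Vp = P)
    (Vp' : V → ℝ) (hVp' : Matrix.mulVec (wLap (G.deleteEdges {s(r, s)}) w) Vp' = P)
    (Vptdf : V → ℝ)
    (hVptdf : Matrix.mulVec (wLap G w) Vptdf =
      fun u => (if u = r then (1 : ℝ) else 0) - (if u = s then (1 : ℝ) else 0)) :
    1 - w s(r, s) * (Vptdf r - Vptdf s) ≠ 0 ∧
    ∀ a b : V, G.Adj a b → s(a, b) ≠ s(r, s) →
      w s(a, b) * (Vp' a - Vp' b) - w s(a, b) * (Vp a - Vp b) =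
        (w s(r, s) * (Vp r - Vp s)) * (w s(a, b) * (Vptdf a - Vptdf b)) /
          (1 - w s(r, s) * (Vptdf r - Vptdf s)) := by
  classical
  have hw' : ∀ e ∈ (G.deleteEdges {s(r, s)}).edgeSet, 0 < w e := by
    intro e he
    apply hw
    rw [SimpleGraph.edgeSet_deleteEdges] at he
    exact he.1
  have key : ∀ (x : V → ℝ) (u : V),
      (wLap (G.deleteEdges {s(r, s)}) w).mulVec x u =
        (wLap G w).mulVec x u - w s(r, s) * (x r - x s) *
          ((if u = r then (1:ℝ) else 0) - (if u = s then (1:ℝ) else 0)) := by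
    intro x u
    linarith [wLap_delete G w r s hrs x u]
  have hD : 1 - w s(r, s) * (Vptdf r - Vptdf s) ≠ 0 := by
    intro hcon
    have hker : (wLap (G.deleteEdges {s(r, s)}) w).mulVec Vptdf = 0 := by
      funext u
      rw [key Vptdf u, congrFun hVptdf u]
      have : ((if u = r then (1:ℝ) else 0) - (if u = s then (1:ℝ) else 0)) -
          w s(r, s) * (Vptdf r - Vptdf s) *
            ((if u = r then (1:ℝ) else 0) - (if u = s then (1:ℝ) else 0)) =
          (1 - w s(r, s) * (Vptdf r - Vptdf s)) *
            ((if u = r then (1:ℝ) else 0) - (if u = s then (1:ℝ) else 0)) := by ring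
      rw [Pi.zero_apply, this, hcon, zero_mul]
    have hconst := wLap_kernel_const _ w hw' hGk Vptdf hker
    rw [hconst r s] at hcon
    simp [sub_self] at hcon
  refine ⟨hD, ?_⟩
  set c := (w s(r, s) * (Vp r - Vp s)) / (1 - w s(r, s) * (Vptdf r - Vptdf s)) with hc
  have hcD : c * (1 - w s(r, s) * (Vptdf r - Vptdf s)) = w s(r, s) * (Vp r - Vp s) := by
    rw [hc]; exact div_mul_cancel₀ _ hD
  set y : V → ℝ := fun u => Vp u + c * Vptdf u with hy
  have hylin : ∀ u, (wLap G w).mulVec y u = P u + c *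
      ((if u = r then (1:ℝ) else 0) - (if u = s then (1:ℝ) else 0)) := by
    intro u
    have h0 : y = Vp + c • Vptdf := by funext v; simp [hy, smul_eq_mul]
    rw [h0, Matrix.mulVec_add, Matrix.mulVec_smul, hVp, hVptdf]
    simp [smul_eq_mul]
  have hyP : (wLap (G.deleteEdges {s(r, s)}) w).mulVec y = P := by
    funext u
    rw [key y u, hylin u]
    have h2 : y r - y s = (Vp r - Vp s) + c * (Vptdf r - Vptdf s) := by
      show (Vp r + c * Vptdf r) - (Vp s + c * Vptdf s) = _
      ring
    rw [h2]
    linear_combination ((if u = r then (1:ℝ) else 0) - (if u = s then (1:ℝ) else 0)) * hcD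
  have hker2 : (wLap (G.deleteEdges {s(r, s)}) w).mulVec (fun u => Vp' u - y u) = 0 := by
    have h0 : (fun u => Vp' u - y u) = Vp' - y := rfl
    rw [h0, Matrix.mulVec_sub, hVp', hyP, sub_self]
  have hconst := wLap_kernel_const _ w hw' hGk _ hker2
  intro a b hab hne
  have hz := hconst a b
  try dsimp only at hz
  have hz' : Vp' a - Vp' b = (Vp a - Vp b) + c * (Vptdf a - Vptdf b) := by
    have hya : y a = Vp a + c * Vptdf a := rfl
    have hyb : y b = Vp b + c * Vptdf b := rfl
    rw [hya, hyb] at hz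
    linarith
  rw [eq_div_iff hD]
  linear_combination (w s(a, b) * (Vptdf a - Vptdf b)) * hcD +
    (w s(a, b) * (1 - w s(r, s) * (Vptdf r - Vptdf s))) * hz'
end

section
/- Let G be a finite connected simple graph with positive edge weights, let k = {r,s} ∈ E(G) be an edge such that G − k is connected, and let P be a balanced injection vector. Let F denote the edge flows in G with injection P and F' the edge flows in G − k with the same injection P. Then for every oriented edge m = (a,b) ≠ k of G, the flow change satisfies F'_m − F_m = F_k · (N*(r, a→b, s) − N*(r, b→a, s)) / N*_{G−k}, where F_k is the flow on k in G before its removal, N*(r, a→b, s) is the sum of the weights of the spanning trees of G whose unique r–s path traverses edge {a,b} from a to b, and N*_{G−k} is the weighted spanning tree sum of G − k. Equivalently, LODF_{m,k} = (N*(r, a→b, s) − N*(r, b→a, s)) / N*_{G−k}. -/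
open scoped Classical

/-- `T` is a spanning tree of `G`. -/
def IsSpanningTreeOf {V : Type*} (G T : SimpleGraph V) : Prop := T ≤ G ∧ T.IsTree

/-- The weight of a spanning tree: the product of the weights of its edges. -/
noncomputable def treeWeight {V : Type*} [Fintype V] [DecidableEq V]
    (w : Sym2 V → ℝ) (T : SimpleGraph V) : ℝ :=
  ∏ e ∈ T.edgeFinset, w e

/-- The (unique, since `T` is a tree) path in `T` from `s` to `t` traverses the
edge `{a,b}` in the direction from `a` to `b`. -/
def TraversesDir {V : Type*} (T : SimpleGraph V) (s t a b : V) : Prop :=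
  ∃ p : T.Walk s t, p.IsPath ∧ ∃ d ∈ p.darts, d.toProd = (a, b)

/-- `N*`: the sum of the weights of all spanning trees of `G`. -/
noncomputable def stSum {V : Type*} [Fintype V] [DecidableEq V]
    (G : SimpleGraph V) (w : Sym2 V → ℝ) : ℝ :=
  ∑ T ∈ Finset.univ.filter (fun T => IsSpanningTreeOf G T), treeWeight w T

/-- `N*(s, a→b, t)`: the sum of the weights of the spanning trees of `G` whose
unique `s`–`t` path traverses the edge `{a,b}` from `a` to `b`. -/
noncomputable def stSumDir {V : Type*} [Fintype V] [DecidableEq V]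
    (G : SimpleGraph V) (w : Sym2 V → ℝ) (s a b t : V) : ℝ :=
  ∑ T ∈ Finset.univ.filter (fun T => IsSpanningTreeOf G T ∧ TraversesDir T s t a b),
    treeWeight w T

namespace LODF

open SimpleGraph Finset

variable {V : Type*}

/-- transfer reachability along a walk. -/
lemma reach_of_walk {H H' : SimpleGraph V}
    (hadj : ∀ a b : V, H.Adj a b → H'.Reachable a b) :
    ∀ {x y : V}, H.Walk x y → H'.Reachable x y := by
  intro x y p
  induction p with
  | nil => exact Reachable.refl _
  | cons h q ih => exact (hadj _ _ h).trans ih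

/-- values constant along walks if constant along edges. -/
lemma eq_of_walk {H : SimpleGraph V} {x : V → ℝ}
    (hadj : ∀ a b : V, H.Adj a b → x a = x b) :
    ∀ {u v : V}, H.Walk u v → x u = x v := by
  intro u v p
  induction p with
  | nil => rfl
  | cons h q ih => exact (hadj _ _ h).trans ih

lemma connected_deleteEdges {H : SimpleGraph V} {v w : V} (hc : H.Connected)
    (hr : (H.deleteEdges {s(v, w)}).Reachable v w) :
    (H.deleteEdges {s(v, w)}).Connected := by
  haveI := hc.nonempty
  refine ⟨?_⟩
  intro x y
  obtain ⟨p⟩ := hc.preconnected x y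
  refine reach_of_walk ?_ p
  intro a b hab
  by_cases he : s(a, b) = s(v, w)
  · rw [Sym2.eq_iff] at he
    rcases he with ⟨rfl, rfl⟩ | ⟨rfl, rfl⟩
    · exact hr
    · exact hr.symm
  · exact Adj.reachable (by simp [SimpleGraph.deleteEdges_adj, hab, he])

lemma exists_spanning_tree [Fintype V] [DecidableEq V] :
    ∀ (n : ℕ) (H : SimpleGraph V), H.edgeFinset.card ≤ n → H.Connected →
      ∃ T, T ≤ H ∧ T.IsTree := by
  intro n
  induction n with
  | zero =>
    intro H hcard hc
    refine ⟨H, le_rfl, hc, ?_⟩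
    intro v c hcyc
    cases c with
    | nil => exact hcyc.ne_nil rfl
    | cons h q =>
      have : 0 < H.edgeFinset.card :=
        Finset.card_pos.mpr ⟨_, SimpleGraph.mem_edgeFinset.mpr ((SimpleGraph.mem_edgeSet H).mpr h)⟩
      omega
  | succ n ih =>
    intro H hcard hc
    by_cases hac : H.IsAcyclic
    · exact ⟨H, le_rfl, hc, hac⟩
    · rw [isAcyclic_iff_forall_adj_isBridge] at hac
      push_neg at hac
      obtain ⟨v, u, hadj, hnb⟩ := hac
      rw [isBridge_iff] at hnb
      push_neg at hnb
      have hr : (H.deleteEdges {s(v, u)}).Reachable v u := by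
        by_contra hcon
        exact hcon hnb
      have hc' : (H.deleteEdges {s(v, u)}).Connected := connected_deleteEdges hc hr
      have hsub : (H.deleteEdges {s(v, u)}).edgeFinset ⊂ H.edgeFinset := by
        refine Finset.ssubset_iff_of_subset
          (SimpleGraph.edgeFinset_subset_edgeFinset.mpr (SimpleGraph.deleteEdges_le _)) |>.mpr ?_
        refine ⟨s(v, u), SimpleGraph.mem_edgeFinset.mpr hadj, ?_⟩
        simp [SimpleGraph.mem_edgeFinset, SimpleGraph.deleteEdges_adj]
      have hcard' : (H.deleteEdges {s(v, u)}).edgeFinset.card ≤ n := by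
        have := Finset.card_lt_card hsub
        omega
      obtain ⟨T, hT1, hT2⟩ := ih _ (by convert hcard') hc'
      exact ⟨T, hT1.trans (SimpleGraph.deleteEdges_le _), hT2⟩

lemma treeWeight_pos [Fintype V] [DecidableEq V] {w : Sym2 V → ℝ} {T : SimpleGraph V}
    (h : ∀ e ∈ T.edgeSet, 0 < w e) : 0 < treeWeight w T :=
  Finset.prod_pos fun e he => h e (SimpleGraph.mem_edgeFinset.mp he)

lemma stSum_pos [Fintype V] [DecidableEq V] {H : SimpleGraph V} {w : Sym2 V → ℝ}
    (hc : H.Connected) (hw : ∀ e ∈ H.edgeSet, 0 < w e) : 0 < stSum H w := by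
  obtain ⟨T, hT1, hT2⟩ := exists_spanning_tree H.edgeFinset.card H le_rfl hc
  refine Finset.sum_pos ?_ ⟨T, Finset.mem_filter.mpr ⟨Finset.mem_univ _, hT1, hT2⟩⟩
  intro S hS
  rw [Finset.mem_filter] at hS
  exact treeWeight_pos fun e he => hw e (SimpleGraph.edgeSet_mono hS.2.1 he)

end LODF
namespace LODF

open SimpleGraph Finset

variable {V : Type*}

lemma wLap_mulVec [Fintype V] [DecidableEq V] (H : SimpleGraph V) (w : Sym2 V → ℝ)
    (x : V → ℝ) (u : V) :
    Matrix.mulVec (wLap H w) x u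
      = ∑ v ∈ Finset.univ.filter (fun v => H.Adj u v), w s(u, v) * (x u - x v) := by
  have hm : Matrix.mulVec (wLap H w) x u = ∑ v, wLap H w u v * x v := rfl
  rw [hm]
  have hsplit : ∀ v : V, wLap H w u v * x v
      = (if u = v then (∑ y ∈ Finset.univ.filter (fun y => H.Adj u y), w s(u, y)) * x v else 0)
        + (if H.Adj u v then -(w s(u, v) * x v) else 0) := by
    intro v
    by_cases h1 : u = v
    · subst h1
      simp [wLap, H.irrefl]
    · by_cases h2 : H.Adj u v <;> simp [wLap, h1, h2]
  simp_rw [hsplit]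
  rw [Finset.sum_add_distrib, Finset.sum_ite_eq, if_pos (Finset.mem_univ u)]
  rw [← Finset.sum_filter (fun v => H.Adj u v) (fun v => -(w s(u, v) * x v))]
  rw [Finset.sum_mul, Finset.sum_neg_distrib]
  rw [← sub_eq_add_neg, ← Finset.sum_sub_distrib]
  exact Finset.sum_congr rfl fun v _ => by ring

lemma sum_adj_swap [Fintype V] [DecidableEq V] (H : SimpleGraph V) (F : V → V → ℝ) :
    ∑ u, ∑ v ∈ Finset.univ.filter (fun v => H.Adj u v), F u v
      = ∑ u, ∑ v ∈ Finset.univ.filter (fun v => H.Adj u v), F v u := by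
  simp_rw [Finset.sum_filter]
  rw [Finset.sum_comm]
  refine Finset.sum_congr rfl fun u _ => Finset.sum_congr rfl fun v _ => ?_
  exact if_congr (by rw [H.adj_comm]) rfl rfl

lemma wLap_kernel_const [Fintype V] [DecidableEq V] {H : SimpleGraph V} {w : Sym2 V → ℝ}
    (hw : ∀ e ∈ H.edgeSet, 0 < w e) (hc : H.Connected) {x : V → ℝ}
    (hx : Matrix.mulVec (wLap H w) x = 0) : ∀ a b : V, x a = x b := by
  have hwadj : ∀ u v : V, H.Adj u v → 0 < w s(u, v) := fun u v h => hw _ h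
  have hadj : ∀ a b : V, H.Adj a b → x a = x b := by
    have hS : ∑ u, ∑ v ∈ Finset.univ.filter (fun v => H.Adj u v),
        w s(u, v) * (x u - x v) * x u = 0 := by
      have h0 : ∑ u, x u * Matrix.mulVec (wLap H w) x u = 0 := by
        simp [hx]
      rw [Fintype.sum_congr _ _ (fun u => by
        rw [wLap_mulVec, Finset.mul_sum] :
        ∀ u, x u * Matrix.mulVec (wLap H w) x u
          = ∑ v ∈ Finset.univ.filter (fun v => H.Adj u v), x u * (w s(u, v) * (x u - x v)))] at h0
      rw [← h0]
      exact Fintype.sum_congr _ _ fun u => Finset.sum_congr rfl fun v _ => by ring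
    have hS' : ∑ u, ∑ v ∈ Finset.univ.filter (fun v => H.Adj u v),
        w s(u, v) * (x u - x v) * x v = 0 := by
      rw [sum_adj_swap]
      rw [← neg_eq_zero, ← Finset.sum_neg_distrib]
      rw [← hS]
      refine Fintype.sum_congr _ _ fun u => ?_
      rw [← Finset.sum_neg_distrib]
      refine Finset.sum_congr rfl fun v hv => ?_
      rw [Finset.mem_filter] at hv
      have : s(v, u) = s(u, v) := Sym2.eq_swap
      rw [this]; ring
    have hQ : ∑ u, ∑ v ∈ Finset.univ.filter (fun v => H.Adj u v),
        w s(u, v) * (x u - x v) ^ 2 = 0 := by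
      have := sub_eq_zero_of_eq (hS.trans hS'.symm)
      rw [← Finset.sum_sub_distrib] at this
      rw [← this]
      refine Fintype.sum_congr _ _ fun u => ?_
      rw [← Finset.sum_sub_distrib]
      exact Finset.sum_congr rfl fun v _ => by ring
    intro a b hab
    have hterm : ∀ u ∈ (Finset.univ : Finset V),
        0 ≤ ∑ v ∈ Finset.univ.filter (fun v => H.Adj u v), w s(u, v) * (x u - x v) ^ 2 := by
      intro u _
      refine Finset.sum_nonneg fun v hv => ?_
      rw [Finset.mem_filter] at hv
      exact mul_nonneg (le_of_lt (hwadj _ _ hv.2)) (sq_nonneg _)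
    have h1 := (Finset.sum_eq_zero_iff_of_nonneg hterm).mp hQ a (Finset.mem_univ a)
    have hterm2 : ∀ v ∈ Finset.univ.filter (fun v => H.Adj a v),
        0 ≤ w s(a, v) * (x a - x v) ^ 2 := by
      intro v hv
      rw [Finset.mem_filter] at hv
      exact mul_nonneg (le_of_lt (hwadj _ _ hv.2)) (sq_nonneg _)
    have h2 := (Finset.sum_eq_zero_iff_of_nonneg hterm2).mp h1 b
      (Finset.mem_filter.mpr ⟨Finset.mem_univ b, hab⟩)
    have hwpos := hwadj _ _ hab
    have : (x a - x b) ^ 2 = 0 := by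
      by_contra hne
      exact hne (by
        have := mul_eq_zero.mp h2
        rcases this with h | h
        · exact absurd h (ne_of_gt hwpos)
        · exact h)
    have := pow_eq_zero_iff (n := 2) (by norm_num) |>.mp this
    linarith [sub_eq_zero.mp this]
  intro a b
  obtain ⟨p⟩ := hc.preconnected a b
  exact eq_of_walk hadj p

end LODF
namespace LODF

open SimpleGraph Finset

variable {V : Type*}

lemma wLap_delete_mulVec [Fintype V] [DecidableEq V] (G : SimpleGraph V) (w : Sym2 V → ℝ)
    {r s : V} (hrs : G.Adj r s) (x : V → ℝ) (u : V) :
    Matrix.mulVec (wLap G w) x u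
      = Matrix.mulVec (wLap (G.deleteEdges {s(r, s)}) w) x u
        + w s(r, s) * (x r - x s) *
          ((if u = r then 1 else 0) - (if u = s then 1 else 0)) := by
  have hne : r ≠ s := hrs.ne
  set H := G.deleteEdges {s(r, s)} with hH
  rw [wLap_mulVec, wLap_mulVec]
  -- turn both filtered sums into ite sums over univ
  rw [Finset.sum_filter, Finset.sum_filter]
  have key : ∀ v : V,
      (if G.Adj u v then w s(u, v) * (x u - x v) else 0)
        = (if H.Adj u v then w s(u, v) * (x u - x v) else 0)
          + (if (u = r ∧ v = s) ∨ (u = s ∧ v = r) then w s(u, v) * (x u - x v) else 0) := by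
    intro v
    by_cases hG : G.Adj u v
    · by_cases he : s(u, v) = s(r, s)
      · have hH' : ¬ H.Adj u v := by
          simp [hH, SimpleGraph.deleteEdges_adj, he]
        have hcases : (u = r ∧ v = s) ∨ (u = s ∧ v = r) := by
          rwa [Sym2.eq_iff] at he
        simp [hG, hH', hcases]
      · have hH' : H.Adj u v := by
          simp [hH, SimpleGraph.deleteEdges_adj, hG, he]
        have hcases : ¬ ((u = r ∧ v = s) ∨ (u = s ∧ v = r)) := by
          intro hc
          apply he
          rw [Sym2.eq_iff]
          exact hc
        simp [hG, hH', hcases]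
    · have hH' : ¬ H.Adj u v := fun h => hG h.1
      have hcases : ¬ ((u = r ∧ v = s) ∨ (u = s ∧ v = r)) := by
        rintro (⟨rfl, rfl⟩ | ⟨rfl, rfl⟩)
        · exact hG hrs
        · exact hG hrs.symm
      simp [hG, hH', hcases]
  simp_rw [key]
  rw [Finset.sum_add_distrib]
  congr 1
  · exact Finset.sum_congr rfl fun v _ => by congr
  -- now compute the correction sum
  by_cases hur : u = r
  · subst hur
    rw [Finset.sum_eq_single s
      (fun v _ hvs => if_neg (by rintro (⟨-, rfl⟩ | ⟨rfl, -⟩); exacts [hvs rfl, hne rfl]))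
      (fun h => absurd (Finset.mem_univ s) h)]
    rw [if_pos (Or.inl ⟨rfl, rfl⟩), if_pos rfl, if_neg hne]
    ring
  · by_cases hus : u = s
    · subst hus
      rw [Finset.sum_eq_single r
        (fun v _ hvr => if_neg (by rintro (⟨rfl, -⟩ | ⟨-, rfl⟩); exacts [hur rfl, hvr rfl]))
        (fun h => absurd (Finset.mem_univ r) h)]
      rw [if_pos (Or.inr ⟨rfl, rfl⟩), if_neg hur, if_pos rfl,
        (Sym2.eq_swap : s(u, r) = s(r, u))]
      ring
    · rw [Finset.sum_eq_zero
        (fun v _ => if_neg (by rintro (⟨rfl, -⟩ | ⟨rfl, -⟩); exacts [hur rfl, hus rfl]))]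
      simp [hur, hus]

end LODF
namespace LODF

open SimpleGraph Finset

variable {V : Type*}

/-- A two-component spanning forest of `H` separating `r` from `s`. -/
def TwoForest (H : SimpleGraph V) (r s : V) (F : SimpleGraph V) : Prop :=
  F ≤ H ∧ F.IsAcyclic ∧ ¬ F.Reachable r s ∧ ∀ v, F.Reachable v r ∨ F.Reachable v s

lemma acyclic_of_le {F T : SimpleGraph V} (h : F ≤ T) (hT : T.IsAcyclic) : F.IsAcyclic :=
  fun _ c hc => hT (c.mapLe h) (hc.mapLe h)

lemma path_eq_singleton {T : SimpleGraph V} (hT : T.IsAcyclic) {r s : V} (h : T.Adj r s)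
    {p : T.Walk r s} (hp : p.IsPath) : p = SimpleGraph.Walk.cons h SimpleGraph.Walk.nil := by
  have heq := hT.path_unique ⟨p, hp⟩ (SimpleGraph.Path.singleton h)
  have := congrArg Subtype.val heq
  simpa [SimpleGraph.Path.singleton] using this

lemma sup_delete_eq {T : SimpleGraph V} {a b : V} (h : T.Adj a b) :
    (T.deleteEdges {s(a, b)}) ⊔ SimpleGraph.fromEdgeSet {s(a, b)} = T := by
  ext x y
  simp only [sup_adj, SimpleGraph.deleteEdges_adj, SimpleGraph.fromEdgeSet_adj,
    Set.mem_singleton_iff]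
  constructor
  · rintro (⟨h1, -⟩ | ⟨he, hne⟩)
    · exact h1
    · rw [Sym2.eq_iff] at he
      rcases he with ⟨rfl, rfl⟩ | ⟨rfl, rfl⟩
      · exact h
      · exact h.symm
  · intro hxy
    by_cases he : s(x, y) = s(a, b)
    · exact Or.inr ⟨he, hxy.ne⟩
    · exact Or.inl ⟨hxy, he⟩

lemma delete_sup_eq {F : SimpleGraph V} {a b : V} (hnadj : ¬ F.Adj a b) :
    (F ⊔ SimpleGraph.fromEdgeSet {s(a, b)}).deleteEdges {s(a, b)} = F := by
  ext x y
  simp only [SimpleGraph.deleteEdges_adj, sup_adj, SimpleGraph.fromEdgeSet_adj,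
    Set.mem_singleton_iff]
  constructor
  · rintro ⟨h1 | ⟨he, -⟩, hne2⟩
    · exact h1
    · exact absurd he hne2
  · intro hxy
    refine ⟨Or.inl hxy, fun he => ?_⟩
    rw [Sym2.eq_iff] at he
    rcases he with ⟨rfl, rfl⟩ | ⟨rfl, rfl⟩
    · exact hnadj hxy
    · exact hnadj hxy.symm

lemma reach_delete_endpoints {T : SimpleGraph V} {a b : V} :
    ∀ {x y : V}, T.Walk x y →
      (T.deleteEdges {s(a, b)}).Reachable x a ∨ (T.deleteEdges {s(a, b)}).Reachable x b
        ∨ (T.deleteEdges {s(a, b)}).Reachable x y := by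
  intro x y q
  induction q with
  | nil => exact Or.inr (Or.inr (Reachable.refl _))
  | @cons x z y h p ih =>
    by_cases he : s(x, z) = s(a, b)
    · rw [Sym2.eq_iff] at he
      rcases he with ⟨rfl, rfl⟩ | ⟨rfl, rfl⟩
      · exact Or.inl (Reachable.refl _)
      · exact Or.inr (Or.inl (Reachable.refl _))
    · have hadj : (T.deleteEdges {s(a, b)}).Adj x z := by
        simp [SimpleGraph.deleteEdges_adj, h, he]
      rcases ih with h1 | h1 | h1
      · exact Or.inl (hadj.reachable.trans h1)
      · exact Or.inr (Or.inl (hadj.reachable.trans h1))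
      · exact Or.inr (Or.inr (hadj.reachable.trans h1))

lemma reachable_delete_of_not_mem_edges {T : SimpleGraph V} {e : Sym2 V} {x y : V}
    (q : T.Walk x y) (hq : e ∉ q.edges) : (T.deleteEdges {e}).Reachable x y := by
  refine ⟨q.transfer _ fun e' he' => ?_⟩
  rw [SimpleGraph.edgeSet_deleteEdges, Set.mem_diff, Set.mem_singleton_iff]
  exact ⟨q.edges_subset_edgeSet he', fun h => hq (h ▸ he')⟩

end LODF
namespace LODF

open SimpleGraph Finset

variable {V : Type*}

lemma tail_after_dart {T : SimpleGraph V} {a s b : V} {q2 : T.Walk a s} (hq2 : q2.IsPath)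
    {d : T.Dart} (hd2 : d ∈ q2.darts) (hdp : d.toProd = (a, b)) :
    (T.deleteEdges {s(a, b)}).Reachable b s := by
  cases q2 with
  | nil => simp at hd2
  | @cons _ c _ hadj q3 =>
    rw [SimpleGraph.Walk.darts_cons, List.mem_cons] at hd2
    have hfst : d.fst = a := congrArg Prod.fst hdp
    rcases hd2 with h1 | h1
    · have hcb : c = b := by
        have h2 : d.toProd = (a, c) := by rw [h1]
        exact ((Prod.mk.injEq _ _ _ _).mp (h2.symm.trans hdp)).2
      subst hcb
      have hnd := hq2.isTrail.edges_nodup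
      rw [SimpleGraph.Walk.edges_cons, List.nodup_cons] at hnd
      exact reachable_delete_of_not_mem_edges q3 hnd.1
    · exfalso
      have hmem := SimpleGraph.Walk.dart_fst_mem_support_of_mem_darts q3 h1
      rw [hfst] at hmem
      rw [SimpleGraph.Walk.cons_isPath_iff] at hq2
      exact hq2.2 hmem

lemma forward_props {T H : SimpleGraph V} {r s a b : V}
    (hTH : T ≤ H) (hT : T.IsTree) {p : T.Walk r s} (hp : p.IsPath)
    {d : T.Dart} (hd : d ∈ p.darts) (hdp : d.toProd = (a, b)) :
    TwoForest H r s (T.deleteEdges {s(a, b)}) ∧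
      (T.deleteEdges {s(a, b)}).Reachable r a ∧ (T.deleteEdges {s(a, b)}).Reachable b s := by
  set F := T.deleteEdges {s(a, b)} with hF
  have hTab : T.Adj a b := by
    have := d.adj
    rw [hdp] at this
    exact this
  have hFT : F ≤ T := SimpleGraph.deleteEdges_le _
  have hFacyc : F.IsAcyclic := acyclic_of_le hFT hT.2
  have hnab : ¬ F.Reachable a b := by
    rintro ⟨q0⟩
    obtain ⟨q, hq⟩ : ∃ q : F.Walk a b, q.IsPath := ⟨q0.toPath.1, q0.toPath.2⟩
    have hsub : ∀ e ∈ q.edges, e ∈ T.edgeSet := by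
      intro e he
      have := q.edges_subset_edgeSet he
      rw [hF, SimpleGraph.edgeSet_deleteEdges] at this
      exact this.1
    have hnmem : s(a, b) ∉ q.edges := by
      intro hmem
      have := q.edges_subset_edgeSet hmem
      rw [hF, SimpleGraph.edgeSet_deleteEdges] at this
      exact this.2 rfl
    have hqT := q.transfer T hsub
    have hqTpath : (q.transfer T hsub).IsPath := hq.transfer hsub
    have := path_eq_singleton hT.2 hTab hqTpath
    have hedges : s(a, b) ∈ (q.transfer T hsub).edges := by
      rw [this]
      simp
    rw [SimpleGraph.Walk.edges_transfer] at hedges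
    exact hnmem hedges
  -- decompose the path at `a`
  have hfst : d.fst = a := congrArg Prod.fst hdp
  have hasup : a ∈ p.support := by
    have := SimpleGraph.Walk.dart_fst_mem_support_of_mem_darts p hd
    rwa [hfst] at this
  have hq1 : (p.takeUntil a hasup).IsPath := hp.takeUntil hasup
  have hq2 : (p.dropUntil a hasup).IsPath := hp.dropUntil hasup
  have hspec := p.take_spec hasup
  have hdarts : d ∈ (p.takeUntil a hasup).darts ++ (p.dropUntil a hasup).darts := by
    rw [← SimpleGraph.Walk.darts_append, hspec]
    exact hd
  have hd2 : d ∈ (p.dropUntil a hasup).darts := by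
    rcases List.mem_append.mp hdarts with h1 | h1
    · exfalso
      have hmem : a ∈ (p.takeUntil a hasup).support.dropLast := by
        rw [← SimpleGraph.Walk.map_fst_darts]
        exact List.mem_map.mpr ⟨d, h1, hfst⟩
      have hne := (p.takeUntil a hasup).support_ne_nil
      have hnd : (p.takeUntil a hasup).support.Nodup := hq1.support_nodup
      rw [← List.dropLast_append_getLast hne, List.nodup_append] at hnd
      exact hnd.2.2 a hmem a (by
        rw [SimpleGraph.Walk.getLast_support]
        simp) rfl
    · exact h1
  have hbs : F.Reachable b s := tail_after_dart hq2 hd2 hdp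
  have hra : F.Reachable r a := by
    have hedge : d.edge = s(a, b) := by rw [SimpleGraph.Dart.edge, hdp]
    have he2 : s(a, b) ∈ (p.dropUntil a hasup).edges :=
      hedge ▸ List.mem_map_of_mem (f := SimpleGraph.Dart.edge) hd2
    have hnd : p.edges.Nodup := hp.isTrail.edges_nodup
    rw [← hspec, SimpleGraph.Walk.edges_append] at hnd
    have hdisj := List.disjoint_of_nodup_append hnd
    exact reachable_delete_of_not_mem_edges _ (fun h => hdisj h he2)
  have hcover : ∀ v, F.Reachable v a ∨ F.Reachable v b := by
    intro v
    obtain ⟨q⟩ := hT.1.preconnected v a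
    rcases reach_delete_endpoints q with h1 | h1 | h1
    · exact Or.inl h1
    · exact Or.inr h1
    · exact Or.inl h1
  have hnrs : ¬ F.Reachable r s := fun h => hnab ((hra.symm.trans h).trans hbs.symm)
  refine ⟨⟨hFT.trans hTH, hFacyc, hnrs, fun v => ?_⟩, hra, hbs⟩
  rcases hcover v with h1 | h1
  · exact Or.inl (h1.trans hra.symm)
  · exact Or.inr (h1.trans hbs)

end LODF
namespace LODF

open SimpleGraph Finset

variable {V : Type*}

lemma mem_support_reachable {F : SimpleGraph V} {c d x : V} (q : F.Walk c d)
    (hx : x ∈ q.support) : F.Reachable c x :=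
  ⟨q.takeUntil x hx⟩

lemma backward_props {F H : SimpleGraph V} {r s a b : V} (hH : H.Adj a b)
    (hF : TwoForest H r s F) (hra : F.Reachable r a) (hbs : F.Reachable b s) :
    (F ⊔ SimpleGraph.fromEdgeSet {s(a, b)}) ≤ H
      ∧ (F ⊔ SimpleGraph.fromEdgeSet {s(a, b)}).IsTree
      ∧ TraversesDir (F ⊔ SimpleGraph.fromEdgeSet {s(a, b)}) r s a b
      ∧ ¬ F.Adj a b := by
  obtain ⟨hFH, hacyc, hnrs, hcov⟩ := hF
  have hab : a ≠ b := hH.ne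
  have hnreach : ¬ F.Reachable a b := fun h => hnrs ((hra.trans h).trans hbs)
  have hnadj : ¬ F.Adj a b := fun h => hnreach h.reachable
  set T := F ⊔ SimpleGraph.fromEdgeSet {s(a, b)} with hT
  have hFT : F ≤ T := le_sup_left
  have hTH : T ≤ H := by
    refine sup_le hFH ?_
    intro x y hxy
    rw [SimpleGraph.fromEdgeSet_adj, Set.mem_singleton_iff] at hxy
    obtain ⟨he, -⟩ := hxy
    rw [Sym2.eq_iff] at he
    rcases he with ⟨rfl, rfl⟩ | ⟨rfl, rfl⟩
    · exact hH
    · exact hH.symm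
  have hTab : T.Adj a b := by
    rw [hT, sup_adj, SimpleGraph.fromEdgeSet_adj]
    exact Or.inr ⟨rfl, hab⟩
  have hreach : ∀ v, T.Reachable v r := by
    intro v
    rcases hcov v with h | h
    · exact h.mono hFT
    · exact (((h.mono hFT).trans (hbs.mono hFT).symm).trans hTab.symm.reachable).trans
        (hra.mono hFT).symm
  haveI : Nonempty V := ⟨r⟩
  have hconn : T.Connected := ⟨fun x y => (hreach x).trans (hreach y).symm⟩
  have hdel : T.deleteEdges {s(a, b)} = F := delete_sup_eq hnadj
  have hbridge : T.IsBridge s(a, b) := by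
    rw [SimpleGraph.isBridge_iff]
    refine fun hre => hnreach ?_
    rwa [hdel] at hre
  have hacycT : T.IsAcyclic := by
    intro v c hc
    by_cases he : s(a, b) ∈ c.edges
    · exact (SimpleGraph.isBridge_iff_adj_and_forall_cycle_notMem (T.mem_edgeSet.mpr hTab)).mp hbridge c hc he
    · have hsub : ∀ e ∈ c.edges, e ∈ F.edgeSet := by
        intro e hee
        have h1 := c.edges_subset_edgeSet hee
        have hne' : e ≠ s(a, b) := fun h => he (h ▸ hee)
        rw [← hdel, SimpleGraph.edgeSet_deleteEdges]
        exact ⟨h1, hne'⟩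
      exact hacyc (c.transfer F hsub) (hc.transfer hsub)
  refine ⟨hTH, ⟨hconn, hacycT⟩, ?_, hnadj⟩
  -- build the witness path
  obtain ⟨q1w⟩ := hra
  obtain ⟨q2w⟩ := hbs
  set q1 : F.Walk r a := q1w.toPath.1 with hq1def
  set q2 : F.Walk b s := q2w.toPath.1 with hq2def
  have hq1 : q1.IsPath := q1w.toPath.2
  have hq2 : q2.IsPath := q2w.toPath.2
  have hdisj : ∀ x, x ∈ q1.support → x ∈ q2.support → False := by
    intro x h1 h2
    exact hnrs ((mem_support_reachable q1 h1).trans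
      ((mem_support_reachable q2 h2).symm.trans ⟨q2w⟩))
  refine ⟨(q1.mapLe hFT).append (SimpleGraph.Walk.cons hTab (q2.mapLe hFT)), ?_, ?_⟩
  · rw [SimpleGraph.Walk.isPath_def, SimpleGraph.Walk.support_append]
    have hs1 : (q1.mapLe hFT).support = q1.support := by
      rw [SimpleGraph.Walk.mapLe, SimpleGraph.Walk.support_map]
      exact List.map_id'' (fun x => rfl) q1.support
    have hs2 : (q2.mapLe hFT).support = q2.support := by
      rw [SimpleGraph.Walk.mapLe, SimpleGraph.Walk.support_map]
      exact List.map_id'' (fun x => rfl) q2.support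
    rw [SimpleGraph.Walk.support_cons, List.tail_cons, hs1, hs2]
    rw [List.nodup_append]
    exact ⟨hq1.support_nodup, hq2.support_nodup, fun x hx1 y hy hxy => hdisj x hx1 (hxy ▸ hy)⟩
  · refine ⟨⟨(a, b), hTab⟩, ?_, rfl⟩
    rw [SimpleGraph.Walk.darts_append, SimpleGraph.Walk.darts_cons]
    exact List.mem_append_right _ List.mem_cons_self

lemma weight_sup [Fintype V] [DecidableEq V] {F : SimpleGraph V} {a b : V} (hab : a ≠ b)
    (hnadj : ¬ F.Adj a b) (w : Sym2 V → ℝ) :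
    treeWeight w (F ⊔ SimpleGraph.fromEdgeSet {s(a, b)}) = w s(a, b) * treeWeight w F := by
  rw [treeWeight, treeWeight,
    ← Finset.prod_insert (fun hmem => hnadj (SimpleGraph.mem_edgeFinset.mp hmem))]
  refine Finset.prod_congr ?_ (fun _ _ => rfl)
  apply Finset.coe_injective
  rw [Finset.coe_insert, SimpleGraph.coe_edgeFinset, SimpleGraph.coe_edgeFinset]
  ext e
  simp only [SimpleGraph.edgeSet_sup, SimpleGraph.edgeSet_fromEdgeSet, Set.mem_union,
    Set.mem_diff, Set.mem_singleton_iff, Set.mem_insert_iff, Set.mem_setOf_eq]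
  constructor
  · rintro (h | ⟨rfl, -⟩)
    · exact Or.inr h
    · exact Or.inl rfl
  · rintro (rfl | h)
    · exact Or.inr ⟨rfl, fun hd => hab (Sym2.isDiag_iff_proj_eq.mp hd)⟩
    · exact Or.inl h

end LODF
namespace LODF

open SimpleGraph Finset

variable {V : Type*}

lemma trav_adj {T : SimpleGraph V} {r s a b : V} (h : TraversesDir T r s a b) : T.Adj a b := by
  obtain ⟨p, hp, d, hd, hdp⟩ := h
  have := d.adj
  rw [hdp] at this
  exact this

/-- The two-forest "potential" function. -/
noncomputable def gval [Fintype V] [DecidableEq V] (H : SimpleGraph V) (w : Sym2 V → ℝ)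
    (r s v : V) : ℝ :=
  ∑ F ∈ Finset.univ.filter (fun F => TwoForest H r s F ∧ F.Reachable r v), treeWeight w F

lemma stSumDir_eq_forest [Fintype V] [DecidableEq V] {H : SimpleGraph V} (w : Sym2 V → ℝ)
    {r s a b : V} (hH : H.Adj a b) :
    stSumDir H w r a b s
      = w s(a, b) * ∑ F ∈ Finset.univ.filter
          (fun F => TwoForest H r s F ∧ F.Reachable r a ∧ F.Reachable b s), treeWeight w F := by
  rw [stSumDir, Finset.mul_sum]
  refine Finset.sum_nbij' (i := fun T => T.deleteEdges {s(a, b)})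
    (j := fun F => F ⊔ SimpleGraph.fromEdgeSet {s(a, b)}) ?_ ?_ ?_ ?_ ?_
  · -- forward membership
    intro T hT
    rw [Finset.mem_filter] at hT
    obtain ⟨-, ⟨hTH, hTree⟩, p, hp, d, hd, hdp⟩ := hT
    obtain ⟨h2f, hra, hbs⟩ := forward_props hTH hTree hp hd hdp
    exact Finset.mem_filter.mpr ⟨Finset.mem_univ _, h2f, hra, hbs⟩
  · -- backward membership
    intro F hF
    rw [Finset.mem_filter] at hF
    obtain ⟨-, h2f, hra, hbs⟩ := hF
    obtain ⟨hTH, hTree, htrav, -⟩ := backward_props hH h2f hra hbs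
    exact Finset.mem_filter.mpr ⟨Finset.mem_univ _, ⟨hTH, hTree⟩, htrav⟩
  · -- left inverse
    intro T hT
    rw [Finset.mem_filter] at hT
    exact sup_delete_eq (trav_adj hT.2.2)
  · -- right inverse
    intro F hF
    rw [Finset.mem_filter] at hF
    obtain ⟨-, ⟨-, -, hnrs, -⟩, hra, hbs⟩ := hF
    exact delete_sup_eq fun h => hnrs ((hra.trans h.reachable).trans hbs)
  · -- weights
    intro T hT
    rw [Finset.mem_filter] at hT
    have hTab : T.Adj a b := trav_adj hT.2.2
    have hnadj : ¬ (T.deleteEdges {s(a, b)}).Adj a b := by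
      simp [SimpleGraph.deleteEdges_adj]
    conv_lhs => rw [← sup_delete_eq hTab]
    exact weight_sup hH.ne hnadj w

lemma forest_sum_sub [Fintype V] [DecidableEq V] {H : SimpleGraph V} (w : Sym2 V → ℝ)
    {r s : V} (a b : V) :
    (∑ F ∈ Finset.univ.filter
        (fun F => TwoForest H r s F ∧ F.Reachable r a ∧ F.Reachable b s), treeWeight w F)
      - (∑ F ∈ Finset.univ.filter
        (fun F => TwoForest H r s F ∧ F.Reachable r b ∧ F.Reachable a s), treeWeight w F)
      = gval H w r s a - gval H w r s b := by
  rw [gval, gval]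
  rw [Finset.sum_filter, Finset.sum_filter, Finset.sum_filter, Finset.sum_filter,
    ← Finset.sum_sub_distrib, ← Finset.sum_sub_distrib]
  refine Finset.sum_congr rfl fun F _ => ?_
  by_cases hTF : TwoForest H r s F
  · obtain ⟨-, -, hnrs, hcov⟩ := id hTF
    have hkey : ∀ v : V, F.Reachable v s ↔ ¬ F.Reachable r v := by
      intro v
      constructor
      · intro h1 h2
        exact hnrs (h2.trans h1)
      · intro h1
        rcases hcov v with h2 | h2
        · exact absurd h2.symm h1
        · exact h2
    by_cases hPa : F.Reachable r a <;> by_cases hPb : F.Reachable r b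
    · have h1 : ¬ F.Reachable b s := fun h => (hkey b).mp h hPb
      have h2 : ¬ F.Reachable a s := fun h => (hkey a).mp h hPa
      simp [hTF, hPa, hPb, h1, h2]
    · have h1 : F.Reachable b s := (hkey b).mpr hPb
      have h2 : ¬ F.Reachable a s := fun h => (hkey a).mp h hPa
      simp [hTF, hPa, hPb, h1, h2]
    · have h1 : ¬ F.Reachable b s := fun h => (hkey b).mp h hPb
      have h2 : F.Reachable a s := (hkey a).mpr hPa
      simp [hTF, hPa, hPb, h1, h2]
    · have h1 : F.Reachable b s := (hkey b).mpr hPb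
      have h2 : F.Reachable a s := (hkey a).mpr hPa
      simp [hTF, hPa, hPb, h1, h2]
  · simp [hTF]

end LODF
namespace LODF

open SimpleGraph Finset

variable {V : Type*}

lemma dart_count_telescope [DecidableEq V] {H : SimpleGraph V} :
    ∀ {x y : V} (p : H.Walk x y) (u : V),
      ((p.darts.map SimpleGraph.Dart.toProd).countP (fun q => q.1 = u) : ℝ)
        - ((p.darts.map SimpleGraph.Dart.toProd).countP (fun q => q.2 = u) : ℝ)
      = (if x = u then 1 else 0) - (if y = u then 1 else 0) := by
  intro x y p
  induction p with
  | nil => simp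
  | @cons x z y h q ih =>
    intro u
    have ihu := ih u
    rw [SimpleGraph.Walk.darts_cons, List.map_cons, List.countP_cons, List.countP_cons]
    push_cast
    simp only [decide_eq_true_eq]
    linarith [ihu]

lemma sum_ind_fst_eq_countP [Fintype V] [DecidableEq V] :
    ∀ (L : List (V × V)), L.Nodup → ∀ u : V,
      ∑ v : V, (if (u, v) ∈ L then (1 : ℝ) else 0) = L.countP (fun q => q.1 = u) := by
  intro L
  induction L with
  | nil => simp
  | cons x L ih =>
    intro hnd u
    obtain ⟨hx, hL⟩ := List.nodup_cons.mp hnd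
    rw [List.countP_cons]
    push_cast
    simp only [decide_eq_true_eq]
    have key : ∀ v : V, (if (u, v) ∈ x :: L then (1 : ℝ) else 0)
        = (if (u, v) = x then 1 else 0) + (if (u, v) ∈ L then 1 else 0) := by
      intro v
      by_cases h1 : (u, v) = x
      · have h2 : (u, v) ∉ L := h1 ▸ hx
        simp [h1, h2, hx, List.mem_cons]
      · by_cases h2 : (u, v) ∈ L <;> simp [h1, h2, List.mem_cons]
    simp_rw [key]
    rw [Finset.sum_add_distrib, ih hL u]
    have : ∑ v : V, (if (u, v) = x then (1 : ℝ) else 0) = if x.1 = u then 1 else 0 := by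
      by_cases hxu : x.1 = u
      · rw [Finset.sum_eq_single x.2]
        · rw [if_pos (by rw [← hxu]), if_pos hxu]
        · intro v _ hv
          rw [if_neg]
          intro hc
          exact hv (congrArg Prod.snd hc)
        · intro hmem
          exact absurd (Finset.mem_univ _) hmem
      · rw [if_neg hxu, Finset.sum_eq_zero]
        intro v _
        rw [if_neg]
        intro hc
        exact hxu (congrArg Prod.fst hc).symm
    rw [this]
    ring

lemma sum_ind_snd_eq_countP [Fintype V] [DecidableEq V]
    (L : List (V × V)) (hnd : L.Nodup) (u : V) :
    ∑ v : V, (if (v, u) ∈ L then (1 : ℝ) else 0) = L.countP (fun q => q.2 = u) := by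
  have hswap := sum_ind_fst_eq_countP (L.map Prod.swap)
    (hnd.map (fun p q h => by simpa [Prod.ext_iff, and_comm] using h)) u
  have hmem : ∀ v : V, ((u, v) ∈ L.map Prod.swap) ↔ ((v, u) ∈ L) := by
    intro v
    rw [List.mem_map]
    constructor
    · rintro ⟨q, hq, hqe⟩
      have : q = (v, u) := by
        have h1 := congrArg Prod.fst hqe
        have h2 := congrArg Prod.snd hqe
        simp only [Prod.fst_swap, Prod.snd_swap] at h1 h2
        exact Prod.ext h2 h1
      exact this ▸ hq
    · intro h
      exact ⟨(v, u), h, rfl⟩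
  simp_rw [hmem] at hswap
  rw [hswap, List.countP_map]
  rfl

lemma tree_dart_sum [Fintype V] [DecidableEq V] {T : SimpleGraph V} (hT : T.IsTree) (r s u : V) :
    ∑ v : V, ((if TraversesDir T r s u v then (1 : ℝ) else 0)
      - (if TraversesDir T r s v u then 1 else 0))
      = (if r = u then 1 else 0) - (if s = u then 1 else 0) := by
  obtain ⟨p0⟩ := hT.1.preconnected r s
  set p : T.Walk r s := p0.toPath.1 with hpdef
  have hp : p.IsPath := p0.toPath.2
  have hTrav : ∀ x y : V, TraversesDir T r s x y ↔ (x, y) ∈ p.darts.map Dart.toProd := by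
    intro x y
    constructor
    · rintro ⟨q, hq, d, hd, hdp⟩
      have hpq : q = p := by
        have := hT.2.path_unique ⟨q, hq⟩ ⟨p, hp⟩
        exact congrArg Subtype.val this
      subst hpq
      exact List.mem_map.mpr ⟨d, hd, hdp⟩
    · intro hmem
      obtain ⟨d, hd, hdp⟩ := List.mem_map.mp hmem
      exact ⟨p, hp, d, hd, hdp⟩
  have hdartsnd : p.darts.Nodup := by
    have h1 : (p.darts.map (·.fst)).Nodup := by
      rw [SimpleGraph.Walk.map_fst_darts]
      exact hp.support_nodup.sublist (List.dropLast_sublist _)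
    exact h1.of_map
  have hnd : (p.darts.map Dart.toProd).Nodup := hdartsnd.map Dart.toProd_injective
  simp_rw [hTrav]
  rw [Finset.sum_sub_distrib, sum_ind_fst_eq_countP _ hnd u, sum_ind_snd_eq_countP _ hnd u]
  exact dart_count_telescope p u

end LODF
namespace LODF

open SimpleGraph Finset

variable {V : Type*}

lemma stSumDir_expand [Fintype V] [DecidableEq V] (H : SimpleGraph V) (w : Sym2 V → ℝ)
    (r a b s : V) :
    stSumDir H w r a b s = ∑ T ∈ Finset.univ.filter (fun T => IsSpanningTreeOf H T),
      (if TraversesDir T r s a b then treeWeight w T else 0) := by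
  rw [stSumDir, Finset.sum_filter, Finset.sum_filter]
  refine Finset.sum_congr rfl fun T _ => ?_
  by_cases h1 : IsSpanningTreeOf H T <;> by_cases h2 : TraversesDir T r s a b <;>
    simp [h1, h2]

lemma kcl [Fintype V] [DecidableEq V] (H : SimpleGraph V) (w : Sym2 V → ℝ) (r s u : V) :
    ∑ v ∈ Finset.univ.filter (fun v => H.Adj u v),
        (stSumDir H w r u v s - stSumDir H w r v u s)
      = stSum H w * ((if r = u then 1 else 0) - (if s = u then 1 else 0)) := by
  simp_rw [stSumDir_expand]
  rw [stSum, Finset.sum_mul]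
  simp_rw [← Finset.sum_sub_distrib]
  rw [Finset.sum_comm]
  refine Finset.sum_congr rfl fun T hT => ?_
  rw [Finset.mem_filter] at hT
  obtain ⟨-, hTH, hTree⟩ := hT
  have hext : ∑ v ∈ Finset.univ.filter (fun v => H.Adj u v),
      ((if TraversesDir T r s u v then treeWeight w T else 0)
        - (if TraversesDir T r s v u then treeWeight w T else 0))
      = ∑ v : V, ((if TraversesDir T r s u v then treeWeight w T else 0)
        - (if TraversesDir T r s v u then treeWeight w T else 0)) := by
    refine Finset.sum_subset (Finset.filter_subset _ _) ?_
    intro v _ hv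
    rw [Finset.mem_filter, not_and] at hv
    have hnadj : ¬ H.Adj u v := hv (Finset.mem_univ v)
    have h1 : ¬ TraversesDir T r s u v := fun ht => hnadj (hTH (trav_adj ht))
    have h2 : ¬ TraversesDir T r s v u := fun ht => hnadj (hTH (trav_adj ht)).symm
    simp [h1, h2]
  rw [hext]
  have hite : ∀ (c : Prop), (if c then treeWeight w T else 0)
      = treeWeight w T * (if c then (1:ℝ) else 0) := by
    intro c
    by_cases h : c <;> simp [h]
  simp_rw [hite, ← mul_sub]
  rw [← Finset.mul_sum, tree_dart_sum hTree r s u]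

lemma gval_mulVec [Fintype V] [DecidableEq V] (H : SimpleGraph V) (w : Sym2 V → ℝ)
    (r s u : V) :
    Matrix.mulVec (wLap H w) (gval H w r s) u
      = stSum H w * ((if r = u then 1 else 0) - (if s = u then 1 else 0)) := by
  rw [wLap_mulVec, ← kcl H w r s u]
  refine Finset.sum_congr rfl fun v hv => ?_
  rw [Finset.mem_filter] at hv
  have hadj := hv.2
  rw [stSumDir_eq_forest w hadj, stSumDir_eq_forest w hadj.symm,
    (Sym2.eq_swap : s(v, u) = s(u, v)), ← mul_sub, forest_sum_sub w u v]

lemma trav_pair_eq {T : SimpleGraph V} {r s a b : V} (hacyc : T.IsAcyclic)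
    (hTrs : T.Adj r s) (htrav : TraversesDir T r s a b) : (a, b) = (r, s) := by
  obtain ⟨p, hp, d, hd, hdp⟩ := htrav
  rw [path_eq_singleton hacyc hTrs hp] at hd
  simp only [SimpleGraph.Walk.darts_cons, SimpleGraph.Walk.darts_nil, List.mem_singleton] at hd
  rw [← hdp, hd]

lemma stSumDir_delete [Fintype V] [DecidableEq V] {G : SimpleGraph V} {r s : V}
    (w : Sym2 V → ℝ) {a b : V} (hne : s(a, b) ≠ s(r, s)) :
    stSumDir G w r a b s = stSumDir (G.deleteEdges {s(r, s)}) w r a b s := by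
  rw [stSumDir, stSumDir]
  refine Finset.sum_congr (Finset.filter_congr fun T _ => ?_) (fun _ _ => rfl)
  constructor
  · rintro ⟨⟨hTG, hTree⟩, htrav⟩
    refine ⟨⟨?_, hTree⟩, htrav⟩
    intro x y hxy
    rw [SimpleGraph.deleteEdges_adj, Set.mem_singleton_iff]
    refine ⟨hTG hxy, fun he => ?_⟩
    have hTrs : T.Adj r s := by
      have : s(r, s) ∈ T.edgeSet := he ▸ (T.mem_edgeSet.mpr hxy)
      exact T.mem_edgeSet.mp this
    have := trav_pair_eq hTree.2 hTrs htrav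
    apply hne
    rw [(Prod.mk.injEq _ _ _ _).mp this |>.1, (Prod.mk.injEq _ _ _ _).mp this |>.2]
  · rintro ⟨⟨hTH, hTree⟩, htrav⟩
    exact ⟨⟨hTH.trans (SimpleGraph.deleteEdges_le _), hTree⟩, htrav⟩

end LODF
/-- **Spanning-tree formula for line outage distribution factors.**  Let `G` be
a finite connected simple graph with positive edge weights, let `k = {r,s}` be
an edge of `G` with `G - k` connected, and let `P` be a balanced injection
vector.  Let `F` be the flows in `G` with injection `P` (potential `Vp`) and
`F'` the flows in `G - k` with the same injection (potential `Vp'`).  Then for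
every oriented edge `m = (a,b) ≠ k` of `G`,
`F'_m - F_m = F_k · (N*(r, a→b, s) - N*(r, b→a, s)) / N*_{G-k}`,
i.e. `LODF_{m,k} = (N*(r, a→b, s) - N*(r, b→a, s)) / N*_{G-k}`. -/
theorem lodf_eq_spanning_tree_ratio
    {V : Type*} [Fintype V] [DecidableEq V] (G : SimpleGraph V)
    (w : Sym2 V → ℝ) (hw : ∀ e ∈ G.edgeSet, 0 < w e)
    (hG : G.Connected) (r s : V) (hrs : G.Adj r s)
    (hGk : (G.deleteEdges {s(r, s)}).Connected)
    (P : V → ℝ) (hP : ∑ u, P u = 0)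
    (Vp : V → ℝ) (hVp : Matrix.mulVec (wLap G w) Vp = P)
    (Vp' : V → ℝ) (hVp' : Matrix.mulVec (wLap (G.deleteEdges {s(r, s)}) w) Vp' = P) :
    ∀ a b : V, G.Adj a b → s(a, b) ≠ s(r, s) →
      w s(a, b) * (Vp' a - Vp' b) - w s(a, b) * (Vp a - Vp b) =
        (w s(r, s) * (Vp r - Vp s)) *
          ((stSumDir G w r a b s - stSumDir G w r b a s) /
            stSum (G.deleteEdges {s(r, s)}) w) := by
  intro a b hab hne
  set H := G.deleteEdges {s(r, s)} with hH
  have hwH : ∀ e ∈ H.edgeSet, 0 < w e := fun e he =>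
    hw e (SimpleGraph.edgeSet_mono (SimpleGraph.deleteEdges_le _) he)
  have hN : 0 < stSum H w := LODF.stSum_pos hGk hwH
  set N := stSum H w with hNdef
  set Fk := w s(r, s) * (Vp r - Vp s) with hFk
  set g : V → ℝ := LODF.gval H w r s with hg
  set x : V → ℝ := fun v => Vp' v - Vp v - (Fk / N) * g v with hx
  have hNne : N ≠ 0 := ne_of_gt hN
  have hker : Matrix.mulVec (wLap H w) x = 0 := by
    funext u
    have hlin : Matrix.mulVec (wLap H w) x u
        = Matrix.mulVec (wLap H w) Vp' u - Matrix.mulVec (wLap H w) Vp u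
          - (Fk / N) * Matrix.mulVec (wLap H w) g u := by
      have hpt : ∀ v, wLap H w u v * x v
          = wLap H w u v * Vp' v - wLap H w u v * Vp v
            - (Fk / N) * (wLap H w u v * g v) := by
        intro v
        rw [hx]
        ring
      have e1 : Matrix.mulVec (wLap H w) x u = ∑ v, wLap H w u v * x v := rfl
      have e2 : Matrix.mulVec (wLap H w) Vp' u = ∑ v, wLap H w u v * Vp' v := rfl
      have e3 : Matrix.mulVec (wLap H w) Vp u = ∑ v, wLap H w u v * Vp v := rfl
      have e4 : Matrix.mulVec (wLap H w) g u = ∑ v, wLap H w u v * g v := rfl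
      rw [e1, e2, e3, e4, Finset.sum_congr rfl fun v _ => hpt v,
        Finset.sum_sub_distrib, Finset.sum_sub_distrib, ← Finset.mul_sum]
    have h1 : Matrix.mulVec (wLap H w) Vp' u = P u := congrFun hVp' u
    have h2 : Matrix.mulVec (wLap H w) Vp u
        = P u - Fk * ((if u = r then 1 else 0) - (if u = s then 1 else 0)) := by
      have hd := LODF.wLap_delete_mulVec G w hrs Vp u
      rw [congrFun hVp u] at hd
      rw [← hH] at hd
      rw [← hFk] at hd
      linarith
    have h3 : Matrix.mulVec (wLap H w) g u
        = N * ((if r = u then 1 else 0) - (if s = u then 1 else 0)) :=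
      LODF.gval_mulVec H w r s u
    have hir : (if r = u then (1:ℝ) else 0) = (if u = r then 1 else 0) := by
      by_cases h : u = r
      · simp [h]
      · simp [h, Ne.symm h]
    have his : (if s = u then (1:ℝ) else 0) = (if u = s then 1 else 0) := by
      by_cases h : u = s
      · simp [h]
      · simp [h, Ne.symm h]
    rw [Pi.zero_apply, hlin, h1, h2, h3, hir, his]
    field_simp
    ring
  have hconst := LODF.wLap_kernel_const hwH hGk hker
  have hHab : H.Adj a b := by
    rw [hH, SimpleGraph.deleteEdges_adj, Set.mem_singleton_iff]
    exact ⟨hab, hne⟩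
  have hce : x a = x b := hconst a b
  have hxa : (Vp' a - Vp a) - (Vp' b - Vp b) = (Fk / N) * (g a - g b) := by
    have hce' : Vp' a - Vp a - Fk / N * g a = Vp' b - Vp b - Fk / N * g b := hce
    linear_combination hce'
  have hsd : stSumDir G w r a b s - stSumDir G w r b a s = w s(a, b) * (g a - g b) := by
    rw [LODF.stSumDir_delete w hne,
      LODF.stSumDir_delete w (show s(b, a) ≠ s(r, s) by
        rwa [(Sym2.eq_swap : s(b, a) = s(a, b))]), ← hH]
    rw [LODF.stSumDir_eq_forest w hHab, LODF.stSumDir_eq_forest w hHab.symm,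
      (Sym2.eq_swap : s(b, a) = s(a, b)), ← mul_sub, LODF.forest_sum_sub w a b]
  rw [hsd]
  have hgoal : w s(a, b) * (Vp' a - Vp' b) - w s(a, b) * (Vp a - Vp b)
      = w s(a, b) * ((Vp' a - Vp a) - (Vp' b - Vp b)) := by ring
  rw [hgoal, hxa]
  field_simp
end

section
/- Let G be a finite simple graph. For two edges e and f of G, define the rerouting distance d(e,f) as follows: d(e,e) = 0, and for e ≠ f, d(e,f) is the minimum length (number of edges) of a cycle in G containing both e and f, with d(e,f) = ∞ if no such cycle exists. Then d is an extended metric on the edge set of G: d(e,f) = 0 if and only if e = f, d(e,f) = d(f,e) for all edges e, f, and d(e,g) ≤ d(e,f) + d(f,g) for all edges e, f, g. -/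
open scoped Classical

/-- The rerouting distance between two edges of `G`: `0` if the edges are
equal, and otherwise the minimum length of a cycle of `G` containing both
edges (with value `∞` if no such cycle exists, since `sInf ∅ = ⊤` in `ℕ∞`). -/
noncomputable def reroutingDist {V : Type*} (G : SimpleGraph V) (e f : Sym2 V) : ℕ∞ :=
  if e = f then 0
  else sInf {L : ℕ∞ | ∃ (u : V) (c : G.Walk u u),
    c.IsCycle ∧ e ∈ c.edges ∧ f ∈ c.edges ∧ (c.length : ℕ∞) = L}

namespace RerouteAux
open SimpleGraph SimpleGraph.Walk
variable {V : Type*} {G : SimpleGraph V}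

/-- A closed path is nil. -/
lemma closed_path_nil {a : V} {p : G.Walk a a} (hp : p.IsPath) : p.Nil := by
  cases p with
  | nil => exact Walk.Nil.nil
  | cons h q =>
    rw [Walk.cons_isPath_iff] at hp
    exact absurd q.end_mem_support hp.2

lemma ne_of_isPath_not_nil {a b : V} {p : G.Walk a b} (hp : p.IsPath) (h : ¬ p.Nil) :
    a ≠ b := by
  rintro rfl; exact h (closed_path_nil hp)

lemma end_mem_support_tail {a b : V} {p : G.Walk a b} (h : ¬ p.Nil) :
    b ∈ p.support.tail := by
  rw [Walk.not_nil_iff] at h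
  obtain ⟨u, h, q, rfl⟩ := h
  simpa using q.end_mem_support

/-- first edge of a nodup-support walk incident to the start vertex. -/
lemma exists_eq_cons_of_mem_edges {a b y : V} {p : G.Walk a b}
    (hp : p.support.Nodup) (hf : s(a, y) ∈ p.edges) :
    ∃ (h : G.Adj a y) (r : G.Walk y b), p = Walk.cons h r := by
  cases p with
  | nil => simp at hf
  | @cons _ w _ h r =>
    rw [Walk.edges_cons, List.mem_cons] at hf
    rcases hf with hf | hf
    · rw [Sym2.eq_iff] at hf
      rcases hf with ⟨-, rfl⟩ | ⟨h1, -⟩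
      · exact ⟨h, r, rfl⟩
      · exact absurd h1 h.ne
    · rw [Walk.support_cons, List.nodup_cons] at hp
      exact absurd (r.fst_mem_support_of_mem_edges hf) hp.1

/-- every edge of a nodup walk has an endpoint different from the final vertex. -/
lemma exists_endpoint_ne_end {a b : V} {p : G.Walk a b} (hp : p.support.Nodup)
    {ed : Sym2 V} (hed : ed ∈ p.edges) :
    ∃ z, z ∈ p.support ∧ z ≠ b ∧ z ∈ ed := by
  induction p with
  | nil => simp at hed
  | @cons u w b h r ih =>
    rw [Walk.support_cons, List.nodup_cons] at hp
    rw [Walk.edges_cons, List.mem_cons] at hed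
    rcases hed with rfl | hed
    · refine ⟨u, by simp, ?_, by simp⟩
      rintro rfl; exact hp.1 r.end_mem_support
    · obtain ⟨z, hz1, hz2, hz3⟩ := ih hp.2 hed
      exact ⟨z, by simp [hz1], hz2, hz3⟩

/-- scan a walk until the first vertex satisfying `S`. -/
lemma exists_prefix_until {a b : V} (S : V → Prop) (w : G.Walk a b)
    (hz : ∃ z ∈ w.support, S z) :
    ∃ (c : V) (w1 : G.Walk a c) (w2 : G.Walk c b),
      w = w1.append w2 ∧ S c ∧ ∀ z ∈ w1.support, z ≠ c → ¬ S z := by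
  induction w with
  | nil =>
    refine ⟨_, Walk.nil, Walk.nil, rfl, ?_, by simp⟩
    simpa using hz
  | @cons u v b h r ih =>
    by_cases hSu : S u
    · exact ⟨u, Walk.nil, Walk.cons h r, rfl, hSu, by simp⟩
    · have hz' : ∃ z ∈ r.support, S z := by
        obtain ⟨z, hz1, hz2⟩ := hz
        rw [Walk.support_cons, List.mem_cons] at hz1
        rcases hz1 with rfl | hz1
        · exact absurd hz2 hSu
        · exact ⟨z, hz1, hz2⟩
      obtain ⟨c, w1, w2, rfl, hc, hprop⟩ := ih hz'
      refine ⟨c, Walk.cons h w1, w2, by rw [Walk.cons_append], hc, ?_⟩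
      intro z hz1 hz2
      rw [Walk.support_cons, List.mem_cons] at hz1
      rcases hz1 with rfl | hz1
      · exact hSu
      · exact hprop z hz1 hz2

/-- gluing two internally-disjoint paths into a cycle. -/
lemma glue_isCycle {a b : V} {p : G.Walk a b} {q : G.Walk b a}
    (hp : p.IsPath) (hq : q.IsPath) (hab : a ≠ b)
    (hedge : ∀ ed ∈ p.edges, ed ∉ q.edges)
    (hsupp : ∀ z ∈ p.support, z ∈ q.support → z = a ∨ z = b) :
    (p.append q).IsCycle := by
  have hpn : ¬ p.Nil := fun hn => hab (by
    have := Walk.nil_iff_length_eq.mp hn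
    exact Walk.eq_of_length_eq_zero this)
  have hqn : ¬ q.Nil := fun hn => hab (by
    have := Walk.nil_iff_length_eq.mp hn
    exact (Walk.eq_of_length_eq_zero this).symm)
  refine ⟨⟨⟨?_⟩, ?_⟩, ?_⟩
  · -- edges nodup
    rw [Walk.edges_append, List.nodup_append]
    exact ⟨hp.isTrail.edges_nodup, hq.isTrail.edges_nodup, fun ed hd ed' hd' heq => hedge ed hd (heq ▸ hd')⟩
  · -- not nil
    intro hnil
    have : (p.append q).length = 0 := by rw [hnil]; rfl
    rw [Walk.length_append] at this
    exact hab (Walk.eq_of_length_eq_zero (p := p) (by omega))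
  · -- support tail nodup
    rw [Walk.tail_support_append, List.nodup_append]
    refine ⟨?_, ?_, ?_⟩
    · have := hp.support_nodup
      rw [p.support_eq_cons] at this
      exact this.of_cons
    · have := hq.support_nodup
      rw [q.support_eq_cons] at this
      exact this.of_cons
    · intro z hz z' hz' heq
      subst heq
      have hz1 : z ∈ p.support := List.mem_of_mem_tail hz
      have hz2 : z ∈ q.support := List.mem_of_mem_tail hz'
      rcases hsupp z hz1 hz2 with rfl | rfl
      · have := hp.support_nodup
        rw [p.support_eq_cons] at this
        exact this.notMem hz
      · have := hq.support_nodup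
        rw [q.support_eq_cons] at this
        exact this.notMem hz'

/-- splitting a cycle at two of its vertices. -/
lemma cycle_split {w0 a b : V} {c : G.Walk w0 w0} (hc : c.IsCycle)
    (ha : a ∈ c.support) (hb : b ∈ c.support) (hab : a ≠ b) :
    ∃ (D1 : G.Walk a b) (D2 : G.Walk b a), D1.IsPath ∧ D2.IsPath ∧
      D1.length + D2.length = c.length ∧
      (∀ ed ∈ D1.edges, ed ∈ c.edges) ∧ (∀ ed ∈ D2.edges, ed ∈ c.edges) ∧
      (∀ ed ∈ c.edges, ed ∈ D1.edges ∨ ed ∈ D2.edges) ∧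
      (∀ z ∈ D1.support, z ∈ c.support) ∧ (∀ z ∈ D2.support, z ∈ c.support) := by
  classical
  have hcn : ¬ c.Nil := by
    intro hn
    have := Walk.nil_iff_length_eq.mp hn
    have h3 := hc.three_le_length
    omega
  set cr := c.rotate a ha with hcr_def
  have hcr : cr.IsCycle := hc.rotate ha
  have hsupp_rot : cr.support.tail ~r c.support.tail := c.support_rotate a ha
  have hmem_rot : ∀ z, z ∈ cr.support ↔ z ∈ c.support := by
    intro z
    constructor
    · intro hz
      rw [cr.support_eq_cons, List.mem_cons] at hz
      rcases hz with rfl | hz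
      · exact ha
      · exact List.mem_of_mem_tail (hsupp_rot.perm.mem_iff.mp hz)
    · intro hz
      rw [c.support_eq_cons, List.mem_cons] at hz
      have hz' : z ∈ c.support.tail := by
        rcases hz with rfl | hz
        · exact end_mem_support_tail hcn
        · exact hz
      exact List.mem_of_mem_tail (hsupp_rot.perm.mem_iff.mpr hz')
  have hedge_rot : ∀ ed, ed ∈ cr.edges ↔ ed ∈ c.edges := fun ed =>
    (c.rotate_edges a ha).perm.mem_iff
  have hlen_rot : cr.length = c.length := by
    have h1 := congrArg Walk.length (c.take_spec ha)
    rw [Walk.length_append] at h1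
    rw [hcr_def, Walk.rotate, Walk.length_append]
    omega
  have hb' : b ∈ cr.support := (hmem_rot b).mpr hb
  set D1 := cr.takeUntil b hb' with hD1
  set D2 := cr.dropUntil b hb' with hD2
  have hspec : cr = D1.append D2 := (cr.take_spec hb').symm
  -- supports
  have hsupp_eq : cr.support = D1.support ++ D2.support.tail := by
    rw [hspec, Walk.support_append]
  have htail_eq : cr.support.tail = D1.support.tail ++ D2.support.tail := by
    rw [hsupp_eq, D1.support_eq_cons]
    simp
  have hnd : (D1.support.tail ++ D2.support.tail).Nodup := htail_eq ▸ hcr.support_nodup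
  rw [List.nodup_append] at hnd
  have hD1nil : ¬ D1.Nil := fun hn => hab (Walk.eq_of_length_eq_zero (Walk.nil_iff_length_eq.mp hn))
  have hD2nil : ¬ D2.Nil := fun hn => hab (Walk.eq_of_length_eq_zero (Walk.nil_iff_length_eq.mp hn)).symm
  have hD1path : D1.IsPath := by
    rw [Walk.isPath_def, D1.support_eq_cons, List.nodup_cons]
    refine ⟨?_, hnd.1⟩
    intro hmem
    exact hnd.2.2 _ hmem _ (end_mem_support_tail hD2nil) rfl
  have hD2path : D2.IsPath := by
    rw [Walk.isPath_def, D2.support_eq_cons, List.nodup_cons]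
    refine ⟨?_, hnd.2.1⟩
    intro hmem
    exact hnd.2.2 _ (end_mem_support_tail hD1nil) _ hmem rfl
  have hlen : D1.length + D2.length = c.length := by
    have := congrArg Walk.length hspec
    rw [Walk.length_append] at this
    omega
  have hedges : cr.edges = D1.edges ++ D2.edges := by
    rw [hspec, Walk.edges_append]
  refine ⟨D1, D2, hD1path, hD2path, hlen, ?_, ?_, ?_, ?_, ?_⟩
  · intro ed hd
    rw [← hedge_rot, hedges, List.mem_append]; exact Or.inl hd
  · intro ed hd
    rw [← hedge_rot, hedges, List.mem_append]; exact Or.inr hd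
  · intro ed hd
    rw [← hedge_rot, hedges, List.mem_append] at hd; exact hd
  · intro z hz
    rw [← hmem_rot]
    exact cr.support_takeUntil_subset hb' hz
  · intro z hz
    rw [← hmem_rot]
    exact cr.support_dropUntil_subset hb' hz

/-- decompose a cycle at one of its edges into that edge plus a path. -/
lemma cycle_decomp_at_edge {w0 x y : V} {c : G.Walk w0 w0} (hc : c.IsCycle)
    (hf : s(x, y) ∈ c.edges) :
    ∃ q : G.Walk y x, q.IsPath ∧ s(x, y) ∉ q.edges ∧ q.length + 1 = c.length ∧
      (∀ ed, ed ∈ c.edges ↔ ed = s(x, y) ∨ ed ∈ q.edges) := by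
  classical
  have hx : x ∈ c.support := c.fst_mem_support_of_mem_edges hf
  set cr := c.rotate x hx with hcr_def
  have hcr : cr.IsCycle := hc.rotate hx
  have hedge_rot : ∀ ed, ed ∈ cr.edges ↔ ed ∈ c.edges := fun ed =>
    (c.rotate_edges x hx).perm.mem_iff
  have hlen_rot : cr.length = c.length := by
    have h1 := congrArg Walk.length (c.take_spec hx)
    rw [Walk.length_append] at h1
    rw [hcr_def, Walk.rotate, Walk.length_append]
    omega
  have hf' : s(x, y) ∈ cr.edges := (hedge_rot _).mpr hf
  -- it suffices to do it for cr
  suffices h : ∃ q : G.Walk y x, q.IsPath ∧ s(x, y) ∉ q.edges ∧ q.length + 1 = cr.length ∧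
      (∀ ed, ed ∈ cr.edges ↔ ed = s(x, y) ∨ ed ∈ q.edges) by
    obtain ⟨q, h1, h2, h3, h4⟩ := h
    exact ⟨q, h1, h2, by omega, fun ed => (hedge_rot ed).symm.trans (h4 ed)⟩
  have hcrn : ¬ cr.Nil := by
    intro hn
    have := Walk.nil_iff_length_eq.mp hn
    have h3 := hcr.three_le_length
    omega
  rw [Walk.not_nil_iff] at hcrn
  obtain ⟨z, hadj, q, hq⟩ := hcrn
  have hcyc := hq ▸ hcr
  rw [Walk.cons_isCycle_iff] at hcyc
  obtain ⟨hqpath, hxz⟩ := hcyc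
  have hf'' : s(x, y) = s(x, z) ∨ s(x, y) ∈ q.edges := by
    have := hq ▸ hf'
    rw [Walk.edges_cons, List.mem_cons] at this
    exact this
  rcases hf'' with hcase | hcase
  · -- the rotated cycle starts with the edge
    have hyz : y = z := by
      rw [Sym2.eq_iff] at hcase
      rcases hcase with ⟨-, h1⟩ | ⟨h1, -⟩
      · exact h1
      · exact absurd h1 hadj.ne
    subst hyz
    refine ⟨q, hqpath, by rwa [← hcase] at hxz, ?_, ?_⟩
    · rw [hq]; simp
    · intro ed
      rw [hq, Walk.edges_cons, List.mem_cons, hcase]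
  · -- the edge is the last edge of the rotated cycle
    obtain ⟨hxy, r, hr⟩ := exists_eq_cons_of_mem_edges
      (by rw [Walk.support_reverse]; exact List.nodup_reverse.mpr hqpath.support_nodup)
      (by rw [Walk.edges_reverse, List.mem_reverse]; exact hcase)
    -- q.reverse = cons hxy r  with r : Walk y z
    have hq_eq : q = (Walk.cons hxy r).reverse := by
      rw [← hr, Walk.reverse_reverse]
    have hq_edges : q.edges = r.edges.reverse ++ [s(x, y)] := by
      rw [hq_eq, Walk.edges_reverse, Walk.edges_cons]
      simp [Sym2.eq_swap]
    have hrpath : (Walk.cons hxy r).IsPath := by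
      have h1 : q.reverse.IsPath := hqpath.reverse
      rwa [hr] at h1
    rw [Walk.cons_isPath_iff] at hrpath
    refine ⟨(Walk.cons hadj r.reverse).reverse, ?_, ?_, ?_, ?_⟩
    · rw [Walk.isPath_reverse_iff, Walk.cons_isPath_iff]
      refine ⟨hrpath.1.reverse, ?_⟩
      rw [Walk.support_reverse, List.mem_reverse]
      exact hrpath.2
    · -- s(x,y) not in edges
      rw [Walk.edges_reverse, List.mem_reverse, Walk.edges_cons, List.mem_cons]
      rintro (h1 | h1)
      · rw [h1] at hcase
        exact hxz hcase
      · rw [Walk.edges_reverse, List.mem_reverse] at h1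
        -- s(x,y) ∈ r.edges, but q.edges nodup and s(x,y) appears as last
        have hnd := hqpath.isTrail.edges_nodup
        rw [hq_edges] at hnd
        rw [List.nodup_append] at hnd
        exact hnd.2.2 _ (List.mem_reverse.mpr h1) (s(x, y)) (by simp) rfl
    · -- length
      have h1 : q.length = r.length + 1 := by
        rw [hq_eq, Walk.length_reverse, Walk.length_cons]
      rw [Walk.length_reverse, Walk.length_cons, Walk.length_reverse, hq, Walk.length_cons]
      omega
    · intro ed
      rw [hq, Walk.edges_cons, List.mem_cons, hq_edges, Walk.edges_reverse, Walk.edges_cons]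
      simp only [List.mem_append, List.mem_reverse, List.mem_cons, List.mem_singleton,
        List.not_mem_nil, or_false, Walk.edges_reverse]
      constructor
      · rintro (rfl | h1 | rfl)
        · exact Or.inr (Or.inl rfl)
        · exact Or.inr (Or.inr h1)
        · exact Or.inl rfl
      · rintro (rfl | rfl | h1)
        · exact Or.inr (Or.inr rfl)
        · exact Or.inl rfl
        · exact Or.inr (Or.inl h1)

open SimpleGraph SimpleGraph.Walk
variable {V : Type*} {G : SimpleGraph V}

lemma mem_support_of_mem_edges_of_mem {a b : V} {D : G.Walk a b} {ed : Sym2 V} {z : V}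
    (hed : ed ∈ D.edges) (hz : z ∈ ed) : z ∈ D.support := by
  obtain ⟨w, rfl⟩ := Sym2.mem_iff_exists.mp hz
  exact D.fst_mem_support_of_mem_edges hed

/-- The key combinatorial lemma: from a cycle through `e, f` and a cycle
through `f, g`, build a cycle through `e, g` of length at most the sum. -/
lemma key_cycle {u1 u2 : V} {c1 : G.Walk u1 u1} {c2 : G.Walk u2 u2}
    (hc1 : c1.IsCycle) (hc2 : c2.IsCycle) {e f g : Sym2 V}
    (he1 : e ∈ c1.edges) (hf1 : f ∈ c1.edges) (hf2 : f ∈ c2.edges) (hg2 : g ∈ c2.edges)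
    (hef : e ≠ f) :
    ∃ (w : V) (c : G.Walk w w), c.IsCycle ∧ e ∈ c.edges ∧ g ∈ c.edges ∧
      c.length ≤ c1.length + c2.length := by
  classical
  induction e using Sym2.ind with | _ u v => ?_
  induction f using Sym2.ind with | _ x y => ?_
  by_cases hg1 : g ∈ c1.edges
  · exact ⟨u1, c1, hc1, he1, hg1, Nat.le_add_right _ _⟩
  by_cases he2 : s(u, v) ∈ c2.edges
  · exact ⟨u2, c2, hc2, he2, hg2, Nat.le_add_left _ _⟩
  have huv : G.Adj u v := (SimpleGraph.mem_edgeSet G).mp (c1.edges_subset_edgeSet he1)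
  obtain ⟨p, hppath, hep, hplen1, hpiff⟩ := cycle_decomp_at_edge hc1 he1
  have hfp : s(x, y) ∈ p.edges := ((hpiff s(x, y)).mp hf1).resolve_left fun h => hef h.symm
  have hx_p : x ∈ p.support := p.fst_mem_support_of_mem_edges hfp
  have hy_p : y ∈ p.support := p.snd_mem_support_of_mem_edges hfp
  have hxS : x ∈ c2.support := c2.fst_mem_support_of_mem_edges hf2
  have hyS : y ∈ c2.support := c2.snd_mem_support_of_mem_edges hf2
  have hxy : x ≠ y := ((SimpleGraph.mem_edgeSet G).mp (c2.edges_subset_edgeSet hf2)).ne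
  obtain ⟨c₁', A, R, hpAR, hc1S, hAprop⟩ :=
    exists_prefix_until (fun z => z ∈ c2.support) p ⟨x, hx_p, hxS⟩
  have hpar : (A.append R).IsPath := hpAR ▸ hppath
  have hApath : A.IsPath := Walk.IsPath.of_append_left hpar
  have hRpath : R.IsPath := Walk.IsPath.of_append_right hpar
  obtain ⟨c₂', B, R2, hRrev, hc2S, hBprop⟩ :=
    exists_prefix_until (fun z => z ∈ c2.support) R.reverse ⟨c₁', R.reverse.end_mem_support, hc1S⟩
  have hrrev : (B.append R2).IsPath := hRrev ▸ hRpath.reverse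
  have hBpath : B.IsPath := Walk.IsPath.of_append_left hrrev
  have hR2path : R2.IsPath := Walk.IsPath.of_append_right hrrev
  by_cases hR2nil : R2.Nil
  · -- degenerate: only one vertex of `c2` on `p`, contradiction with x ≠ y
    exfalso
    have hcc : c₂' = c₁' :=
      Walk.eq_of_length_eq_zero (Walk.nil_iff_length_eq.mp hR2nil)
    subst hcc
    rw [hR2nil.eq_nil, Walk.append_nil] at hRrev
    have hmem : ∀ z, z ∈ p.support → z ∈ c2.support → z = c₂' := by
      intro z hz hzS
      rw [hpAR, Walk.mem_support_append_iff] at hz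
      rcases hz with hz | hz
      · by_contra hne; exact hAprop z hz hne hzS
      · have hz' : z ∈ R.reverse.support := by
          rw [Walk.support_reverse, List.mem_reverse]; exact hz
        rw [hRrev] at hz'
        by_contra hne; exact hBprop z hz' hne hzS
    exact hxy ((hmem x hx_p hxS).trans (hmem y hy_p hyS).symm)
  · have hR2len : 1 ≤ R2.length := by
      have := Walk.not_nil_iff_lt_length.mp hR2nil; omega
    have hne12 : c₂' ≠ c₁' := ne_of_isPath_not_nil hR2path hR2nil
    have hc1tail : c₁' ∈ R2.support.tail := end_mem_support_tail hR2nil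
    have hRrevsup : R.reverse.support = B.support ++ R2.support.tail := by
      rw [hRrev, Walk.support_append]
    have hRrevnodup : R.reverse.support.Nodup := hRpath.reverse.support_nodup
    have hc1B : c₁' ∉ B.support := by
      rw [hRrevsup, List.nodup_append] at hRrevnodup
      exact fun hmem => hRrevnodup.2.2 _ hmem _ hc1tail rfl
    set P := B.reverse.append (Walk.cons huv A) with hP
    have hPsup : P.support = B.reverse.support ++ A.support := by
      rw [hP, Walk.support_append, Walk.support_cons, List.tail_cons]
    have hBsubR : ∀ z, z ∈ B.support → z ∈ R.support := by
      intro z hz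
      have hz' : z ∈ R.reverse.support := by
        rw [hRrevsup]; exact List.mem_append_left _ hz
      rwa [Walk.support_reverse, List.mem_reverse] at hz'
    have hAR_disj : ∀ z, z ∈ A.support → z ∈ R.support.tail → False := by
      have hnd : p.support.Nodup := hppath.support_nodup
      rw [hpAR, Walk.support_append, List.nodup_append] at hnd
      exact fun z hz hz' => hnd.2.2 _ hz _ hz' rfl
    have hABdisj : ∀ z, z ∈ B.support → z ∈ A.support → False := by
      intro z hzB hzA
      have hzR := hBsubR z hzB
      rw [R.support_eq_cons, List.mem_cons] at hzR
      rcases hzR with rfl | hzR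
      · exact hc1B hzB
      · exact hAR_disj z hzA hzR
    have hPpath : P.IsPath := by
      rw [Walk.isPath_def, hPsup, List.nodup_append]
      refine ⟨?_, hApath.support_nodup, ?_⟩
      · rw [Walk.support_reverse]; exact List.nodup_reverse.mpr hBpath.support_nodup
      · intro z hz z' hz' heq
        rw [Walk.support_reverse, List.mem_reverse] at hz
        exact hABdisj z hz (heq ▸ hz')
    have hePmem : s(u, v) ∈ P.edges := by
      rw [hP, Walk.edges_append, Walk.edges_cons, List.mem_append, List.mem_cons]
      exact Or.inr (Or.inl rfl)
    have hPlen : P.length = B.length + (A.length + 1) := by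
      rw [hP, Walk.length_append, Walk.length_cons, Walk.length_reverse]
    have hlen_bound : A.length + B.length + 1 ≤ p.length := by
      have h1 : p.length = A.length + R.length := by rw [hpAR, Walk.length_append]
      have h2 : R.length = B.length + R2.length := by
        have h3 := congrArg Walk.length hRrev
        rw [Walk.length_reverse, Walk.length_append] at h3
        omega
      omega
    obtain ⟨D1, D2, hD1p, hD2p, hDlen, hD1sub, hD2sub, hDcov, hD1supp, hD2supp⟩ :=
      cycle_split hc2 hc1S hc2S hne12.symm
    obtain ⟨D, hDp, hgD, hDsub, hDsupp, hDlen'⟩ :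
        ∃ D : G.Walk c₁' c₂', D.IsPath ∧ g ∈ D.edges ∧ (∀ ed ∈ D.edges, ed ∈ c2.edges) ∧
          (∀ z ∈ D.support, z ∈ c2.support) ∧ D.length ≤ c2.length := by
      rcases hDcov g hg2 with hgD | hgD
      · exact ⟨D1, hD1p, hgD, hD1sub, hD1supp, by omega⟩
      · refine ⟨D2.reverse, hD2p.reverse, ?_, ?_, ?_, ?_⟩
        · rwa [Walk.edges_reverse, List.mem_reverse]
        · intro ed hed
          rw [Walk.edges_reverse, List.mem_reverse] at hed
          exact hD2sub ed hed
        · intro z hz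
          rw [Walk.support_reverse, List.mem_reverse] at hz
          exact hD2supp z hz
        · rw [Walk.length_reverse]; omega
    have hedge : ∀ ed ∈ P.edges, ed ∉ D.edges := by
      intro ed hed hedD
      have hedc2 := hDsub ed hedD
      rw [hP, Walk.edges_append, Walk.edges_cons, List.mem_append, List.mem_cons] at hed
      rcases hed with hed | hed | hed
      · rw [Walk.edges_reverse, List.mem_reverse] at hed
        obtain ⟨z, hz1, hz2, hz3⟩ := exists_endpoint_ne_end hBpath.support_nodup hed
        exact hBprop z hz1 hz2 (hDsupp z (mem_support_of_mem_edges_of_mem hedD hz3))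
      · exact he2 (hed ▸ hedc2)
      · obtain ⟨z, hz1, hz2, hz3⟩ := exists_endpoint_ne_end hApath.support_nodup hed
        exact hAprop z hz1 hz2 (hDsupp z (mem_support_of_mem_edges_of_mem hedD hz3))
    have hsupp : ∀ z ∈ P.support, z ∈ D.support → z = c₂' ∨ z = c₁' := by
      intro z hz hzD
      have hzS : z ∈ c2.support := hDsupp z hzD
      rw [hPsup, List.mem_append] at hz
      rcases hz with hz | hz
      · rw [Walk.support_reverse, List.mem_reverse] at hz
        left; by_contra hne; exact hBprop z hz hne hzS
      · right; by_contra hne; exact hAprop z hz hne hzS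
    have hC := glue_isCycle hPpath hDp hne12 hedge hsupp
    refine ⟨c₂', P.append D, hC, ?_, ?_, ?_⟩
    · rw [Walk.edges_append, List.mem_append]; exact Or.inl hePmem
    · rw [Walk.edges_append, List.mem_append]; exact Or.inr hgD
    · rw [Walk.length_append]
      omega

end RerouteAux

/-- **The rerouting distance is an extended metric on the edge set.**  For a
finite simple graph `G` and edges `e`, `f`, `g` of `G`: the rerouting distance
vanishes iff the edges coincide, it is symmetric, and it satisfies the
triangle inequality. -/
theorem reroutingDist_is_extended_metric
    {V : Type*} [Fintype V] (G : SimpleGraph V) :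
    (∀ e ∈ G.edgeSet, ∀ f ∈ G.edgeSet, (reroutingDist G e f = 0 ↔ e = f)) ∧
    (∀ e ∈ G.edgeSet, ∀ f ∈ G.edgeSet, reroutingDist G e f = reroutingDist G f e) ∧
    (∀ e ∈ G.edgeSet, ∀ f ∈ G.edgeSet, ∀ g ∈ G.edgeSet,
      reroutingDist G e g ≤ reroutingDist G e f + reroutingDist G f g) := by
  classical
  have h00 : ∀ a : Sym2 V, reroutingDist G a a = 0 := fun a => by
    rw [reroutingDist, if_pos rfl]
  have hfin : ∀ e f : Sym2 V, {L : ℕ∞ | ∃ (u : V) (c : G.Walk u u),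
      c.IsCycle ∧ e ∈ c.edges ∧ f ∈ c.edges ∧ (c.length : ℕ∞) = L}.Finite := by
    intro e f
    refine ((Set.finite_Iic (Fintype.card V)).image (fun n : ℕ => (n : ℕ∞))).subset ?_
    rintro L ⟨u, c, hc, -, -, rfl⟩
    refine ⟨c.length, ?_, rfl⟩
    have h1 := hc.support_nodup.length_le_card
    have h2 : c.support.tail.length = c.length := by
      rw [List.length_tail, c.length_support]; omega
    rw [h2] at h1
    exact h1
  refine ⟨?_, ?_, ?_⟩
  · intro e _ f _
    constructor
    · intro h0
      by_contra hne
      rw [reroutingDist, if_neg hne] at h0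
      have h3 : (3 : ℕ∞) ≤ sInf {L : ℕ∞ | ∃ (u : V) (c : G.Walk u u),
          c.IsCycle ∧ e ∈ c.edges ∧ f ∈ c.edges ∧ (c.length : ℕ∞) = L} := by
        refine le_sInf ?_
        rintro L ⟨u, c, hc, -, -, rfl⟩
        exact_mod_cast hc.three_le_length
      rw [h0] at h3
      simp at h3
    · rintro rfl
      exact h00 e
  · intro e _ f _
    by_cases h : e = f
    · subst h; rfl
    · rw [reroutingDist, reroutingDist, if_neg h, if_neg (Ne.symm h)]
      congr 1
      ext L
      constructor <;> rintro ⟨u, c, hc, h1, h2, h3⟩ <;> exact ⟨u, c, hc, h2, h1, h3⟩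
  · intro e _ f _ g _
    by_cases hef : e = f
    · subst hef; rw [h00, zero_add]
    by_cases hfg : f = g
    · subst hfg; rw [h00, add_zero]
    by_cases heg : e = g
    · subst heg; rw [h00]; exact zero_le
    rw [reroutingDist, if_neg heg, reroutingDist, if_neg hef, reroutingDist, if_neg hfg]
    by_cases htop1 : sInf {L : ℕ∞ | ∃ (u : V) (c : G.Walk u u),
        c.IsCycle ∧ e ∈ c.edges ∧ f ∈ c.edges ∧ (c.length : ℕ∞) = L} = ⊤
    · rw [htop1, top_add]; exact le_top
    by_cases htop2 : sInf {L : ℕ∞ | ∃ (u : V) (c : G.Walk u u),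
        c.IsCycle ∧ f ∈ c.edges ∧ g ∈ c.edges ∧ (c.length : ℕ∞) = L} = ⊤
    · rw [htop2, add_top]; exact le_top
    have hne1 : {L : ℕ∞ | ∃ (u : V) (c : G.Walk u u),
        c.IsCycle ∧ e ∈ c.edges ∧ f ∈ c.edges ∧ (c.length : ℕ∞) = L}.Nonempty := by
      by_contra h
      rw [Set.not_nonempty_iff_eq_empty] at h
      rw [h, sInf_empty] at htop1
      exact htop1 rfl
    have hne2 : {L : ℕ∞ | ∃ (u : V) (c : G.Walk u u),
        c.IsCycle ∧ f ∈ c.edges ∧ g ∈ c.edges ∧ (c.length : ℕ∞) = L}.Nonempty := by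
      by_contra h
      rw [Set.not_nonempty_iff_eq_empty] at h
      rw [h, sInf_empty] at htop2
      exact htop2 rfl
    obtain ⟨u1, c1, hc1, he1, hf1, hL1⟩ := Set.Nonempty.csInf_mem hne1 (hfin e f)
    obtain ⟨u2, c2, hc2, hf2, hg2, hL2⟩ := Set.Nonempty.csInf_mem hne2 (hfin f g)
    obtain ⟨w, c, hc, hec, hgc, hlen⟩ :=
      RerouteAux.key_cycle hc1 hc2 he1 hf1 hf2 hg2 hef
    calc sInf {L : ℕ∞ | ∃ (u : V) (c : G.Walk u u),
        c.IsCycle ∧ e ∈ c.edges ∧ g ∈ c.edges ∧ (c.length : ℕ∞) = L}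
        ≤ (c.length : ℕ∞) := sInf_le ⟨w, c, hc, hec, hgc, rfl⟩
      _ ≤ ((c1.length + c2.length : ℕ) : ℕ∞) := by exact_mod_cast hlen
      _ = (c1.length : ℕ∞) + (c2.length : ℕ∞) := by push_cast; rfl
      _ = _ := by rw [hL1, hL2]
end

section
/- Let G1 and G2 be disjoint finite connected simple graphs with positive edge weights, let x1 ≠ x2 be vertices of G1 and y1 ≠ y2 be vertices of G2, and let G be the graph obtained from their disjoint union by adding four edges: {x1,y1} with weight b1, {x2,y2} with weight b2, {x1,y2} with weight r1, and {x2,y1} with weight r2. Suppose b1 · b2 = r1 · r2. Then for any edge k = {r,s} with both endpoints in G1 such that G − k is connected, and any balanced injection vector P, the failure of k causes no flow change on any edge of G2: if F are the flows in G with injection P and F' the flows in G − k with the same injection P, then F'_{mn} = F_{mn} for every edge {m,n} of G2. -/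
open scoped Classical

/-- Row expansion of the weighted Laplacian applied to a vector. -/
lemma wLap_row {V : Type*} [Fintype V] [DecidableEq V]
    (G : SimpleGraph V) (w : Sym2 V → ℝ) (f : V → ℝ) (v : V) :
    Matrix.mulVec (wLap G w) f v
      = ∑ x, (if G.Adj v x then w s(v, x) * (f v - f x) else 0) := by
  unfold Matrix.mulVec dotProduct wLap
  simp only [Matrix.of_apply]
  have h : ∀ u : V,
      (if v = u then ∑ x ∈ Finset.univ.filter (fun x => G.Adj v x), w s(v, x)
        else if G.Adj v u then -w s(v, u) else 0) * f u
      = (if v = u then (∑ x ∈ Finset.univ.filter (fun x => G.Adj v x), w s(v, x)) * f v else 0)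
        + (if G.Adj v u then -(w s(v, u) * f u) else 0) := by
    intro u
    by_cases h1 : v = u
    · subst h1
      simp
    · simp only [h1, if_false]
      split_ifs <;> ring
  rw [Finset.sum_congr rfl (fun u _ => h u), Finset.sum_add_distrib]
  rw [Finset.sum_ite_eq Finset.univ v
    (fun _ => (∑ x ∈ Finset.univ.filter (fun x => G.Adj v x), w s(v, x)) * f v)]
  simp only [Finset.mem_univ, if_true]
  rw [Finset.sum_mul]
  rw [← Finset.sum_filter (fun x => G.Adj v x) (fun u => -(w s(v, u) * f u))]
  rw [← Finset.sum_add_distrib]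
  rw [← Finset.sum_filter]
  apply Finset.sum_congr rfl
  intro x hx
  ring

/-- **A balanced four-edge connection is a network isolator.**  Let `G1`, `G2`
be disjoint finite connected simple graphs with positive edge weights, let
`x1 ≠ x2` be vertices of `G1` and `y1 ≠ y2` vertices of `G2`, and let `G` be
obtained from their disjoint union by adding the four edges `{x1,y1}` (weight
`b1`), `{x2,y2}` (weight `b2`), `{x1,y2}` (weight `r1`) and `{x2,y1}` (weight
`r2`), with `b1 * b2 = r1 * r2`.  Then for any edge `k = {kr,ks}` inside `G1`
whose removal leaves `G` connected, and any balanced injection `P`, the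
failure of `k` causes no flow change on any edge of `G2`. -/
theorem balanced_four_edge_isolator
    {V1 V2 : Type*} [Fintype V1] [Fintype V2] [DecidableEq V1] [DecidableEq V2]
    (G1 : SimpleGraph V1) (G2 : SimpleGraph V2)
    (hG1 : G1.Connected) (hG2 : G2.Connected)
    (x1 x2 : V1) (hx : x1 ≠ x2) (y1 y2 : V2) (hy : y1 ≠ y2)
    (G : SimpleGraph (V1 ⊕ V2))
    (hGll : ∀ a b : V1, G.Adj (Sum.inl a) (Sum.inl b) ↔ G1.Adj a b)
    (hGrr : ∀ a b : V2, G.Adj (Sum.inr a) (Sum.inr b) ↔ G2.Adj a b)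
    (hGlr : ∀ (a : V1) (b : V2), G.Adj (Sum.inl a) (Sum.inr b) ↔
      ((a = x1 ∧ b = y1) ∨ (a = x2 ∧ b = y2) ∨ (a = x1 ∧ b = y2) ∨ (a = x2 ∧ b = y1)))
    (w : Sym2 (V1 ⊕ V2) → ℝ) (hw : ∀ e ∈ G.edgeSet, 0 < w e)
    (b1 b2 r1 r2 : ℝ)
    (hb1 : w s(Sum.inl x1, Sum.inr y1) = b1)
    (hb2 : w s(Sum.inl x2, Sum.inr y2) = b2)
    (hr1 : w s(Sum.inl x1, Sum.inr y2) = r1)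
    (hr2 : w s(Sum.inl x2, Sum.inr y1) = r2)
    (hbal : b1 * b2 = r1 * r2)
    (kr ks : V1) (hk : G1.Adj kr ks)
    (hGk : (G.deleteEdges {s(Sum.inl kr, Sum.inl ks)}).Connected)
    (P : V1 ⊕ V2 → ℝ) (hP : ∑ u, P u = 0)
    (Vp : V1 ⊕ V2 → ℝ) (hVp : Matrix.mulVec (wLap G w) Vp = P)
    (Vp' : V1 ⊕ V2 → ℝ)
    (hVp' : Matrix.mulVec (wLap (G.deleteEdges {s(Sum.inl kr, Sum.inl ks)}) w) Vp' = P) :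
    ∀ m n : V2, G2.Adj m n →
      w s(Sum.inr m, Sum.inr n) * (Vp' (Sum.inr m) - Vp' (Sum.inr n)) =
        w s(Sum.inr m, Sum.inr n) * (Vp (Sum.inr m) - Vp (Sum.inr n)) := by
  classical
  intro m n hmn
  set G' := G.deleteEdges {s(Sum.inl kr, Sum.inl ks)} with hG'def
  set D : V1 ⊕ V2 → ℝ := fun u => Vp' u - Vp u with hDdef
  -- positivity of the four cross weights
  have hwpos : ∀ a b : V1 ⊕ V2, G.Adj a b → 0 < w s(a, b) := fun a b h =>
    hw _ ((SimpleGraph.mem_edgeSet G).mpr h)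
  have hadjb1 : G.Adj (Sum.inl x1) (Sum.inr y1) := (hGlr x1 y1).mpr (Or.inl ⟨rfl, rfl⟩)
  have hadjb2 : G.Adj (Sum.inl x2) (Sum.inr y2) :=
    (hGlr x2 y2).mpr (Or.inr (Or.inl ⟨rfl, rfl⟩))
  have hadjr1 : G.Adj (Sum.inl x1) (Sum.inr y2) :=
    (hGlr x1 y2).mpr (Or.inr (Or.inr (Or.inl ⟨rfl, rfl⟩)))
  have hadjr2 : G.Adj (Sum.inl x2) (Sum.inr y1) :=
    (hGlr x2 y1).mpr (Or.inr (Or.inr (Or.inr ⟨rfl, rfl⟩)))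
  have hb1pos : 0 < b1 := hb1 ▸ hwpos _ _ hadjb1
  have hb2pos : 0 < b2 := hb2 ▸ hwpos _ _ hadjb2
  have hr1pos : 0 < r1 := hr1 ▸ hwpos _ _ hadjr1
  have hr2pos : 0 < r2 := hr2 ▸ hwpos _ _ hadjr2
  have hbr : (0:ℝ) < b1 + r2 := by linarith
  have hrb : (0:ℝ) < r1 + b2 := by linarith
  set d : ℝ := (b1 * D (Sum.inl x1) + r2 * D (Sum.inl x2)) / (b1 + r2) with hddef
  have hd1 : b1 * D (Sum.inl x1) + r2 * D (Sum.inl x2) = (b1 + r2) * d := by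
    rw [hddef]; field_simp
  have hd2 : r1 * D (Sum.inl x1) + b2 * D (Sum.inl x2) = (r1 + b2) * d := by
    have hcanc : (r1 * D (Sum.inl x1) + b2 * D (Sum.inl x2)) * (b1 + r2)
        = ((r1 + b2) * d) * (b1 + r2) := by
      have h' : (r1 + b2) * d * (b1 + r2) = (r1 + b2) * ((b1 + r2) * d) := by ring
      rw [h', ← hd1]
      linear_combination (D (Sum.inl x2) - D (Sum.inl x1)) * hbal
    exact mul_right_cancel₀ (ne_of_gt hbr) hcanc
  -- rows of the Laplacian at `inr` vertices are unchanged by the edge deletion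
  have hne : ∀ (y : V2) (u : V1 ⊕ V2),
      s(Sum.inr y, u) ≠ s(Sum.inl kr, Sum.inl ks) := by
    intro y u h
    rw [Sym2.eq_iff] at h
    rcases h with ⟨h, -⟩ | ⟨h, -⟩ <;> exact Sum.inr_ne_inl h
  have hAdjrow : ∀ (y : V2) (u : V1 ⊕ V2),
      G'.Adj (Sum.inr y) u ↔ G.Adj (Sum.inr y) u := by
    intro y u
    rw [hG'def, SimpleGraph.deleteEdges_adj]
    simp [hne y u]
  have hLrow : ∀ (y : V2) (u : V1 ⊕ V2),
      wLap G' w (Sum.inr y) u = wLap G w (Sum.inr y) u := by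
    intro y u
    unfold wLap
    simp only [Matrix.of_apply]
    have hfil : Finset.univ.filter (fun x => G'.Adj (Sum.inr y) x)
        = Finset.univ.filter (fun x => G.Adj (Sum.inr y) x) :=
      Finset.filter_congr (fun x _ => by simp [hAdjrow y x])
    simp only [hAdjrow y]
  -- homogeneous Kirchhoff equations for `D` at every vertex of `V2`
  have hrowD : ∀ y : V2,
      ∑ x, (if G.Adj (Sum.inr y) x then w s(Sum.inr y, x) * (D (Sum.inr y) - D x) else 0)
        = 0 := by
    intro y
    rw [← wLap_row]
    have h1 : Matrix.mulVec (wLap G w) Vp (Sum.inr y) = P (Sum.inr y) := congrFun hVp _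
    have h2 : Matrix.mulVec (wLap G' w) Vp' (Sum.inr y) = P (Sum.inr y) := congrFun hVp' _
    have h3 : Matrix.mulVec (wLap G w) Vp' (Sum.inr y)
        = Matrix.mulVec (wLap G' w) Vp' (Sum.inr y) := by
      unfold Matrix.mulVec dotProduct
      exact Finset.sum_congr rfl fun u _ =>
        congrArg (fun t => t * Vp' u) (hLrow y u).symm
    have hDfun : D = Vp' - Vp := by funext u; simp [hDdef]
    rw [hDfun, Matrix.mulVec_sub]
    simp only [Pi.sub_apply]
    rw [h1, h3, h2, sub_self]
  -- split each row equation into its `V1` part and `V2` part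
  have hsplit : ∀ y : V2,
      (∑ a : V1, (if G.Adj (Sum.inr y) (Sum.inl a)
          then w s(Sum.inr y, Sum.inl a) * (D (Sum.inr y) - D (Sum.inl a)) else 0))
      + (∑ b : V2, (if G.Adj (Sum.inr y) (Sum.inr b)
          then w s(Sum.inr y, Sum.inr b) * (D (Sum.inr y) - D (Sum.inr b)) else 0)) = 0 := by
    intro y
    have h := hrowD y
    rw [Fintype.sum_sum_type] at h
    exact h
  -- evaluate the cross (V1) part
  have hcross : ∀ y : V2,
      (∑ a : V1, (if G.Adj (Sum.inr y) (Sum.inl a)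
          then w s(Sum.inr y, Sum.inl a) * (D (Sum.inr y) - D (Sum.inl a)) else 0))
      = (if y = y1 then (b1 + r2) * (D (Sum.inr y) - d) else 0)
        + (if y = y2 then (r1 + b2) * (D (Sum.inr y) - d) else 0) := by
    intro y
    have hcond : ∀ a : V1, G.Adj (Sum.inr y) (Sum.inl a) ↔
        ((a = x1 ∧ y = y1) ∨ (a = x2 ∧ y = y2) ∨ (a = x1 ∧ y = y2) ∨ (a = x2 ∧ y = y1)) := by
      intro a; rw [G.adj_comm]; exact hGlr a y
    have hwsym : ∀ a : V1, w s(Sum.inr y, Sum.inl a) = w s(Sum.inl a, Sum.inr y) := by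
      intro a; rw [Sym2.eq_swap]
    by_cases h1 : y = y1
    · have h2 : y ≠ y2 := by rw [h1]; exact hy
      rw [if_pos h1, if_neg h2, add_zero]
      have hpt : ∀ a : V1,
          (if G.Adj (Sum.inr y) (Sum.inl a)
            then w s(Sum.inr y, Sum.inl a) * (D (Sum.inr y) - D (Sum.inl a)) else 0)
          = (if a = x1 then b1 * (D (Sum.inr y) - D (Sum.inl x1)) else 0)
            + (if a = x2 then r2 * (D (Sum.inr y) - D (Sum.inl x2)) else 0) := by
        intro a
        rw [hwsym a, if_congr (hcond a) rfl rfl]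
        by_cases ha1 : a = x1
        · simp [hcond, ha1, h1, hx, hy, Ne.symm hx, Ne.symm hy, hb1]
        · by_cases ha2 : a = x2
          · simp [hcond, ha1, ha2, h1, hx, hy, Ne.symm hx, Ne.symm hy, hr2]
          · simp [hcond, ha1, ha2]
      rw [Finset.sum_congr rfl (fun a _ => hpt a), Finset.sum_add_distrib,
        Finset.sum_ite_eq' Finset.univ x1, Finset.sum_ite_eq' Finset.univ x2]
      simp only [Finset.mem_univ, if_true]
      linear_combination -hd1
    · by_cases h2 : y = y2
      · rw [if_neg h1, if_pos h2, zero_add]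
        have hpt : ∀ a : V1,
            (if G.Adj (Sum.inr y) (Sum.inl a)
              then w s(Sum.inr y, Sum.inl a) * (D (Sum.inr y) - D (Sum.inl a)) else 0)
            = (if a = x1 then r1 * (D (Sum.inr y) - D (Sum.inl x1)) else 0)
              + (if a = x2 then b2 * (D (Sum.inr y) - D (Sum.inl x2)) else 0) := by
          intro a
          rw [hwsym a, if_congr (hcond a) rfl rfl]
          by_cases ha1 : a = x1
          · simp [hcond, ha1, h2, hx, hy, Ne.symm hx, Ne.symm hy, hr1]
          · by_cases ha2 : a = x2
            · simp [hcond, ha1, ha2, h2, hx, hy, Ne.symm hx, Ne.symm hy, hb2]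
            · simp [hcond, ha1, ha2]
        rw [Finset.sum_congr rfl (fun a _ => hpt a), Finset.sum_add_distrib,
          Finset.sum_ite_eq' Finset.univ x1, Finset.sum_ite_eq' Finset.univ x2]
        simp only [Finset.mem_univ, if_true]
        linear_combination -hd2
      · simp only [if_neg h1, if_neg h2, add_zero]
        apply Finset.sum_eq_zero
        intro a _
        rw [if_neg]
        rw [hcond]
        push_neg
        refine ⟨fun _ => h1, fun _ => h2, fun _ => h2, fun _ => h1⟩
  -- the reduced system on V2
  have hrow2 : ∀ y : V2,
      (∑ b : V2, (if G2.Adj y b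
          then w s(Sum.inr y, Sum.inr b) * (D (Sum.inr y) - D (Sum.inr b)) else 0))
      + ((if y = y1 then (b1 + r2) * (D (Sum.inr y) - d) else 0)
        + (if y = y2 then (r1 + b2) * (D (Sum.inr y) - d) else 0)) = 0 := by
    intro y
    have := hsplit y
    rw [hcross y] at this
    have hinner : (∑ b : V2, (if G.Adj (Sum.inr y) (Sum.inr b)
        then w s(Sum.inr y, Sum.inr b) * (D (Sum.inr y) - D (Sum.inr b)) else 0))
        = ∑ b : V2, (if G2.Adj y b
        then w s(Sum.inr y, Sum.inr b) * (D (Sum.inr y) - D (Sum.inr b)) else 0) :=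
      Finset.sum_congr rfl fun b _ => by rw [if_congr (hGrr y b) rfl rfl]
    rw [hinner] at this
    linarith [this]
  -- energy identity
  set A : ℝ := ∑ y : V2, (D (Sum.inr y) - d) *
      (∑ b : V2, (if G2.Adj y b
        then w s(Sum.inr y, Sum.inr b) * (D (Sum.inr y) - D (Sum.inr b)) else 0)) with hAdef
  have hEnergy : A + (b1 + r2) * (D (Sum.inr y1) - d) ^ 2
      + (r1 + b2) * (D (Sum.inr y2) - d) ^ 2 = 0 := by
    have h0 : ∑ y : V2, (D (Sum.inr y) - d) *
        ((∑ b : V2, (if G2.Adj y b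
          then w s(Sum.inr y, Sum.inr b) * (D (Sum.inr y) - D (Sum.inr b)) else 0))
        + ((if y = y1 then (b1 + r2) * (D (Sum.inr y) - d) else 0)
          + (if y = y2 then (r1 + b2) * (D (Sum.inr y) - d) else 0))) = 0 :=
      Finset.sum_eq_zero fun y _ => by rw [hrow2 y]; ring
    have hexp : ∀ y : V2, (D (Sum.inr y) - d) *
        ((∑ b : V2, (if G2.Adj y b
          then w s(Sum.inr y, Sum.inr b) * (D (Sum.inr y) - D (Sum.inr b)) else 0))
        + ((if y = y1 then (b1 + r2) * (D (Sum.inr y) - d) else 0)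
          + (if y = y2 then (r1 + b2) * (D (Sum.inr y) - d) else 0)))
        = (D (Sum.inr y) - d) *
          (∑ b : V2, (if G2.Adj y b
            then w s(Sum.inr y, Sum.inr b) * (D (Sum.inr y) - D (Sum.inr b)) else 0))
          + (if y = y1 then (b1 + r2) * (D (Sum.inr y) - d) ^ 2 else 0)
          + (if y = y2 then (r1 + b2) * (D (Sum.inr y) - d) ^ 2 else 0) := by
      intro y
      split_ifs <;> ring
    rw [Finset.sum_congr rfl (fun y _ => hexp y)] at h0
    rw [Finset.sum_add_distrib, Finset.sum_add_distrib,
      Finset.sum_ite_eq' Finset.univ y1, Finset.sum_ite_eq' Finset.univ y2] at h0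
    simp only [Finset.mem_univ, if_true] at h0
    rw [hAdef]
    linarith [h0]
  -- the symmetric Dirichlet sum
  set S : ℝ := ∑ y : V2, ∑ b : V2, (if G2.Adj y b
      then w s(Sum.inr y, Sum.inr b) * (D (Sum.inr y) - D (Sum.inr b)) ^ 2 else 0) with hSdef
  have hAsum : A = ∑ y : V2, ∑ b : V2, (if G2.Adj y b
      then w s(Sum.inr y, Sum.inr b) * (D (Sum.inr y) - d) * (D (Sum.inr y) - D (Sum.inr b))
      else 0) := by
    rw [hAdef]
    apply Finset.sum_congr rfl
    intro y _
    rw [Finset.mul_sum]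
    apply Finset.sum_congr rfl
    intro b _
    split_ifs <;> ring
  have hAsum' : A = ∑ y : V2, ∑ b : V2, (if G2.Adj y b
      then w s(Sum.inr y, Sum.inr b) * (D (Sum.inr b) - d) * (D (Sum.inr b) - D (Sum.inr y))
      else 0) := by
    rw [hAsum, Finset.sum_comm]
    apply Finset.sum_congr rfl
    intro y _
    apply Finset.sum_congr rfl
    intro b _
    rw [if_congr (G2.adj_comm b y) rfl rfl]
    rw [Sym2.eq_swap]
  have hSA : S = 2 * A := by
    have : A + A = S := by
      nth_rw 2 [hAsum']
      rw [hAsum]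
      rw [← Finset.sum_add_distrib]
      rw [hSdef]
      apply Finset.sum_congr rfl
      intro y _
      rw [← Finset.sum_add_distrib]
      apply Finset.sum_congr rfl
      intro b _
      split_ifs <;> ring
    linarith [this]
  have hSnonneg : ∀ y ∈ Finset.univ, ∀ b ∈ Finset.univ,
      (0:ℝ) ≤ (if G2.Adj y b
        then w s(Sum.inr y, Sum.inr b) * (D (Sum.inr y) - D (Sum.inr b)) ^ 2 else 0) := by
    intro y _ b _
    split_ifs with h
    · exact mul_nonneg (le_of_lt (hwpos _ _ ((hGrr y b).mpr h))) (sq_nonneg _)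
    · exact le_refl 0
  have hS0 : S = 0 := by
    have hle : S ≤ 0 := by
      rw [hSA]
      nlinarith [hEnergy, sq_nonneg (D (Sum.inr y1) - d), sq_nonneg (D (Sum.inr y2) - d),
        mul_nonneg (le_of_lt hbr) (sq_nonneg (D (Sum.inr y1) - d)),
        mul_nonneg (le_of_lt hrb) (sq_nonneg (D (Sum.inr y2) - d))]
    have hge : 0 ≤ S := by
      rw [hSdef]
      apply Finset.sum_nonneg
      intro y hy'
      apply Finset.sum_nonneg
      intro b hb'
      exact hSnonneg y hy' b hb'
    linarith
  -- extract the (m,n) term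
  have hterm : w s(Sum.inr m, Sum.inr n) * (D (Sum.inr m) - D (Sum.inr n)) ^ 2 = 0 := by
    have houter := (Finset.sum_eq_zero_iff_of_nonneg
      (fun y hy' => Finset.sum_nonneg fun b hb' => hSnonneg y hy' b hb')).mp (hSdef ▸ hS0)
    have hinner := (Finset.sum_eq_zero_iff_of_nonneg
      (fun b hb' => hSnonneg m (Finset.mem_univ m) b hb')).mp
        (houter m (Finset.mem_univ m))
    have := hinner n (Finset.mem_univ n)
    rwa [if_pos hmn] at this
  have hDeq : D (Sum.inr m) = D (Sum.inr n) := by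
    have hwpos' : 0 < w s(Sum.inr m, Sum.inr n) := hwpos _ _ ((hGrr m n).mpr hmn)
    have h2 : (D (Sum.inr m) - D (Sum.inr n)) ^ 2 = 0 := by
      rcases mul_eq_zero.mp hterm with h | h
      · exact absurd h (ne_of_gt hwpos')
      · exact h
    have := pow_eq_zero_iff (two_ne_zero) |>.mp h2
    linarith [sub_eq_zero.mp this]
  have hfin : Vp' (Sum.inr m) - Vp' (Sum.inr n) = Vp (Sum.inr m) - Vp (Sum.inr n) := by
    have := hDeq
    simp only [hDdef] at this
    linarith
  rw [hfin]
end

section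
/- Let G be a finite connected simple graph with positive edge weights, let r, s, m, n be vertices with {m,n} ∈ E(G), and suppose that the weighted spanning tree sums through edge {m,n} in the two directions balance: N*(r, m→n, s) = N*(r, n→m, s). Then for the failure of edge k = {r,s} (assuming k ∈ E(G) and G − k connected) under any balanced injection vector P, the flow on edge {m,n} is unchanged: F'_{mn} = F_{mn}, where F are the flows in G with injection P and F' the flows in G − k with the same injection P. -/
set_option linter.unusedSectionVars false
set_option linter.unusedVariables false
set_option maxHeartbeats 1000000


open scoped Classical

namespace BTS
open SimpleGraph Finset Walk
variable {V : Type*} [Fintype V] [DecidableEq V]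

lemma dart_fst_ne_end {H : SimpleGraph V} {x y : V} {p : H.Walk x y} (hp : p.IsPath) :
    ∀ d ∈ p.darts, d.fst ≠ y := by
  induction p with
  | nil => simp
  | cons h q ih =>
    rw [Walk.cons_isPath_iff] at hp
    intro d hd
    rcases List.mem_cons.mp hd with rfl | hd'
    · intro hcon
      exact hp.2 (hcon ▸ q.end_mem_support)
    · exact ih hp.1 d hd'

lemma dart_snd_ne_start {H : SimpleGraph V} {x y : V} {p : H.Walk x y} (hp : p.IsPath) :
    ∀ d ∈ p.darts, d.snd ≠ x := by
  cases p with
  | nil => simp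
  | @cons _ c _ h q =>
    rw [Walk.cons_isPath_iff] at hp
    intro d hd
    rcases List.mem_cons.mp hd with rfl | hd'
    · intro hcon
      exact hp.2 (hcon ▸ q.start_mem_support)
    · intro hcon
      exact hp.2 (hcon ▸ q.dart_snd_mem_support_of_mem_darts hd')

lemma dart_fst_inj {H : SimpleGraph V} {x y : V} {p : H.Walk x y} (hp : p.IsPath)
    {d d' : H.Dart} (hd : d ∈ p.darts) (hd' : d' ∈ p.darts) (h : d.fst = d'.fst) : d = d' := by
  induction p with
  | nil => simp at hd
  | cons hadj q ih =>
    rw [Walk.cons_isPath_iff] at hp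
    rcases List.mem_cons.mp hd with rfl | hq
    · rcases List.mem_cons.mp hd' with rfl | hq'
      · rfl
      · have hm := q.dart_fst_mem_support_of_mem_darts hq'
        rw [← h] at hm
        exact absurd hm hp.2
    · rcases List.mem_cons.mp hd' with rfl | hq'
      · have hm := q.dart_fst_mem_support_of_mem_darts hq
        rw [h] at hm
        exact absurd hm hp.2
      · exact ih hp.1 hq hq'

lemma dart_snd_inj {H : SimpleGraph V} {x y : V} {p : H.Walk x y} (hp : p.IsPath)
    {d d' : H.Dart} (hd : d ∈ p.darts) (hd' : d' ∈ p.darts) (h : d.snd = d'.snd) : d = d' := by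
  induction p with
  | nil => simp at hd
  | cons hadj q ih =>
    rw [Walk.cons_isPath_iff] at hp
    rcases List.mem_cons.mp hd with rfl | hq
    · rcases List.mem_cons.mp hd' with rfl | hq'
      · rfl
      · exact absurd (dart_snd_ne_start hp.1 d' hq' h.symm) (by simp)
    · rcases List.mem_cons.mp hd' with rfl | hq'
      · exact absurd (dart_snd_ne_start hp.1 d hq h) (by simp)
      · exact ih hp.1 hq hq'

lemma exists_dart_fst_start {H : SimpleGraph V} {x y : V} (p : H.Walk x y) (hxy : x ≠ y) :
    ∃ d ∈ p.darts, d.fst = x := by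
  cases p with
  | nil => exact absurd rfl hxy
  | cons h q => exact ⟨_, List.mem_cons_self, rfl⟩

lemma exists_dart_snd_end {H : SimpleGraph V} {x y : V} (p : H.Walk x y) (hxy : x ≠ y) :
    ∃ d ∈ p.darts, d.snd = y := by
  induction p with
  | nil => exact absurd rfl hxy
  | @cons a c z h q ih =>
    by_cases hcy : c = z
    · exact ⟨_, List.mem_cons_self, hcy⟩
    · obtain ⟨d, hd, hd2⟩ := ih hcy
      exact ⟨d, List.mem_cons_of_mem _ hd, hd2⟩

lemma exists_dart_fst_of_mem_support {H : SimpleGraph V} {x y u : V} (p : H.Walk x y)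
    (hu : u ∈ p.support) (huy : u ≠ y) : ∃ d ∈ p.darts, d.fst = u := by
  induction p with
  | nil => simp at hu; exact absurd hu huy
  | @cons a c z h q ih =>
    rw [Walk.support_cons, List.mem_cons] at hu
    rcases hu with rfl | hu
    · exact ⟨_, List.mem_cons_self, rfl⟩
    · obtain ⟨d, hd, hd2⟩ := ih hu huy
      exact ⟨d, List.mem_cons_of_mem _ hd, hd2⟩

lemma exists_dart_snd_of_mem_support {H : SimpleGraph V} {x y u : V} (p : H.Walk x y)
    (hu : u ∈ p.support) (hux : u ≠ x) : ∃ d ∈ p.darts, d.snd = u := by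
  induction p with
  | nil => simp at hu; exact absurd hu hux
  | @cons a c z h q ih =>
    rw [Walk.support_cons, List.mem_cons] at hu
    rcases hu with rfl | hu
    · exact absurd rfl hux
    · by_cases huc : u = c
      · exact ⟨_, List.mem_cons_self, huc.symm⟩
      · obtain ⟨d, hd, hd2⟩ := ih hu huc
        exact ⟨d, List.mem_cons_of_mem _ hd, hd2⟩

lemma isPath_append {H : SimpleGraph V} {u v x : V} {p : H.Walk u v} {q : H.Walk v x}
    (hp : p.IsPath) (hq : q.IsPath) (hsup : ∀ z ∈ p.support, z ∈ q.support → z = v) :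
    (p.append q).IsPath := by
  induction p with
  | nil => simpa using hq
  | @cons a c _ h p' ih =>
    rw [Walk.cons_isPath_iff] at hp
    rw [Walk.cons_append, Walk.cons_isPath_iff]
    refine ⟨ih hp.1 hq (fun z hz hz' => hsup z (by simp [hz]) hz'), ?_⟩
    rw [Walk.mem_support_append_iff]
    rintro (ha | ha)
    · exact hp.2 ha
    · have hav := hsup a (Walk.start_mem_support _) ha
      subst hav
      exact hp.2 (Walk.end_mem_support _)

lemma flowcount {K H : SimpleGraph V} (hKH : K ≤ H) {r s : V} (p : K.Walk r s)
    (hp : p.IsPath) (hrs : r ≠ s) (u : V) :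
    ∑ x ∈ Finset.univ.filter (fun x => H.Adj u x),
      ((if ∃ d ∈ p.darts, d.toProd = (u, x) then (1:ℝ) else 0)
        - (if ∃ d ∈ p.darts, d.toProd = (x, u) then (1:ℝ) else 0))
    = (if u = r then 1 else 0) - (if u = s then 1 else 0) := by
  have hout : ∑ x ∈ Finset.univ.filter (fun x => H.Adj u x),
      (if ∃ d ∈ p.darts, d.toProd = (u, x) then (1:ℝ) else 0)
      = if ∃ d ∈ p.darts, d.fst = u then 1 else 0 := by
    by_cases hex : ∃ d ∈ p.darts, d.fst = u
    · obtain ⟨d0, hd0, hfst⟩ := hex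
      have hiff : ∀ x, (∃ d ∈ p.darts, d.toProd = (u, x)) ↔ x = d0.snd := by
        intro x
        constructor
        · rintro ⟨d, hd, hdp⟩
          have h1 : d.fst = u := congrArg Prod.fst hdp
          have := dart_fst_inj hp hd hd0 (h1.trans hfst.symm)
          subst this
          exact (congrArg Prod.snd hdp).symm
        · rintro rfl
          exact ⟨d0, hd0, by rw [← hfst]⟩
      have hmem : d0.snd ∈ Finset.univ.filter (fun x => H.Adj u x) := by
        simp only [Finset.mem_filter, Finset.mem_univ, true_and]
        exact hKH (hfst ▸ d0.adj)
      rw [Finset.sum_congr rfl (fun x _ => by rw [if_congr (hiff x) rfl rfl])]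
      rw [Finset.sum_ite_eq' _ d0.snd (fun _ => (1:ℝ)), if_pos hmem]
      simp only [if_pos (⟨d0, hd0, hfst⟩ : ∃ d ∈ p.darts, d.fst = u)]
    · rw [if_neg hex]
      apply Finset.sum_eq_zero
      intro x _
      rw [if_neg]
      rintro ⟨d, hd, hdp⟩
      exact hex ⟨d, hd, congrArg Prod.fst hdp⟩
  have hin : ∑ x ∈ Finset.univ.filter (fun x => H.Adj u x),
      (if ∃ d ∈ p.darts, d.toProd = (x, u) then (1:ℝ) else 0)
      = if ∃ d ∈ p.darts, d.snd = u then 1 else 0 := by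
    by_cases hex : ∃ d ∈ p.darts, d.snd = u
    · obtain ⟨d0, hd0, hsnd⟩ := hex
      have hiff : ∀ x, (∃ d ∈ p.darts, d.toProd = (x, u)) ↔ x = d0.fst := by
        intro x
        constructor
        · rintro ⟨d, hd, hdp⟩
          have h1 : d.snd = u := congrArg Prod.snd hdp
          have := dart_snd_inj hp hd hd0 (h1.trans hsnd.symm)
          subst this
          exact (congrArg Prod.fst hdp).symm
        · rintro rfl
          exact ⟨d0, hd0, by rw [← hsnd]⟩
      have hmem : d0.fst ∈ Finset.univ.filter (fun x => H.Adj u x) := by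
        simp only [Finset.mem_filter, Finset.mem_univ, true_and]
        exact hKH (hsnd ▸ d0.adj).symm
      rw [Finset.sum_congr rfl (fun x _ => by rw [if_congr (hiff x) rfl rfl])]
      rw [Finset.sum_ite_eq' _ d0.fst (fun _ => (1:ℝ)), if_pos hmem]
      simp only [if_pos (⟨d0, hd0, hsnd⟩ : ∃ d ∈ p.darts, d.snd = u)]
    · rw [if_neg hex]
      apply Finset.sum_eq_zero
      intro x _
      rw [if_neg]
      rintro ⟨d, hd, hdp⟩
      exact hex ⟨d, hd, congrArg Prod.snd hdp⟩
  rw [Finset.sum_sub_distrib, hout, hin]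
  by_cases hur : u = r
  · subst hur
    have h0 : ¬∃ d ∈ p.darts, d.snd = u := by
      rintro ⟨d, hd, hsnd⟩
      exact dart_snd_ne_start hp d hd hsnd
    rw [if_pos (exists_dart_fst_start p hrs), if_pos rfl, if_neg hrs, if_neg h0]
  · by_cases hus : u = s
    · subst hus
      have h0 : ¬∃ d ∈ p.darts, d.fst = u := by
        rintro ⟨d, hd, hfst⟩
        exact dart_fst_ne_end hp d hd hfst
      rw [if_pos (exists_dart_snd_end p hrs), if_neg hur, if_pos rfl, if_neg h0]
    · rw [if_neg hur, if_neg hus]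
      have : (∃ d ∈ p.darts, d.fst = u) ↔ (∃ d ∈ p.darts, d.snd = u) := by
        constructor
        · rintro ⟨d, hd, rfl⟩
          exact exists_dart_snd_of_mem_support p (p.dart_fst_mem_support_of_mem_darts hd) hur
        · rintro ⟨d, hd, rfl⟩
          exact exists_dart_fst_of_mem_support p (p.dart_snd_mem_support_of_mem_darts hd) hus
      rw [if_congr this rfl rfl]
      ring

lemma reach_delete_or {H : SimpleGraph V} {a b u v : V} (p : H.Walk u v) :
    (H.deleteEdges {s(a,b)}).Reachable u v ∨
    (((H.deleteEdges {s(a,b)}).Reachable u a ∨ (H.deleteEdges {s(a,b)}).Reachable u b) ∧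
     ((H.deleteEdges {s(a,b)}).Reachable v a ∨ (H.deleteEdges {s(a,b)}).Reachable v b)) := by
  induction p with
  | nil => exact Or.inl (Reachable.refl _)
  | @cons x c z h q ih =>
    by_cases he : s(x, c) = s(a, b)
    · have hx : (H.deleteEdges {s(a,b)}).Reachable x a ∨ (H.deleteEdges {s(a,b)}).Reachable x b := by
        rw [Sym2.eq_iff] at he
        rcases he with ⟨rfl, rfl⟩ | ⟨rfl, rfl⟩
        · exact Or.inl (Reachable.refl _)
        · exact Or.inr (Reachable.refl _)
      have hc : (H.deleteEdges {s(a,b)}).Reachable c a ∨ (H.deleteEdges {s(a,b)}).Reachable c b := by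
        rw [Sym2.eq_iff] at he
        rcases he with ⟨rfl, rfl⟩ | ⟨rfl, rfl⟩
        · exact Or.inr (Reachable.refl _)
        · exact Or.inl (Reachable.refl _)
      refine Or.inr ⟨hx, ?_⟩
      rcases ih with hcv | ⟨_, hv⟩
      · rcases hc with h1 | h1
        · exact Or.inl (hcv.symm.trans h1)
        · exact Or.inr (hcv.symm.trans h1)
      · exact hv
    · have h' : (H.deleteEdges {s(a,b)}).Adj x c := by
        rw [SimpleGraph.deleteEdges_adj]
        exact ⟨h, by simpa using he⟩
      rcases ih with hcv | ⟨hcab, hv⟩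
      · exact Or.inl (h'.reachable.trans hcv)
      · refine Or.inr ⟨?_, hv⟩
        rcases hcab with h1 | h1
        · exact Or.inl (h'.reachable.trans h1)
        · exact Or.inr (h'.reachable.trans h1)

lemma prefix_reach {K : SimpleGraph V} {x y : V} {p : K.Walk x y} (hp : p.IsPath)
    {d : K.Dart} (hd : d ∈ p.darts) :
    (K.deleteEdges {s(d.fst, d.snd)}).Reachable x d.fst := by
  have ha : d.fst ∈ p.support := p.dart_fst_mem_support_of_mem_darts hd
  set q := p.takeUntil d.fst ha with hq
  have hqp : q.IsPath := hp.takeUntil ha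
  have hedges : ∀ e ∈ q.edges, e ∉ ({s(d.fst, d.snd)} : Set (Sym2 V)) := by
    intro e he hecon
    rw [Set.mem_singleton_iff] at hecon
    subst hecon
    obtain ⟨d', hd', hde0⟩ := List.mem_map.mp he
    have hde : s(d'.fst, d'.snd) = s(d.fst, d.snd) := hde0
    rw [Sym2.eq_iff] at hde
    rcases hde with ⟨h1, h2⟩ | ⟨h1, h2⟩
    · exact dart_fst_ne_end hqp d' hd' h1
    · -- d' is the reversed dart; then d and d' are distinct darts of p with the same edge
      have hd'p : d' ∈ p.darts := p.darts_takeUntil_subset ha hd'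
      have hdd : d' ≠ d := by
        intro hcon
        rw [hcon] at h1
        exact d.adj.ne h1
      have hnodup : p.edges.Nodup := hp.isTrail.edges_nodup
      have := List.inj_on_of_nodup_map (f := SimpleGraph.Dart.edge) hnodup hd'p hd
      apply hdd
      apply this
      show s(d'.fst, d'.snd) = s(d.fst, d.snd)
      rw [Sym2.eq_iff]
      exact Or.inr ⟨h1, h2⟩
    -- done
  exact ⟨q.toDeleteEdges _ hedges⟩

lemma exists_spanning_tree (H : SimpleGraph V) (h : H.Connected) :
    ∃ T, IsSpanningTreeOf H T := by
  generalize hn : H.edgeFinset.card = N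
  induction N using Nat.strong_induction_on generalizing H with
  | _ N ih =>
    by_cases ha : H.IsAcyclic
    · exact ⟨H, le_refl _, h, ha⟩
    · rw [SimpleGraph.IsAcyclic] at ha
      push_neg at ha
      obtain ⟨v, c, hc⟩ := ha
      obtain ⟨e, he⟩ : ∃ e, e ∈ c.edges := by
        cases c with
        | nil => exact absurd rfl hc.ne_nil
        | cons hadj q => exact ⟨_, List.mem_cons_self⟩
      induction e using Sym2.ind with
      | _ α β =>
        have hreach := (SimpleGraph.adj_and_reachable_delete_edges_iff_exists_cycle.mpr
          ⟨v, c, hc, he⟩)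
        have hadj : H.Adj α β := hreach.1
        have hconn : (H.deleteEdges {s(α, β)}).Connected := by
          rw [SimpleGraph.connected_iff]
          refine ⟨?_, h.nonempty⟩
          intro u1 u2
          obtain ⟨p⟩ := h.preconnected u1 u2
          have hab : (H.deleteEdges {s(α,β)}).Reachable α β := hreach.2
          rcases reach_delete_or (a := α) (b := β) p with hp | ⟨h1, h2⟩
          · exact hp
          · have e1 : (H.deleteEdges {s(α,β)}).Reachable u1 α := by
              rcases h1 with h1 | h1
              · exact h1
              · exact h1.trans hab.symm
            have e2 : (H.deleteEdges {s(α,β)}).Reachable u2 α := by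
              rcases h2 with h2 | h2
              · exact h2
              · exact h2.trans hab.symm
            exact e1.trans e2.symm
        have hcard : (H.deleteEdges {s(α,β)}).edgeFinset.card < N := by
          rw [← hn]
          apply Finset.card_lt_card
          rw [Finset.ssubset_iff_of_subset]
          · exact ⟨s(α,β), by rwa [SimpleGraph.mem_edgeFinset, SimpleGraph.mem_edgeSet], by
              simp [SimpleGraph.mem_edgeFinset, SimpleGraph.edgeSet_deleteEdges]⟩
          · intro e he'
            rw [SimpleGraph.mem_edgeFinset, SimpleGraph.edgeSet_deleteEdges] at he'
            rw [SimpleGraph.mem_edgeFinset]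
            exact he'.1
        obtain ⟨T, hT1, hT2⟩ := ih _ hcard _ hconn (by convert rfl)
        exact ⟨T, hT1.trans (SimpleGraph.deleteEdges_le _), hT2⟩

def IsForest2 (H F : SimpleGraph V) (r s : V) : Prop :=
  F ≤ H ∧ F.IsAcyclic ∧ ¬F.Reachable r s ∧ ∀ v, F.Reachable v r ∨ F.Reachable v s

lemma forest2_side {H F : SimpleGraph V} {r s : V} (hF : IsForest2 H F r s) (v : V) :
    F.Reachable v r ↔ ¬ F.Reachable v s := by
  constructor
  · intro h1 h2
    exact hF.2.2.1 (h1.symm.trans h2)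
  · intro h2
    rcases hF.2.2.2 v with h | h
    · exact h
    · exact absurd h h2

lemma forward {H T : SimpleGraph V} {r s a b : V} (hT : IsSpanningTreeOf H T)
    (htr : TraversesDir T r s a b) :
    T.Adj a b ∧ IsForest2 H (T.deleteEdges {s(a,b)}) r s ∧
      (T.deleteEdges {s(a,b)}).Reachable a r ∧ (T.deleteEdges {s(a,b)}).Reachable b s := by
  obtain ⟨p, hp, d, hd, hdp⟩ := htr
  have hfst : d.fst = a := congrArg Prod.fst hdp
  have hsnd : d.snd = b := congrArg Prod.snd hdp
  have hab : T.Adj a b := hfst ▸ hsnd ▸ d.adj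
  set F := T.deleteEdges {s(a,b)} with hF
  have hFT : F ≤ T := SimpleGraph.deleteEdges_le _
  have hFH : F ≤ H := hFT.trans hT.1
  have hacy : F.IsAcyclic := fun v c hc => hT.2.IsAcyclic (c.mapLe hFT) (hc.mapLe _)
  have hbridge : ¬ F.Reachable a b := by
    have hb := (SimpleGraph.isAcyclic_iff_forall_adj_isBridge.mp hT.2.IsAcyclic) hab
    exact SimpleGraph.isBridge_iff.mp hb
  have h1 : F.Reachable r a := by
    have h0 := prefix_reach hp hd
    rwa [hfst, hsnd] at h0
  have h2 : F.Reachable s b := by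
    have hd' : d.symm ∈ p.reverse.darts := by
      rw [Walk.mem_darts_reverse, SimpleGraph.Dart.symm_symm]
      exact hd
    have h0 := prefix_reach hp.reverse hd'
    have hsf : d.symm.fst = b := hsnd
    have hss : d.symm.snd = a := hfst
    rw [hsf, hss, show s(b, a) = s(a, b) from Sym2.eq_swap] at h0
    exact h0
  have hsides : ∀ v, F.Reachable v r ∨ F.Reachable v s := by
    intro v
    obtain ⟨q⟩ := hT.2.isConnected.preconnected v r
    rcases reach_delete_or (a := a) (b := b) q with hq | ⟨hv, _⟩
    · exact Or.inl hq
    · rcases hv with hv | hv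
      · exact Or.inl (hv.trans h1.symm)
      · exact Or.inr (hv.trans h2.symm)
  have hnrs : ¬ F.Reachable r s := fun hcon => hbridge ((h1.symm.trans hcon).trans h2)
  exact ⟨hab, ⟨hFH, hacy, hnrs, hsides⟩, h1.symm, h2.symm⟩

lemma backward {H F : SimpleGraph V} {r s a b : V} (hH : H.Adj a b)
    (hF : IsForest2 H F r s) (hra : F.Reachable a r) (hsb : F.Reachable b s) :
    IsSpanningTreeOf H (F ⊔ SimpleGraph.fromEdgeSet {s(a,b)}) ∧
      TraversesDir (F ⊔ SimpleGraph.fromEdgeSet {s(a,b)}) r s a b ∧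
      (F ⊔ SimpleGraph.fromEdgeSet {s(a,b)}).deleteEdges {s(a,b)} = F := by
  obtain ⟨hFH, hacy, hnrs, hsides⟩ := hF
  have hne : a ≠ b := hH.ne
  set T := F ⊔ SimpleGraph.fromEdgeSet {s(a,b)} with hT
  have hFnab : ¬ F.Adj a b := fun hcon => hnrs ((hra.symm.trans hcon.reachable).trans hsb)
  have hTab : T.Adj a b := by
    rw [hT, SimpleGraph.sup_adj]
    exact Or.inr (by rw [SimpleGraph.fromEdgeSet_adj]; exact ⟨Set.mem_singleton _, hne⟩)
  have hdel : T.deleteEdges {s(a,b)} = F := by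
    ext u v
    simp only [hT, SimpleGraph.deleteEdges_adj, SimpleGraph.sup_adj, SimpleGraph.fromEdgeSet_adj,
      Set.mem_singleton_iff]
    constructor
    · rintro ⟨h1 | ⟨h1, h2⟩, h3⟩
      · exact h1
      · exact absurd h1 h3
    · intro h1
      refine ⟨Or.inl h1, fun hcon => ?_⟩
      rw [Sym2.eq_iff] at hcon
      rcases hcon with ⟨rfl, rfl⟩ | ⟨rfl, rfl⟩
      · exact hFnab h1
      · exact hFnab h1.symm
  have hTH : T ≤ H := by
    rw [hT]
    refine sup_le hFH ?_
    intro u v huv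
    rw [SimpleGraph.fromEdgeSet_adj, Set.mem_singleton_iff, Sym2.eq_iff] at huv
    rcases huv.1 with ⟨rfl, rfl⟩ | ⟨rfl, rfl⟩
    · exact hH
    · exact hH.symm
  have hFT : F ≤ T := le_sup_left
  have hacyT : T.IsAcyclic := by
    intro v c hc
    by_cases he : s(a,b) ∈ c.edges
    · have h0 := (SimpleGraph.adj_and_reachable_delete_edges_iff_exists_cycle.mpr ⟨v, c, hc, he⟩).2
      have h1 : F.Reachable a b := by
        have hdel' : (T \ SimpleGraph.fromEdgeSet {s(a,b)}) = F := hdel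
        rwa [hdel] at h0
      exact hnrs ((hra.symm.trans h1).trans hsb)
    · have hedges : ∀ e ∈ c.edges, e ∉ ({s(a,b)} : Set (Sym2 V)) := by
        intro e he' hcon
        rw [Set.mem_singleton_iff] at hcon
        exact he (hcon ▸ he')
      have hce : ∀ e ∈ c.edges, e ∈ F.edgeSet := by
        intro e he'
        have h1 : e ∈ T.edgeSet := c.edges_subset_edgeSet he'
        have h2 : e ∈ (T.deleteEdges {s(a,b)}).edgeSet := by
          rw [SimpleGraph.edgeSet_deleteEdges]
          exact ⟨h1, hedges e he'⟩
        rwa [hdel] at h2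
      exact hacy _ (hc.transfer hce)
  have hreach : ∀ v, T.Reachable v r := by
    intro v
    have hsr : T.Reachable s r :=
      ((hsb.mono hFT).symm.trans hTab.symm.reachable).trans (hra.mono hFT)
    rcases hsides v with h | h
    · exact h.mono hFT
    · exact (h.mono hFT).trans hsr
  have hconn : T.Connected := by
    rw [SimpleGraph.connected_iff]
    exact ⟨fun u v => (hreach u).trans (hreach v).symm, ⟨a⟩⟩
  obtain ⟨q1⟩ := hra.symm
  obtain ⟨q2⟩ := hsb
  let p1 : F.Walk r a := (q1.toPath : F.Path r a)
  let p2 : F.Walk b s := (q2.toPath : F.Path b s)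
  have hp1 : p1.IsPath := q1.toPath.2
  have hp2 : p2.IsPath := q2.toPath.2
  have hsub1 : ∀ e ∈ p1.edges, e ∈ T.edgeSet :=
    fun e he => SimpleGraph.edgeSet_mono hFT (p1.edges_subset_edgeSet he)
  have hsub2 : ∀ e ∈ p2.edges, e ∈ T.edgeSet :=
    fun e he => SimpleGraph.edgeSet_mono hFT (p2.edges_subset_edgeSet he)
  let w1 : T.Walk r a := p1.transfer T hsub1
  let w2 : T.Walk b s := p2.transfer T hsub2
  have hw1p : w1.IsPath := hp1.transfer hsub1
  have hw2p : w2.IsPath := hp2.transfer hsub2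
  have hw1s : w1.support = p1.support := Walk.support_transfer _ _
  have hw2s : w2.support = p2.support := Walk.support_transfer _ _
  have hmem1 : ∀ z ∈ p1.support, F.Reachable r z := fun z hz => ⟨p1.takeUntil z hz⟩
  have hmem2 : ∀ z ∈ p2.support, F.Reachable z s := fun z hz => ⟨p2.dropUntil z hz⟩
  have hq : (Walk.cons hTab w2).IsPath := by
    rw [Walk.cons_isPath_iff]
    refine ⟨hw2p, fun hcon => ?_⟩
    rw [hw2s] at hcon
    exact hnrs (hra.symm.trans (hmem2 a hcon))
  have hWp : (w1.append (Walk.cons hTab w2)).IsPath := by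
    apply isPath_append hw1p hq
    intro z hz hz'
    rw [hw1s] at hz
    rw [Walk.support_cons, List.mem_cons, hw2s] at hz'
    rcases hz' with rfl | hz'
    · rfl
    · exact absurd ((hmem1 z hz).trans (hmem2 z hz')) hnrs
  refine ⟨⟨hTH, hconn, hacyT⟩, ⟨w1.append (Walk.cons hTab w2), hWp, ?_⟩, hdel⟩
  refine ⟨SimpleGraph.Dart.mk (a, b) hTab, ?_, rfl⟩
  rw [Walk.darts_append, Walk.darts_cons]
  exact List.mem_append.mpr (Or.inr (List.mem_cons_self))

lemma treeWeight_del {T : SimpleGraph V} {w : Sym2 V → ℝ} {a b : V} (hab : T.Adj a b) :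
    treeWeight w T = w s(a,b) * treeWeight w (T.deleteEdges {s(a,b)}) := by
  have hFin : (T.deleteEdges {s(a,b)}).edgeFinset = T.edgeFinset.erase s(a,b) := by
    ext e
    rw [SimpleGraph.mem_edgeFinset, SimpleGraph.edgeSet_deleteEdges, Finset.mem_erase,
      SimpleGraph.mem_edgeFinset]
    constructor
    · rintro ⟨h1, h2⟩
      exact ⟨by simpa using h2, h1⟩
    · rintro ⟨h1, h2⟩
      exact ⟨h2, by simpa using h1⟩
  rw [treeWeight, treeWeight]
  convert (Finset.mul_prod_erase T.edgeFinset w (by rwa [SimpleGraph.mem_edgeFinset, SimpleGraph.mem_edgeSet])).symm using 3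
  convert hFin

lemma sum_trees_eq (H : SimpleGraph V) (w : Sym2 V → ℝ) {r s a b : V} (hH : H.Adj a b) :
    stSumDir H w r a b s
      = w s(a,b) * ∑ F ∈ Finset.univ.filter
          (fun F => IsForest2 H F r s ∧ F.Reachable a r ∧ F.Reachable b s),
          treeWeight w F := by
  rw [stSumDir, Finset.mul_sum]
  refine Finset.sum_nbij' (fun T => T.deleteEdges {s(a,b)})
    (fun F => F ⊔ SimpleGraph.fromEdgeSet {s(a,b)}) ?_ ?_ ?_ ?_ ?_
  · intro T hT
    rw [Finset.mem_filter] at hT ⊢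
    obtain ⟨hab, hF2, h1, h2⟩ := forward hT.2.1 hT.2.2
    exact ⟨Finset.mem_univ _, hF2, h1, h2⟩
  · intro F hF
    rw [Finset.mem_filter] at hF ⊢
    obtain ⟨hst, htr, _⟩ := backward hH hF.2.1 hF.2.2.1 hF.2.2.2
    exact ⟨Finset.mem_univ _, hst, htr⟩
  · intro T hT
    rw [Finset.mem_filter] at hT
    have hab : T.Adj a b := (forward hT.2.1 hT.2.2).1
    ext u v
    simp only [SimpleGraph.sup_adj, SimpleGraph.deleteEdges_adj, SimpleGraph.fromEdgeSet_adj,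
      Set.mem_singleton_iff]
    constructor
    · rintro (⟨h1, _⟩ | ⟨h1, h2⟩)
      · exact h1
      · rw [Sym2.eq_iff] at h1
        rcases h1 with ⟨rfl, rfl⟩ | ⟨rfl, rfl⟩
        · exact hab
        · exact hab.symm
    · intro h1
      by_cases h2 : s(u,v) = s(a,b)
      · exact Or.inr ⟨h2, h1.ne⟩
      · exact Or.inl ⟨h1, by simpa using h2⟩
  · intro F hF
    rw [Finset.mem_filter] at hF
    exact (backward hH hF.2.1 hF.2.2.1 hF.2.2.2).2.2
  · intro T hT
    rw [Finset.mem_filter] at hT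
    exact treeWeight_del (forward hT.2.1 hT.2.2).1

lemma lap_apply (H : SimpleGraph V) (w : Sym2 V → ℝ) (x : V → ℝ) (u : V) :
    Matrix.mulVec (wLap H w) x u
      = ∑ v ∈ Finset.univ.filter (fun v => H.Adj u v), w s(u, v) * (x u - x v) := by
  have h0 : Matrix.mulVec (wLap H w) x u = ∑ v, (wLap H w) u v * x v := rfl
  have hsplit : ∀ v, (wLap H w) u v * x v =
      (if u = v then (∑ z ∈ Finset.univ.filter (fun z => H.Adj u z), w s(u,z)) * x u else 0)
      + (if H.Adj u v then -(w s(u,v)) * x v else 0) := by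
    intro v
    show (if u = v then _ else if H.Adj u v then -w s(u,v) else 0) * x v = _
    by_cases h1 : u = v
    · subst h1
      rw [if_pos rfl, if_pos rfl, if_neg (H.irrefl), add_zero]
    · rw [if_neg h1, if_neg h1, zero_add, ite_mul, zero_mul]
  rw [h0, Finset.sum_congr rfl (fun v _ => hsplit v), Finset.sum_add_distrib]
  rw [Finset.sum_ite_eq Finset.univ u (fun _ => (∑ z ∈ Finset.univ.filter (fun z => H.Adj u z), w s(u,z)) * x u), if_pos (Finset.mem_univ _)]
  rw [← Finset.sum_filter]
  have : ∀ v ∈ Finset.univ.filter (fun v => H.Adj u v), w s(u, v) * (x u - x v)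
      = w s(u,v) * x u + (-(w s(u,v)) * x v) := fun v _ => by ring
  rw [Finset.sum_congr rfl this, Finset.sum_add_distrib, ← Finset.sum_mul]

lemma lap_kernel {H : SimpleGraph V} {w : Sym2 V → ℝ} (hw : ∀ e ∈ H.edgeSet, 0 < w e)
    (hH : H.Connected) {x : V → ℝ} (hx : Matrix.mulVec (wLap H w) x = 0) (u v : V) :
    x u = x v := by
  have hadj : ∀ a b, H.Adj a b → x a = x b := by
    have hg : ∀ c d : V, (if H.Adj c d then w s(c,d) * x c * (x c - x d) else 0)
        + (if H.Adj d c then w s(d,c) * x d * (x d - x c) else 0)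
        = (if H.Adj c d then w s(c,d) * (x c - x d)^2 else 0) := by
      intro c d
      by_cases h : H.Adj c d
      · rw [if_pos h, if_pos h.symm, if_pos h, Sym2.eq_swap (a := d)]
        ring
      · rw [if_neg h, if_neg (fun hh => h hh.symm), if_neg h, add_zero]
    have hS1 : ∑ c, ∑ d, (if H.Adj c d then w s(c,d) * x c * (x c - x d) else 0) = 0 := by
      have hrow : ∀ c, ∑ d, (if H.Adj c d then w s(c,d) * x c * (x c - x d) else 0)
          = x c * Matrix.mulVec (wLap H w) x c := by
        intro c
        rw [lap_apply, Finset.mul_sum, ← Finset.sum_filter]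
        exact Finset.sum_congr rfl (fun d _ => by ring)
      rw [Finset.sum_congr rfl (fun c _ => hrow c)]
      rw [hx]
      simp
    have hS2 : ∑ c, ∑ d, (if H.Adj d c then w s(d,c) * x d * (x d - x c) else 0) = 0 := by
      rw [Finset.sum_comm]
      exact hS1
    have hsum0 : ∑ c, ∑ d, (if H.Adj c d then w s(c,d) * (x c - x d)^2 else 0) = 0 := by
      have hcd : ∀ c : V, (∑ d, (if H.Adj c d then w s(c,d) * (x c - x d)^2 else 0))
          = (∑ d, (if H.Adj c d then w s(c,d) * x c * (x c - x d) else 0))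
            + (∑ d, (if H.Adj d c then w s(d,c) * x d * (x d - x c) else 0)) := by
        intro c
        rw [← Finset.sum_add_distrib]
        exact (Finset.sum_congr rfl (fun d _ => (hg c d).symm))
      rw [Finset.sum_congr rfl (fun c _ => hcd c), Finset.sum_add_distrib, hS1, hS2, add_zero]
    have hnn : ∀ c d : V, 0 ≤ (if H.Adj c d then w s(c,d) * (x c - x d)^2 else 0) := by
      intro c d
      by_cases h : H.Adj c d
      · rw [if_pos h]
        exact mul_nonneg (le_of_lt (hw _ ((SimpleGraph.mem_edgeSet H).mpr h))) (sq_nonneg _)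
      · rw [if_neg h]
    have houter := (Finset.sum_eq_zero_iff_of_nonneg
      (fun c _ => Finset.sum_nonneg (fun d _ => hnn c d))).mp hsum0
    intro a b hab
    have hinner := (Finset.sum_eq_zero_iff_of_nonneg (fun d _ => hnn a d)).mp
      (houter a (Finset.mem_univ a))
    have hev := hinner b (Finset.mem_univ b)
    rw [if_pos hab] at hev
    have hwpos := hw _ ((SimpleGraph.mem_edgeSet H).mpr hab)
    have hsq : (x a - x b)^2 = 0 := by
      rcases mul_eq_zero.mp hev with h | h
      · exact absurd h (ne_of_gt hwpos)
      · exact h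
    have hz : x a - x b = 0 := by
      have := sq_eq_zero_iff.mp hsq
      linarith
    linarith
  obtain ⟨p⟩ := hH.preconnected u v
  clear hx
  induction p with
  | nil => rfl
  | cons h q ih => exact (hadj _ _ h).trans ih

lemma lap_delete (G : SimpleGraph V) (w : Sym2 V → ℝ) {r s : V} (hrs : G.Adj r s)
    (x : V → ℝ) (u : V) :
    Matrix.mulVec (wLap G w) x u - Matrix.mulVec (wLap (G.deleteEdges {s(r,s)}) w) x u
      = (w s(r,s) * (x r - x s)) * ((if u = r then 1 else 0) - (if u = s then 1 else 0)) := by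
  have hne : r ≠ s := hrs.ne
  rw [lap_apply, lap_apply]
  by_cases hur : u = r
  · subst hur
    have hA : Finset.univ.filter (fun v => (G.deleteEdges {s(u,s)}).Adj u v)
        = (Finset.univ.filter (fun v => G.Adj u v)).erase s := by
      ext v
      simp only [Finset.mem_filter, Finset.mem_univ, true_and, Finset.mem_erase,
        SimpleGraph.deleteEdges_adj, Set.mem_singleton_iff]
      constructor
      · rintro ⟨h1, h2⟩
        refine ⟨fun hcon => h2 (by rw [hcon]), h1⟩
      · rintro ⟨h1, h2⟩
        refine ⟨h2, fun hcon => ?_⟩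
        rw [Sym2.eq_iff] at hcon
        rcases hcon with ⟨-, rfl⟩ | ⟨rfl, rfl⟩
        · exact h1 rfl
        · exact h1 rfl
    rw [Finset.filter_congr_decidable _ (fun v => (G.deleteEdges {s(u,s)}).Adj u v)]
    rw [hA]
    have hmem : s ∈ Finset.univ.filter (fun v => G.Adj u v) := by
      simp only [Finset.mem_filter, Finset.mem_univ, true_and]; exact hrs
    rw [← Finset.add_sum_erase _ _ hmem, if_pos rfl, if_neg hne]
    ring
  · by_cases hus : u = s
    · subst hus
      have hA : Finset.univ.filter (fun v => (G.deleteEdges {s(r,u)}).Adj u v)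
          = (Finset.univ.filter (fun v => G.Adj u v)).erase r := by
        ext v
        simp only [Finset.mem_filter, Finset.mem_univ, true_and, Finset.mem_erase,
          SimpleGraph.deleteEdges_adj, Set.mem_singleton_iff]
        constructor
        · rintro ⟨h1, h2⟩
          refine ⟨fun hcon => h2 (by rw [hcon, Sym2.eq_swap]), h1⟩
        · rintro ⟨h1, h2⟩
          refine ⟨h2, fun hcon => ?_⟩
          rw [Sym2.eq_iff] at hcon
          rcases hcon with ⟨h3, h4⟩ | ⟨h3, h4⟩
          · exact hur h3
          · exact h1 h4
      rw [Finset.filter_congr_decidable _ (fun v => (G.deleteEdges {s(r,u)}).Adj u v)]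
      rw [hA]
      have hmem : r ∈ Finset.univ.filter (fun v => G.Adj u v) := by
        simp only [Finset.mem_filter, Finset.mem_univ, true_and]; exact hrs.symm
      rw [← Finset.add_sum_erase _ _ hmem, if_pos rfl, if_neg (Ne.symm hne)]
      rw [show s(u, r) = s(r, u) from Sym2.eq_swap]
      ring
    · have hA : Finset.univ.filter (fun v => (G.deleteEdges {s(r,s)}).Adj u v)
          = Finset.univ.filter (fun v => G.Adj u v) := by
        ext v
        simp only [Finset.mem_filter, Finset.mem_univ, true_and,
          SimpleGraph.deleteEdges_adj, Set.mem_singleton_iff]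
        constructor
        · exact fun h => h.1
        · intro h1
          refine ⟨h1, fun hcon => ?_⟩
          rw [Sym2.eq_iff] at hcon
          rcases hcon with ⟨rfl, -⟩ | ⟨rfl, -⟩
          · exact hur rfl
          · exact hus rfl
      rw [Finset.filter_congr_decidable _ (fun v => (G.deleteEdges {s(r,s)}).Adj u v)]
      rw [hA, if_neg hur, if_neg hus]
      ring

noncomputable def psi (H : SimpleGraph V) (w : Sym2 V → ℝ) (r s : V) (v : V) : ℝ :=
  ∑ F ∈ Finset.univ.filter (fun F => IsForest2 H F r s ∧ F.Reachable v r), treeWeight w F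

lemma psi_diff (H : SimpleGraph V) (w : Sym2 V → ℝ) {r s u x : V} (hux : H.Adj u x) :
    w s(u,x) * (psi H w r s u - psi H w r s x)
      = stSumDir H w r u x s - stSumDir H w r x u s := by
  have hpsi : ∀ v : V, psi H w r s v = ∑ F ∈ Finset.univ.filter (fun F => IsForest2 H F r s),
      (if F.Reachable v r then treeWeight w F else 0) := by
    intro v
    rw [psi, Finset.sum_filter, Finset.sum_filter]
    refine Finset.sum_congr rfl (fun F _ => ?_)
    by_cases h1 : IsForest2 H F r s <;> by_cases h2 : F.Reachable v r <;> simp [h1, h2]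
  have hconj : ∀ (c1 c2 : V → V → Prop), True := fun _ _ => trivial
  have hsum2 : ∀ (a b : V),
      ∑ F ∈ Finset.univ.filter
        (fun F => IsForest2 H F r s ∧ F.Reachable a r ∧ F.Reachable b s), treeWeight w F
      = ∑ F ∈ Finset.univ.filter (fun F => IsForest2 H F r s),
          (if F.Reachable a r ∧ F.Reachable b s then treeWeight w F else 0) := by
    intro a b
    rw [Finset.sum_filter, Finset.sum_filter]
    refine Finset.sum_congr rfl (fun F _ => ?_)
    by_cases h1 : IsForest2 H F r s <;>
      by_cases h2 : F.Reachable a r ∧ F.Reachable b s <;> simp [h1, h2]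
  have hdiff : psi H w r s u - psi H w r s x
      = (∑ F ∈ Finset.univ.filter
          (fun F => IsForest2 H F r s ∧ F.Reachable u r ∧ F.Reachable x s), treeWeight w F)
        - (∑ F ∈ Finset.univ.filter
          (fun F => IsForest2 H F r s ∧ F.Reachable x r ∧ F.Reachable u s), treeWeight w F) := by
    rw [hpsi u, hpsi x, hsum2 u x, hsum2 x u, ← Finset.sum_sub_distrib, ← Finset.sum_sub_distrib]
    refine Finset.sum_congr rfl (fun F hF => ?_)
    rw [Finset.mem_filter] at hF
    have hside := forest2_side hF.2
    by_cases h1 : F.Reachable u r <;> by_cases h2 : F.Reachable x r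
    · have hx2 : ¬ F.Reachable x s := (hside x).mp h2
      have hu2 : ¬ F.Reachable u s := (hside u).mp h1
      simp [h1, h2, hx2, hu2]
    · have hx2 : F.Reachable x s := by
        by_contra hcon
        exact h2 ((hside x).mpr hcon)
      simp [h1, h2, hx2]
    · have hu2 : F.Reachable u s := by
        by_contra hcon
        exact h1 ((hside u).mpr hcon)
      simp [h1, h2, hu2]
    · simp [h1, h2]
  rw [hdiff, mul_sub, sum_trees_eq H w hux, sum_trees_eq H w hux.symm,
    show s(x,u) = s(u,x) from Sym2.eq_swap]

lemma psi_lap (H : SimpleGraph V) (w : Sym2 V → ℝ) {r s : V} (hrs : r ≠ s) (u : V) :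
    Matrix.mulVec (wLap H w) (psi H w r s) u
      = (∑ T ∈ Finset.univ.filter (fun T => IsSpanningTreeOf H T), treeWeight w T)
        * ((if u = r then 1 else 0) - (if u = s then 1 else 0)) := by
  rw [lap_apply]
  have h2 : ∀ a b : V, stSumDir H w r a b s
      = ∑ T ∈ Finset.univ.filter (fun T => IsSpanningTreeOf H T),
          (if TraversesDir T r s a b then treeWeight w T else 0) := by
    intro a b
    rw [stSumDir, Finset.sum_filter, Finset.sum_filter]
    refine Finset.sum_congr rfl (fun T _ => ?_)
    by_cases h1 : IsSpanningTreeOf H T <;> by_cases h3 : TraversesDir T r s a b <;> simp [h1, h3]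
  have hstep : ∀ x ∈ Finset.univ.filter (fun x => H.Adj u x),
      w s(u,x) * (psi H w r s u - psi H w r s x)
      = ∑ T ∈ Finset.univ.filter (fun T => IsSpanningTreeOf H T),
          ((if TraversesDir T r s u x then treeWeight w T else 0)
            - (if TraversesDir T r s x u then treeWeight w T else 0)) := by
    intro x hx
    rw [Finset.mem_filter] at hx
    rw [psi_diff H w hx.2, h2, h2, ← Finset.sum_sub_distrib]
  rw [Finset.sum_congr rfl hstep, Finset.sum_comm, Finset.sum_mul]
  refine Finset.sum_congr rfl (fun T hT => ?_)
  rw [Finset.mem_filter] at hT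
  obtain ⟨p, hpu⟩ := hT.2.2.existsUnique_path r s
  have hp : p.IsPath := hpu.1
  have hun : ∀ q : T.Walk r s, q.IsPath → q = p := fun q hq => hpu.2 q hq
  have hiff : ∀ a b : V, TraversesDir T r s a b ↔ ∃ d ∈ p.darts, d.toProd = (a,b) := by
    intro a b
    constructor
    · rintro ⟨q, hq, d, hd, hdp⟩
      rw [hun q hq] at hd
      exact ⟨d, hd, hdp⟩
    · rintro ⟨d, hd, hdp⟩
      exact ⟨p, hp, d, hd, hdp⟩
  have hterm : ∀ x, ((if TraversesDir T r s u x then treeWeight w T else 0)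
      - (if TraversesDir T r s x u then treeWeight w T else 0))
      = treeWeight w T * ((if ∃ d ∈ p.darts, d.toProd = (u, x) then (1:ℝ) else 0)
          - (if ∃ d ∈ p.darts, d.toProd = (x, u) then (1:ℝ) else 0)) := by
    intro x
    rw [if_congr (hiff u x) rfl rfl, if_congr (hiff x u) rfl rfl]
    by_cases h1 : ∃ d ∈ p.darts, d.toProd = (u, x) <;>
      by_cases h3 : ∃ d ∈ p.darts, d.toProd = (x, u) <;> simp [h1, h3]
  rw [Finset.sum_congr rfl (fun x _ => hterm x), ← Finset.mul_sum,
    flowcount hT.2.1 p hp hrs u]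

lemma treeWeight_pos {H T : SimpleGraph V} {w : Sym2 V → ℝ} (hw : ∀ e ∈ H.edgeSet, 0 < w e)
    (hT : T ≤ H) : 0 < treeWeight w T := by
  rw [treeWeight]
  refine Finset.prod_pos (fun e he => ?_)
  exact hw e (SimpleGraph.edgeSet_mono hT (SimpleGraph.mem_edgeFinset.mp he))

lemma stSum_delete_eq (G : SimpleGraph V) (w : Sym2 V → ℝ) {r s a b : V} (hrs : G.Adj r s)
    (hne : s(a,b) ≠ s(r,s)) :
    stSumDir G w r a b s = stSumDir (G.deleteEdges {s(r,s)}) w r a b s := by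
  rw [stSumDir, stSumDir]
  refine Finset.sum_congr ?_ (fun _ _ => rfl)
  ext T
  simp only [Finset.mem_filter, Finset.mem_univ, true_and]
  constructor
  · rintro ⟨⟨hle, htree⟩, htrav⟩
    refine ⟨⟨?_, htree⟩, htrav⟩
    intro x y hxy
    rw [SimpleGraph.deleteEdges_adj]
    refine ⟨hle hxy, ?_⟩
    rw [Set.mem_singleton_iff]
    intro hcon
    have hTrs : T.Adj r s := by
      rw [Sym2.eq_iff] at hcon
      rcases hcon with ⟨h1, h2⟩ | ⟨h1, h2⟩
      · rw [h1, h2] at hxy; exact hxy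
      · rw [h1, h2] at hxy; exact hxy.symm
    obtain ⟨p, hp, d, hd, hdp⟩ := htrav
    obtain ⟨p0, hpu⟩ := htree.existsUnique_path r s
    have hp1 : (Walk.cons hTrs Walk.nil).IsPath := by simp [hrs.ne]
    have hpp : p = Walk.cons hTrs Walk.nil := (hpu.2 p hp).trans (hpu.2 _ hp1).symm
    rw [hpp] at hd
    simp only [Walk.darts_cons, Walk.darts_nil, List.mem_singleton] at hd
    rw [hd] at hdp
    have ha : a = r := (congrArg Prod.fst hdp).symm
    have hb : b = s := (congrArg Prod.snd hdp).symm
    exact hne (by rw [ha, hb])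
  · rintro ⟨⟨hle, htree⟩, htrav⟩
    exact ⟨⟨hle.trans (SimpleGraph.deleteEdges_le _), htree⟩, htrav⟩

lemma degenerate_case (G : SimpleGraph V) (w : Sym2 V → ℝ) (hw : ∀ e ∈ G.edgeSet, 0 < w e)
    {r s m n : V} (hrs : G.Adj r s) (hGk : (G.deleteEdges {s(r, s)}).Connected)
    (hdeg : s(m,n) = s(r,s))
    (hbal : stSumDir G w r m n s = stSumDir G w r n m s) : False := by
  have hne : r ≠ s := hrs.ne
  obtain ⟨T0, hT0⟩ := exists_spanning_tree _ hGk
  obtain ⟨p0⟩ := hT0.2.isConnected.preconnected r s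
  set p : T0.Walk r s := (p0.toPath : T0.Walk r s) with hpdef
  have hp : p.IsPath := p0.toPath.2
  obtain ⟨d, hd, hdf⟩ := exists_dart_fst_start p hne
  have htrav : TraversesDir T0 r s d.fst d.snd := ⟨p, hp, d, hd, rfl⟩
  obtain ⟨-, hF2, -, -⟩ := forward hT0 htrav
  have hFG : T0.deleteEdges {s(d.fst, d.snd)} ≤ G :=
    hF2.1.trans (SimpleGraph.deleteEdges_le _)
  have hF2' : IsForest2 G (T0.deleteEdges {s(d.fst, d.snd)}) r s :=
    ⟨hFG, hF2.2.1, hF2.2.2.1, hF2.2.2.2⟩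
  have hbwd := backward hrs hF2' (Reachable.refl r) (Reachable.refl s)
  have hpos : 0 < stSumDir G w r r s s := by
    rw [stSumDir]
    apply Finset.sum_pos'
    · intro T hT
      rw [Finset.mem_filter] at hT
      exact le_of_lt (treeWeight_pos hw hT.2.1.1)
    · refine ⟨_, ?_, treeWeight_pos hw hbwd.1.1⟩
      rw [Finset.mem_filter]
      exact ⟨Finset.mem_univ _, hbwd.1, hbwd.2.1⟩
  have hzero : stSumDir G w r s r s = 0 := by
    rw [stSumDir]
    apply Finset.sum_eq_zero
    intro T hT
    rw [Finset.mem_filter] at hT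
    exfalso
    obtain ⟨q, hq, d', hd', hdp'⟩ := hT.2.2
    exact dart_fst_ne_end hq d' hd' (congrArg Prod.fst hdp')
  rw [Sym2.eq_iff] at hdeg
  rcases hdeg with ⟨hm, hn⟩ | ⟨hm, hn⟩
  · rw [hm, hn, hzero] at hbal
    linarith
  · rw [hm, hn, hzero] at hbal
    linarith

end BTS

/-- **Balanced spanning-tree sums suppress flow changes.**  Let `G` be a
finite connected simple graph with positive edge weights, let `r, s, m, n` be
vertices with `{m,n} ∈ E(G)`, and suppose the weighted spanning-tree sums
through `{m,n}` in the two directions balance: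
`N*(r, m→n, s) = N*(r, n→m, s)`.  Then for the failure of the edge
`k = {r,s} ∈ E(G)` (with `G - k` connected) under any balanced injection `P`,
the flow on the edge `{m,n}` is unchanged: `F'_{mn} = F_{mn}`. -/
theorem balanced_tree_sums_no_flow_change
    {V : Type*} [Fintype V] [DecidableEq V] (G : SimpleGraph V)
    (w : Sym2 V → ℝ) (hw : ∀ e ∈ G.edgeSet, 0 < w e)
    (hG : G.Connected) (r s m n : V) (hmn : G.Adj m n) (hrs : G.Adj r s)
    (hGk : (G.deleteEdges {s(r, s)}).Connected)
    (hbal : stSumDir G w r m n s = stSumDir G w r n m s)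
    (P : V → ℝ) (hP : ∑ u, P u = 0)
    (Vp : V → ℝ) (hVp : Matrix.mulVec (wLap G w) Vp = P)
    (Vp' : V → ℝ) (hVp' : Matrix.mulVec (wLap (G.deleteEdges {s(r, s)}) w) Vp' = P) :
    w s(m, n) * (Vp' m - Vp' n) = w s(m, n) * (Vp m - Vp n) := by
  classical
  by_cases hdeg : s(m,n) = s(r,s)
  · exact (BTS.degenerate_case G w hw hrs hGk hdeg hbal).elim
  set H := G.deleteEdges {s(r,s)} with hHdef
  have hHle : H ≤ G := SimpleGraph.deleteEdges_le _
  have hw' : ∀ e ∈ H.edgeSet, 0 < w e := fun e he => hw e (SimpleGraph.edgeSet_mono hHle he)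
  have hmn' : H.Adj m n := by
    rw [hHdef, SimpleGraph.deleteEdges_adj]
    exact ⟨hmn, by simpa using hdeg⟩
  have hrsne : r ≠ s := hrs.ne
  have hκpos : 0 < ∑ T ∈ Finset.univ.filter (fun T => IsSpanningTreeOf H T), treeWeight w T := by
    obtain ⟨T0, hT0⟩ := BTS.exists_spanning_tree H hGk
    apply Finset.sum_pos'
    · intro T hT
      rw [Finset.mem_filter] at hT
      exact le_of_lt (BTS.treeWeight_pos hw' hT.2.1)
    · exact ⟨T0, by rw [Finset.mem_filter]; exact ⟨Finset.mem_univ _, hT0⟩,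
        BTS.treeWeight_pos hw' hT0.1⟩
  set κ : ℝ := ∑ T ∈ Finset.univ.filter (fun T => IsSpanningTreeOf H T), treeWeight w T with hκdef
  set I : ℝ := w s(r,s) * (Vp r - Vp s) with hIdef
  set ψ : V → ℝ := BTS.psi H w r s with hψdef
  have hU : ∀ u, Matrix.mulVec (wLap H w) (fun z => Vp' z - Vp z) u
      = I * ((if u = r then 1 else 0) - (if u = s then 1 else 0)) := by
    intro u
    have e1 : Matrix.mulVec (wLap H w) (fun z => Vp' z - Vp z) u
        = Matrix.mulVec (wLap H w) Vp' u - Matrix.mulVec (wLap H w) Vp u := by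
      rw [BTS.lap_apply, BTS.lap_apply, BTS.lap_apply, ← Finset.sum_sub_distrib]
      exact Finset.sum_congr rfl (fun v _ => by ring)
    have e2 := BTS.lap_delete G w hrs Vp u
    have e3 : Matrix.mulVec (wLap G w) Vp u = P u := congrFun hVp u
    have e4 : Matrix.mulVec (wLap H w) Vp' u = P u := congrFun hVp' u
    rw [e1, e4]
    rw [e3, ← hHdef, ← hIdef] at e2
    linarith [e2]
  have hψlap : ∀ u, Matrix.mulVec (wLap H w) ψ u
      = κ * ((if u = r then 1 else 0) - (if u = s then 1 else 0)) :=
    fun u => BTS.psi_lap H w hrsne u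
  have hZ0 : Matrix.mulVec (wLap H w) (fun z => κ * (Vp' z - Vp z) - I * ψ z) = 0 := by
    funext u
    rw [BTS.lap_apply]
    have expand : ∀ v,
        w s(u,v) * ((κ * (Vp' u - Vp u) - I * ψ u) - (κ * (Vp' v - Vp v) - I * ψ v))
        = κ * (w s(u,v) * ((Vp' u - Vp u) - (Vp' v - Vp v))) - I * (w s(u,v) * (ψ u - ψ v)) :=
      fun v => by ring
    rw [Finset.sum_congr rfl (fun v _ => expand v), Finset.sum_sub_distrib, ← Finset.mul_sum, ← Finset.mul_sum,
      ← BTS.lap_apply H w (fun z => Vp' z - Vp z) u, ← BTS.lap_apply H w ψ u, hU u, hψlap u]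
    simp only [Pi.zero_apply]
    ring
  have hZmn := BTS.lap_kernel hw' hGk hZ0 m n
  have hkey : κ * ((Vp' m - Vp m) - (Vp' n - Vp n)) = I * (ψ m - ψ n) := by
    linarith [hZmn]
  have hψmn : w s(m,n) * (ψ m - ψ n) = 0 := by
    have hdeg2 : s(n,m) ≠ s(r,s) := by
      rw [show s(n,m) = s(m,n) from Sym2.eq_swap]
      exact hdeg
    rw [hψdef, BTS.psi_diff H w (r := r) (s := s) hmn',
      ← BTS.stSum_delete_eq G w hrs hdeg, ← BTS.stSum_delete_eq G w hrs hdeg2, hbal, sub_self]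
  have hfinal : κ * (w s(m,n) * ((Vp' m - Vp m) - (Vp' n - Vp n))) = 0 := by
    calc κ * (w s(m,n) * ((Vp' m - Vp m) - (Vp' n - Vp n)))
        = w s(m,n) * (κ * ((Vp' m - Vp m) - (Vp' n - Vp n))) := by ring
      _ = w s(m,n) * (I * (ψ m - ψ n)) := by rw [hkey]
      _ = I * (w s(m,n) * (ψ m - ψ n)) := by ring
      _ = 0 := by rw [hψmn, mul_zero]
  have h0 : w s(m,n) * ((Vp' m - Vp m) - (Vp' n - Vp n)) = 0 := by
    rcases mul_eq_zero.mp hfinal with h | h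
    · exact absurd h (ne_of_gt hκpos)
    · exact h
  linear_combination h0
end
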